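/- arXiv:2305.03116 — 5 statements merged into one kernel-verified Lean document; each statement's English description precedes it below -/
import Mathlib

section
/- Let X be a nontrivial σ-finite ergodic system which consists of finitely many atoms. Then for every p ∈ (1, ∞) the best constant in the strong type (p,p) inequality for the one-sided ergodic maximal operator on X is strictly smaller than its counterpart on the integers: C⁻(X, p) < C⁻(X₁, p). -/
open MeasureTheory ENNReal Filter

noncomputable section

variable {X : Type*} [MeasurableSpace X]

/-- The one-sided ergodic maximal operator `M⁻f(x) = sup_N |(1/(N+1)) Σ_{n=0}^N f(Tⁿx)|`. -/
def maxOS (T : Equiv.Perm X) (f : X → ℝ) (x : X) : ℝ≥0∞ :=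
  ⨆ N : ℕ,
    (‖(∑ n ∈ Finset.range (N + 1), f ((T ^ n) x)) / ((N : ℝ) + 1)‖₊ : ℝ≥0∞)

/-- The centered ergodic maximal operator `M^c f(x) = sup_N |(1/(2N+1)) Σ_{n=-N}^N f(Tⁿx)|`. -/
def maxC (T : Equiv.Perm X) (f : X → ℝ) (x : X) : ℝ≥0∞ :=
  ⨆ N : ℕ,
    (‖(∑ n ∈ Finset.Icc (-(N : ℤ)) (N : ℤ), f ((T ^ n) x)) / (2 * (N : ℝ) + 1)‖₊ : ℝ≥0∞)

/-- The uncentered ergodic maximal operator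
`M^u f(x) = sup_{r,s ≥ 0} |(1/(r+s+1)) Σ_{n=-r}^{s} f(Tⁿx)|`. -/
def maxU (T : Equiv.Perm X) (f : X → ℝ) (x : X) : ℝ≥0∞ :=
  ⨆ r : ℕ, ⨆ s : ℕ,
    (‖(∑ n ∈ Finset.Icc (-(r : ℤ)) (s : ℤ), f ((T ^ n) x)) / ((r : ℝ) + (s : ℝ) + 1)‖₊ : ℝ≥0∞)

/-- The best constant in the weak type (1,1) inequality for a maximal operator `M`:
the smallest `C` with `λ · μ({x : M f(x) ≥ λ}) ≤ C ‖f‖₁` for all `f ∈ L¹(μ)` and all `λ`. -/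
def weakConst (μ : Measure X) (M : (X → ℝ) → X → ℝ≥0∞) : ℝ≥0∞ :=
  sInf {C | ∀ f : X → ℝ, Integrable f μ →
    ∀ l : ℝ≥0∞, l * μ {x | l ≤ M f x} ≤ C * eLpNorm f 1 μ}

/-- The best constant in the strong type (p,p) inequality for a maximal operator `M`:
the smallest `C` with `‖M f‖_p ≤ C ‖f‖_p` for all `f ∈ L^p(μ)`. -/
def strongConst (μ : Measure X) (M : (X → ℝ) → X → ℝ≥0∞) (p : ℝ) : ℝ≥0∞ :=
  sInf {C | ∀ f : X → ℝ, MemLp f (ENNReal.ofReal p) μ →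
    (∫⁻ x, M f x ^ p ∂μ) ^ (1 / p) ≤ C * eLpNorm f (ENNReal.ofReal p) μ}

/-- The best constant in the `L^∞` inequality for a maximal operator `M`. -/
def supConst (μ : Measure X) (M : (X → ℝ) → X → ℝ≥0∞) : ℝ≥0∞ :=
  sInf {C | ∀ f : X → ℝ, MemLp f ∞ μ → essSup (M f) μ ≤ C * eLpNorm f ∞ μ}

/-- The best constant `C_M(X, p)` for `p ∈ [1,∞]`: the weak type (1,1) constant for `p = 1`,
the `L^∞` constant for `p = ∞`, and the strong type (p,p) constant for `p ∈ (1,∞)`. -/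
def bestConst (μ : Measure X) (M : (X → ℝ) → X → ℝ≥0∞) (p : ℝ≥0∞) : ℝ≥0∞ :=
  if p = 1 then weakConst μ M
  else if p = ∞ then supConst μ M
  else strongConst μ M p.toReal

/-- The shift `l ↦ l + 1` on `ℤ`, the transformation of the canonical system `X₁`. -/
def shiftZ : Equiv.Perm ℤ := Equiv.addRight 1

/-- Ergodicity of an invertible transformation:
`T⁻¹(E) = E` implies `μ(E) = 0` or `μ(X \ E) = 0`. -/
def IsErgodicPerm (μ : Measure X) (T : Equiv.Perm X) : Prop :=
  ∀ E : Set X, MeasurableSet E → (⇑T) ⁻¹' E = E → μ E = 0 ∨ μ Eᶜ = 0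

/-- Nontriviality of a measure space: there is a set of strictly positive finite measure. -/
def NontrivialSpace (μ : Measure X) : Prop :=
  ∃ E : Set X, MeasurableSet E ∧ 0 < μ E ∧ μ E < ∞

/-- `X` consists of finitely many atoms: it splits into disjoint measurable sets
`X₀, X₁, …, X_L` with `μ(X₀) = 0`, `T(X_l) ⊆ X_{l+1}` for `1 ≤ l ≤ L-1`, `T(X_L) ⊆ X₁`, and
no `X_l`, `1 ≤ l ≤ L`, splits into two disjoint measurable sets of nonzero measure. -/
def FinitelyManyAtoms (μ : Measure X) (T : Equiv.Perm X) : Prop :=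
  ∃ (L : ℕ) (A : ℕ → Set X), 0 < L ∧
    (∀ l, l ≤ L → MeasurableSet (A l)) ∧
    (∀ l l', l ≤ L → l' ≤ L → l ≠ l' → Disjoint (A l) (A l')) ∧
    (⋃ l ≤ L, A l) = Set.univ ∧
    μ (A 0) = 0 ∧
    (∀ l, 1 ≤ l → l ≤ L - 1 → ⇑T '' A l ⊆ A (l + 1)) ∧
    (⇑T '' A L ⊆ A 1) ∧
    (∀ l, 1 ≤ l → l ≤ L → ∀ S : Set X, MeasurableSet S → S ⊆ A l →
      μ S = 0 ∨ μ (A l \ S) = 0)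

/-- The Rokhlin condition (case (B) of the Kakutani–Rokhlin lemma): for each `L ∈ ℕ` there is
a set `E_L` of strictly positive finite measure with `T^{-l}(E_L)`, `l ∈ [L]`, disjoint. -/
def RokhlinCondition (μ : Measure X) (T : Equiv.Perm X) : Prop :=
  ∀ L : ℕ, 0 < L → ∃ E : Set X, MeasurableSet E ∧ 0 < μ E ∧ μ E < ∞ ∧
    ∀ l l' : ℕ, 1 ≤ l → l ≤ L → 1 ≤ l' → l' ≤ L → l ≠ l' →
      Disjoint ((⇑(T ^ l)) ⁻¹' E) ((⇑(T ^ l')) ⁻¹' E)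


namespace OSAux

open Finset

lemma shiftZ_pow_apply (n : ℕ) : ∀ x : ℤ, ((shiftZ ^ n) : Equiv.Perm ℤ) x = x + n := by
  induction n with
  | zero => intro x; simp
  | succ n ih =>
    intro x
    rw [pow_succ, Equiv.Perm.mul_apply, show shiftZ x = x + 1 from rfl, ih (x + 1)]
    push_cast; ring

lemma maxOS_shiftZ (f : ℤ → ℝ) (x : ℤ) :
    maxOS shiftZ f x
      = ⨆ N : ℕ, (‖(∑ n ∈ Finset.range (N + 1), f (x + n)) / ((N : ℝ) + 1)‖₊ : ℝ≥0∞) := by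
  unfold maxOS
  refine iSup_congr fun N => ?_
  have h : ∑ n ∈ Finset.range (N + 1), f ((shiftZ ^ n) x)
      = ∑ n ∈ Finset.range (N + 1), f (x + n) :=
    Finset.sum_congr rfl fun n _ => by rw [shiftZ_pow_apply]
  rw [h]

lemma sum_range_add' {M : Type*} [AddCommMonoid M] (v : ℕ → M) (a b : ℕ) :
    ∑ n ∈ range (a + b), v n = (∑ n ∈ range a, v n) + ∑ n ∈ range b, v (a + n) := by
  rw [Finset.range_add]
  rw [Finset.sum_union (by
    rw [Finset.disjoint_left]
    intro x hx hx'
    simp only [Finset.mem_range, Finset.mem_map, addLeftEmbedding_apply] at hx hx'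
    omega)]
  rw [Finset.sum_map]
  simp [addLeftEmbedding_apply]

lemma block_sum {M : Type*} [AddCommMonoid M] (L : ℕ) (v : ℕ → M)
    (hv : ∀ n, v (L + n) = v n) (k : ℕ) :
    ∑ n ∈ range (k * L), v n = k • ∑ n ∈ range L, v n := by
  induction k with
  | zero => simp
  | succ k ih =>
    have h : (k + 1) * L = L + k * L := by ring
    rw [h, sum_range_add']
    simp only [hv]
    rw [ih, succ_nsmul]
    abel

def posL (L : ℕ) (j : ℤ) : ℕ := (j % (L : ℤ)).toNat + 1

def wOf (L : ℕ) (c : ℕ → ℝ) : ℤ → ℝ := fun j => c (posL L j)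

lemma posL_bounds {L : ℕ} (hL : 0 < L) (j : ℤ) : 1 ≤ posL L j ∧ posL L j ≤ L := by
  have h1 : 0 ≤ j % (L : ℤ) := Int.emod_nonneg j (by exact_mod_cast hL.ne')
  have h2 : j % (L : ℤ) < L := Int.emod_lt_of_pos j (by exact_mod_cast hL)
  unfold posL; omega

lemma posL_add_one {L : ℕ} (hL : 0 < L) (j : ℤ) :
    posL L (j + 1) = if posL L j = L then 1 else posL L j + 1 := by
  have hLz : (L : ℤ) ≠ 0 := by exact_mod_cast hL.ne'
  have h1 : 0 ≤ j % (L : ℤ) := Int.emod_nonneg j hLz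
  have h2 : j % (L : ℤ) < L := Int.emod_lt_of_pos j (by exact_mod_cast hL)
  have key : (j + 1) % (L : ℤ) = (j % L + 1) % L := by
    conv_lhs => rw [← Int.mul_ediv_add_emod j L]
    rw [show (L : ℤ) * (j / L) + j % L + 1 = j % L + 1 + (L : ℤ) * (j / L) by ring]
    rw [Int.add_mul_emod_self_left]
  by_cases hcase : j % (L : ℤ) = L - 1
  · have : (j + 1) % (L : ℤ) = 0 := by
      rw [key, hcase]; simp
    unfold posL
    rw [this, hcase]
    have hc : ((L : ℤ) - 1).toNat + 1 = L := by omega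
    rw [if_pos hc]
    simp
  · have h3 : j % (L : ℤ) + 1 < L := by omega
    have : (j + 1) % (L : ℤ) = j % L + 1 := by
      rw [key, Int.emod_eq_of_lt (by omega) h3]
    unfold posL
    rw [this]
    have hne : ¬((j % (L:ℤ)).toNat + 1 = L) := by omega
    rw [if_neg hne]
    omega

lemma posL_natCast {L : ℕ} (_hL : 0 < L) {i : ℕ} (hi : i < L) : posL L (i : ℤ) = i + 1 := by
  unfold posL
  rw [Int.emod_eq_of_lt (by positivity) (by exact_mod_cast hi)]
  simp

lemma posL_period {L : ℕ} (_hL : 0 < L) (j : ℤ) : posL L (j + L) = posL L j := by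
  unfold posL
  congr 2
  conv_lhs => rw [show j + (L : ℤ) = j + (L : ℤ) * 1 by ring, Int.add_mul_emod_self_left]

lemma posL_sub_one {L : ℕ} (_hL : 0 < L) {l : ℕ} (h1 : 1 ≤ l) (h2 : l ≤ L) :
    posL L ((l : ℤ) - 1) = l := by
  unfold posL
  rw [Int.emod_eq_of_lt (by omega) (by omega)]
  omega

lemma wOf_period {L : ℕ} (hL : 0 < L) (c : ℕ → ℝ) (j : ℤ) :
    wOf L c (j + L) = wOf L c j := by
  unfold wOf; rw [posL_period hL]

lemma wOf_natCast {L : ℕ} (hL : 0 < L) (c : ℕ → ℝ) {i : ℕ} (hi : i < L) :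
    wOf L c (i : ℤ) = c (i + 1) := by
  unfold wOf; rw [posL_natCast hL hi]


section Windows

variable {L : ℕ}

lemma sum_window_add (w : ℤ → ℝ) (x : ℤ) (a b : ℕ) :
    ∑ n ∈ range (a + b), w (x + n)
      = (∑ n ∈ range a, w (x + n)) + ∑ n ∈ range b, w (x + a + n) := by
  rw [sum_range_add' (fun n => w (x + n)) a b]
  congr 1
  refine Finset.sum_congr rfl fun n _ => ?_
  congr 1; push_cast; ring

lemma sum_window_split (w : ℤ → ℝ) (hw : ∀ j, w (j + L) = w j) (x : ℤ) (m : ℕ) :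
    ∑ n ∈ range (L + m), w (x + n)
      = (∑ n ∈ range L, w (x + n)) + ∑ n ∈ range m, w (x + n) := by
  rw [sum_window_add]
  congr 1
  refine Finset.sum_congr rfl fun n _ => ?_
  have h : x + L + n = (x + n) + L := by ring
  rw [h, hw]

lemma abs_window_le (hL : 0 < L) (w : ℤ → ℝ) (hw : ∀ j, w (j + L) = w j) (x : ℤ) (m : ℝ)
    (hm : ∀ t : ℕ, 1 ≤ t → t ≤ L → |∑ n ∈ range t, w (x + n)| ≤ t * m) :
    ∀ j : ℕ, |∑ n ∈ range j, w (x + n)| ≤ j * m := by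
  intro j
  induction j using Nat.strong_induction_on with
  | _ j ih =>
    rcases Nat.lt_or_ge j 1 with h | h
    · interval_cases j; simp
    rcases le_or_gt j L with h2 | h2
    · exact hm j h h2
    · have hj : j = L + (j - L) := by omega
      rw [hj, sum_window_split w hw]
      have i1 : |∑ n ∈ range L, w (x + n)| ≤ (L : ℝ) * m := by
        simpa using hm L hL le_rfl
      have i2 : |∑ n ∈ range (j - L), w (x + n)| ≤ ((j - L : ℕ) : ℝ) * m :=
        ih (j - L) (by omega)
      refine (abs_add_le _ _).trans ?_
      have he : ((L + (j - L) : ℕ) : ℝ) * m = (L : ℝ) * m + ((j - L : ℕ) : ℝ) * m := by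
        push_cast; ring
      rw [he]
      exact add_le_add i1 i2

lemma ennnorm_le_of_abs_le {u v : ℝ} (h : |u| ≤ |v|) : (‖u‖₊ : ℝ≥0∞) ≤ (‖v‖₊ : ℝ≥0∞) := by
  rw [ENNReal.coe_le_coe, ← NNReal.coe_le_coe, coe_nnnorm, coe_nnnorm,
    Real.norm_eq_abs, Real.norm_eq_abs]
  exact h

lemma maxOS_le_of_window (hL : 0 < L) (w f : ℤ → ℝ) (hw : ∀ j, w (j + L) = w j) (x : ℤ)
    (hx : ∀ t : ℕ, 1 ≤ t → t ≤ L → ∑ n ∈ range t, f (x + n) = ∑ n ∈ range t, w (x + n)) :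
    maxOS shiftZ w x ≤ maxOS shiftZ f x := by
  rw [maxOS_shiftZ, maxOS_shiftZ]
  obtain ⟨t₀, ht₀mem, ht₀⟩ := Finset.exists_max_image (Finset.Icc 1 L)
      (fun t : ℕ => |∑ n ∈ range t, w (x + n)| / t) ⟨1, by simp [Nat.one_le_iff_ne_zero.mpr hL.ne']⟩
  simp only [Finset.mem_Icc] at ht₀mem
  have ht₀pos : (0 : ℝ) < t₀ := by exact_mod_cast ht₀mem.1
  have hall : ∀ j : ℕ, |∑ n ∈ range j, w (x + n)|
      ≤ j * (|∑ n ∈ range t₀, w (x + n)| / (t₀ : ℝ)) := by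
    apply abs_window_le hL w hw
    intro t h1 h2
    have hle := ht₀ t (Finset.mem_Icc.mpr ⟨h1, h2⟩)
    have htpos : (0 : ℝ) < t := by exact_mod_cast h1
    have := (div_le_iff₀ htpos).mp hle
    linarith [this]
  apply iSup_le; intro N
  have key : (‖(∑ n ∈ range (N + 1), w (x + n)) / ((N : ℝ) + 1)‖₊ : ℝ≥0∞)
      ≤ (‖(∑ n ∈ range ((t₀ - 1) + 1), f (x + n)) / (((t₀ - 1 : ℕ) : ℝ) + 1)‖₊ : ℝ≥0∞) := by
    apply ennnorm_le_of_abs_le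
    have e1 : ((t₀ - 1 : ℕ) : ℝ) + 1 = (t₀ : ℝ) := by
      have h := ht₀mem.1; push_cast [Nat.cast_sub h]; ring
    have e2 : (t₀ - 1) + 1 = t₀ := by omega
    rw [e2, e1, hx t₀ ht₀mem.1 ht₀mem.2, abs_div, abs_div,
      abs_of_pos (show (0 : ℝ) < (N : ℝ) + 1 by positivity), abs_of_pos ht₀pos,
      div_le_div_iff₀ (by positivity) ht₀pos]
    have h := hall (N + 1)
    have hc : ((N + 1 : ℕ) : ℝ) = (N : ℝ) + 1 := by push_cast; ring
    rw [hc] at h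
    calc |∑ n ∈ range (N + 1), w (x + n)| * t₀
        ≤ (((N : ℝ) + 1) * (|∑ n ∈ range t₀, w (x + n)| / (t₀ : ℝ))) * t₀ := by
          apply mul_le_mul_of_nonneg_right h (le_of_lt ht₀pos)
      _ = |∑ n ∈ range t₀, w (x + n)| * ((N : ℝ) + 1) := by
          field_simp
  exact key.trans (le_iSup (fun N => (‖(∑ n ∈ range (N + 1), f (x + n)) / ((N : ℝ) + 1)‖₊ : ℝ≥0∞)) (t₀ - 1))

lemma maxOS_period (w : ℤ → ℝ) (hw : ∀ j, w (j + L) = w j) (x : ℤ) :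
    maxOS shiftZ w (x + L) = maxOS shiftZ w x := by
  rw [maxOS_shiftZ, maxOS_shiftZ]
  refine iSup_congr fun N => ?_
  congr 1
  have h : ∑ n ∈ range (N + 1), w (x + L + n) = ∑ n ∈ range (N + 1), w (x + n) :=
    Finset.sum_congr rfl fun n _ => by
      rw [show x + L + n = (x + n) + L by ring, hw]
  rw [h]

lemma maxOS_wOf_le_max (hL : 0 < L) {c : ℕ → ℝ} (Q : ℝ)
    (hQ : ∀ l, 1 ≤ l → l ≤ L → |c l| ≤ Q) (x : ℤ) :
    maxOS shiftZ (wOf L c) x ≤ ENNReal.ofReal Q := by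
  rw [maxOS_shiftZ]
  apply iSup_le; intro N
  have habs : |(∑ n ∈ range (N + 1), wOf L c (x + n)) / ((N : ℝ) + 1)| ≤ Q := by
    rw [abs_div, abs_of_pos (show (0 : ℝ) < (N : ℝ) + 1 by positivity),
      div_le_iff₀ (by positivity)]
    calc |∑ n ∈ range (N + 1), wOf L c (x + n)|
        ≤ ∑ n ∈ range (N + 1), |wOf L c (x + n)| := Finset.abs_sum_le_sum_abs _ _
      _ ≤ ∑ _n ∈ range (N + 1), Q := by
          refine Finset.sum_le_sum fun n _ => ?_
          exact hQ (posL L (x + n)) (posL_bounds hL _).1 (posL_bounds hL _).2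
      _ = Q * ((N : ℝ) + 1) := by
          rw [Finset.sum_const, Finset.card_range]; push_cast; ring
  rw [← enorm_eq_nnnorm, Real.enorm_eq_ofReal_abs]
  exact ENNReal.ofReal_le_ofReal habs

end Windows


section Cyclic

variable {L : ℕ} {p : ℝ}

def PhiL (L : ℕ) (p : ℝ) (c : ℕ → ℝ) : ℝ≥0∞ :=
  ∑ i ∈ range L, (maxOS shiftZ (wOf L c) (i : ℤ)) ^ p

def NnL (L : ℕ) (p : ℝ) (c : ℕ → ℝ) : ℝ≥0∞ :=
  ∑ i ∈ range L, (‖c (i + 1)‖₊ : ℝ≥0∞) ^ p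

lemma NnL_ne_top (hp : 0 ≤ p) (c : ℕ → ℝ) : NnL L p c ≠ ∞ := by
  refine (ENNReal.sum_lt_top.mpr fun i _ => ?_).ne
  exact ENNReal.rpow_lt_top_of_nonneg hp ENNReal.coe_ne_top

lemma wOf_zero_of_NnL_zero (hL : 0 < L) (hp : 0 < p) {c : ℕ → ℝ}
    (h : NnL L p c = 0) : ∀ j, wOf L c j = 0 := by
  intro j
  have hz : ∀ i ∈ range L, (‖c (i + 1)‖₊ : ℝ≥0∞) ^ p = 0 :=
    (Finset.sum_eq_zero_iff.mp h)
  have hcz : ∀ l, 1 ≤ l → l ≤ L → c l = 0 := by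
    intro l h1 h2
    have := hz (l - 1) (by simp [Finset.mem_range]; omega)
    rw [show l - 1 + 1 = l by omega] at this
    rcases (ENNReal.rpow_eq_zero_iff.mp this) with ⟨h', _⟩ | ⟨h', _⟩
    · have : ‖c l‖₊ = 0 := by exact_mod_cast h'
      simpa using this
    · exact absurd h' ENNReal.coe_ne_top
  exact hcz (posL L j) (posL_bounds hL j).1 (posL_bounds hL j).2

lemma PhiL_zero (hL : 0 < L) (hp : 0 < p) {c : ℕ → ℝ}
    (h : NnL L p c = 0) : PhiL L p c = 0 := by
  have hw := wOf_zero_of_NnL_zero hL hp h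
  refine Finset.sum_eq_zero fun i _ => ?_
  have : maxOS shiftZ (wOf L c) (i : ℤ) = 0 := by
    rw [maxOS_shiftZ]
    simp [hw]
  rw [this]
  exact ENNReal.zero_rpow_of_pos hp

lemma PhiL_abs_le (hp : 0 ≤ p) (c : ℕ → ℝ) :
    PhiL L p c ≤ PhiL L p (fun l => |c l|) := by
  refine Finset.sum_le_sum fun i _ => ?_
  refine ENNReal.rpow_le_rpow ?_ hp
  rw [maxOS_shiftZ, maxOS_shiftZ]
  refine iSup_mono fun N => ?_
  apply ennnorm_le_of_abs_le
  rw [abs_div, abs_div]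
  have h1 : |∑ n ∈ range (N + 1), wOf L c ((i : ℤ) + n)|
      ≤ |∑ n ∈ range (N + 1), wOf L (fun l => |c l|) ((i : ℤ) + n)| := by
    have e : ∑ n ∈ range (N + 1), wOf L (fun l => |c l|) ((i : ℤ) + n)
        = ∑ n ∈ range (N + 1), |wOf L c ((i : ℤ) + n)| :=
      Finset.sum_congr rfl fun n _ => rfl
    calc |∑ n ∈ range (N + 1), wOf L c ((i : ℤ) + n)|
        ≤ ∑ n ∈ range (N + 1), |wOf L c ((i : ℤ) + n)| := Finset.abs_sum_le_sum_abs _ _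
      _ ≤ |∑ n ∈ range (N + 1), wOf L (fun l => |c l|) ((i : ℤ) + n)| := by
          rw [e]; exact le_abs_self _
  gcongr

lemma NnL_abs (c : ℕ → ℝ) : NnL L p (fun l => |c l|) = NnL L p c := by
  refine Finset.sum_congr rfl fun i _ => ?_
  simp

lemma PhiL_le_L_mul (hL : 0 < L) (hp : 0 ≤ p) (c : ℕ → ℝ) :
    PhiL L p c ≤ (L : ℝ≥0∞) * NnL L p c := by
  obtain ⟨i₀, hi₀mem, hi₀⟩ := Finset.exists_max_image (range L) (fun i => |c (i + 1)|)
    ⟨0, by simp [Finset.mem_range, hL]⟩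
  have hbound : ∀ i ∈ range L, (maxOS shiftZ (wOf L c) (i : ℤ)) ^ p
      ≤ (‖c (i₀ + 1)‖₊ : ℝ≥0∞) ^ p := by
    intro i _
    refine ENNReal.rpow_le_rpow ?_ hp
    have h1 : maxOS shiftZ (wOf L c) (i : ℤ) ≤ ENNReal.ofReal |c (i₀ + 1)| := by
      refine maxOS_wOf_le_max hL _ ?_ _
      intro l h1 h2
      have := hi₀ (l - 1) (by simp [Finset.mem_range]; omega)
      rwa [show l - 1 + 1 = l by omega] at this
    rwa [← Real.enorm_eq_ofReal_abs] at h1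
  calc PhiL L p c ≤ ∑ _i ∈ range L, (‖c (i₀ + 1)‖₊ : ℝ≥0∞) ^ p :=
        Finset.sum_le_sum hbound
    _ = (L : ℝ≥0∞) * (‖c (i₀ + 1)‖₊ : ℝ≥0∞) ^ p := by
        rw [Finset.sum_const, Finset.card_range, nsmul_eq_mul]
    _ ≤ (L : ℝ≥0∞) * NnL L p c := by
        refine mul_le_mul_right ?_ _
        exact Finset.single_le_sum (f := fun i => (‖c (i + 1)‖₊ : ℝ≥0∞) ^ p)
          (fun i _ => zero_le) hi₀mem

end Cyclic


lemma stepB (L : ℕ) (hL : 0 < L) (p : ℝ) (hp : 1 < p) (C : ℝ≥0∞)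
    (hC : ∀ f : ℤ → ℝ, MemLp f (ENNReal.ofReal p) (Measure.count : Measure ℤ) →
      (∫⁻ x, maxOS shiftZ f x ^ p ∂(Measure.count : Measure ℤ)) ^ (1 / p)
        ≤ C * eLpNorm f (ENNReal.ofReal p) (Measure.count : Measure ℤ))
    (c : ℕ → ℝ) :
    PhiL L p c / NnL L p c + (ENNReal.ofReal (1 / (2 * (L : ℝ)))) ^ p / 2 ≤ C ^ p := by
  have hp0 : (0 : ℝ) < p := lt_trans one_pos hp
  have hpne : p ≠ 0 := hp0.ne'
  set δ : ℝ≥0∞ := (ENNReal.ofReal (1 / (2 * (L : ℝ)))) ^ p with hδdef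
  have hδ0 : δ ≠ 0 := by
    have hpos : (0 : ℝ) < 1 / (2 * (L : ℝ)) := by positivity
    exact (ENNReal.rpow_pos (ENNReal.ofReal_pos.mpr hpos) ENNReal.ofReal_ne_top).ne'
  have hδt : δ ≠ ⊤ := ENNReal.rpow_ne_top_of_nonneg hp0.le ENNReal.ofReal_ne_top
  have hhalf0 : δ / 2 ≠ 0 := by
    simp only [ne_eq, ENNReal.div_eq_zero_iff, hδ0, false_or]
    exact ENNReal.ofNat_ne_top
  have hhalft : δ / 2 ≠ ⊤ := (ENNReal.div_lt_top hδt two_ne_zero).ne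
  obtain ⟨n, hn⟩ := ENNReal.exists_nat_gt
    (show (L : ℝ≥0∞) / (δ / 2) ≠ ⊤ from (ENNReal.div_lt_top (by simp) hhalf0).ne)
  set k := n + 1 with hkdef
  have hkδ : (L : ℝ≥0∞) ≤ (k : ℝ≥0∞) * (δ / 2) := by
    have h1 : (L : ℝ≥0∞) < n * (δ / 2) :=
      (ENNReal.div_lt_iff (Or.inl hhalf0) (Or.inl hhalft)).mp hn
    refine h1.le.trans (mul_le_mul_left ?_ _)
    exact_mod_cast Nat.cast_le.mpr (Nat.le_succ n)
  have hk0 : (k : ℝ≥0∞) ≠ 0 := Nat.cast_ne_zero.mpr (by omega)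
  -- core inequality for nonnegative data
  have core : ∀ d : ℕ → ℝ, (∀ l, 0 ≤ d l) →
      PhiL L p d + δ / 2 * NnL L p d ≤ C ^ p * NnL L p d := by
    intro d hd
    set w : ℤ → ℝ := wOf L d with hwdef
    have hwper : ∀ j : ℤ, w (j + L) = w j := wOf_period hL d
    set kL := k * L with hkL
    set f : ℤ → ℝ := fun x => if 0 ≤ x ∧ x < (kL : ℤ) then w x else 0 with hfdef
    have hf_on : ∀ x : ℤ, 0 ≤ x → x < (kL : ℤ) → f x = w x := by
      intro x h1 h2; simp only [hfdef]; rw [if_pos ⟨h1, h2⟩]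
    have hf_off : ∀ x : ℤ, ¬(0 ≤ x ∧ x < (kL : ℤ)) → f x = 0 := by
      intro x h; simp only [hfdef]; rw [if_neg h]
    have hsum_norm : ∑' x : ℤ, (‖f x‖₊ : ℝ≥0∞) ^ p = (k : ℝ≥0∞) * NnL L p d := by
      rw [tsum_eq_sum (s := (range kL).image (Nat.cast : ℕ → ℤ)) ?_]
      · rw [Finset.sum_image (by intro a _ b _ h; exact_mod_cast h)]
        have hcong : ∀ m ∈ range kL, (‖f (m : ℤ)‖₊ : ℝ≥0∞) ^ p = (‖w (m : ℤ)‖₊ : ℝ≥0∞) ^ p := by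
          intro m hm
          rw [hf_on _ (by positivity) (by exact_mod_cast Finset.mem_range.mp hm)]
        rw [Finset.sum_congr rfl hcong, hkL,
          block_sum L (fun m : ℕ => (‖w (m : ℤ)‖₊ : ℝ≥0∞) ^ p) (fun m => by
            show (‖w ((L + m : ℕ) : ℤ)‖₊ : ℝ≥0∞) ^ p = (‖w (m : ℤ)‖₊ : ℝ≥0∞) ^ p
            rw [show ((L + m : ℕ) : ℤ) = (m : ℤ) + L by push_cast; ring, hwper]) k,
          nsmul_eq_mul]
        congr 1
        refine Finset.sum_congr rfl fun i hi => ?_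
        rw [hwdef, wOf_natCast hL d (Finset.mem_range.mp hi)]
      · intro x hx
        have hz : f x = 0 := hf_off x (by
          rintro ⟨h1, h2⟩
          apply hx
          simp only [Finset.mem_image, Finset.mem_range]
          exact ⟨x.toNat, by omega, by omega⟩)
        rw [hz]
        simp only [nnnorm_zero, ENNReal.coe_zero]
        exact ENNReal.zero_rpow_of_pos hp0
    have hOR0 : (ENNReal.ofReal p) ≠ 0 := by
      simp only [ne_eq, ENNReal.ofReal_eq_zero, not_le]; linarith
    have hORt : (ENNReal.ofReal p) ≠ ⊤ := ENNReal.ofReal_ne_top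
    have hkN_ne_top : (k : ℝ≥0∞) * NnL L p d ≠ ⊤ :=
      ENNReal.mul_ne_top (ENNReal.natCast_ne_top k) (NnL_ne_top hp0.le d)
    have help : eLpNorm f (ENNReal.ofReal p) (Measure.count : Measure ℤ)
        = ((k : ℝ≥0∞) * NnL L p d) ^ (1 / p) := by
      rw [eLpNorm_eq_lintegral_rpow_enorm_toReal hOR0 hORt, ENNReal.toReal_ofReal hp0.le,
        lintegral_count]
      simp only [enorm_eq_nnnorm]
      rw [hsum_norm]
    have hmem : MemLp f (ENNReal.ofReal p) (Measure.count : Measure ℤ) :=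
      ⟨(measurable_of_countable f).aestronglyMeasurable, by
        rw [help]; exact ENNReal.rpow_lt_top_of_nonneg (by positivity) hkN_ne_top⟩
    have hCf := hC f hmem
    rw [help, lintegral_count] at hCf
    have hCP : ∑' x : ℤ, maxOS shiftZ f x ^ p ≤ C ^ p * ((k : ℝ≥0∞) * NnL L p d) := by
      have h := ENNReal.rpow_le_rpow hCf hp0.le
      rw [← ENNReal.rpow_mul, ENNReal.mul_rpow_of_nonneg _ _ hp0.le, ← ENNReal.rpow_mul,
        show 1 / p * p = 1 by field_simp, ENNReal.rpow_one, ENNReal.rpow_one] at h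
      exact h
    set P₀ := ∑ i ∈ range L, d (i + 1) with hP₀def
    have hP₀nn : 0 ≤ P₀ := Finset.sum_nonneg fun i _ => hd _
    set s1 : Finset ℤ := (range (n * L)).image (Nat.cast : ℕ → ℤ) with hs1
    set s2 : Finset ℤ := (range kL).image (fun m : ℕ => -(m : ℤ) - 1) with hs2
    have hdisj : Disjoint s1 s2 := by
      rw [Finset.disjoint_left]
      intro x hx1 hx2
      simp only [hs1, hs2, Finset.mem_image, Finset.mem_range] at hx1 hx2
      obtain ⟨a, _, ha⟩ := hx1; obtain ⟨b, _, hb⟩ := hx2; omega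
    have hlow : (n : ℝ≥0∞) * PhiL L p d + (k : ℝ≥0∞) * (δ * NnL L p d)
        ≤ ∑' x : ℤ, maxOS shiftZ f x ^ p := by
      refine le_trans ?_ (ENNReal.sum_le_tsum (s1 ∪ s2))
      rw [Finset.sum_union hdisj]
      refine add_le_add ?_ ?_
      · -- positive part
        rw [hs1, Finset.sum_image (by intro a _ b _ h; exact_mod_cast h)]
        have hblock : ∑ j ∈ range (n * L), (maxOS shiftZ w (j : ℤ)) ^ p
            = (n : ℝ≥0∞) * PhiL L p d := by
          rw [block_sum L (fun j : ℕ => (maxOS shiftZ w (j : ℤ)) ^ p) (fun j => by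
            show (maxOS shiftZ w ((L + j : ℕ) : ℤ)) ^ p = (maxOS shiftZ w (j : ℤ)) ^ p
            rw [show ((L + j : ℕ) : ℤ) = (j : ℤ) + L by push_cast; ring,
              maxOS_period w hwper]) n, nsmul_eq_mul]
          rfl
        rw [← hblock]
        refine Finset.sum_le_sum fun j hj => ?_
        refine ENNReal.rpow_le_rpow ?_ hp0.le
        refine maxOS_le_of_window hL w f hwper _ ?_
        intro t h1 h2
        refine Finset.sum_congr rfl fun nn hnn => ?_
        have hnn' := Finset.mem_range.mp hnn
        have hj' := Finset.mem_range.mp hj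
        refine hf_on _ (by positivity) ?_
        have hnat : j + nn < k * L := by
          have hkk : k * L = n * L + L := by rw [hkdef]; ring
          omega
        rw [hkL]
        exact_mod_cast hnat
      · -- negative part
        rw [hs2, Finset.sum_image (by intro a _ b _ h; have h' : -(a : ℤ) - 1 = -(b : ℤ) - 1 := h; omega)]
        have hgeq : (ENNReal.ofReal (P₀ * (1 / (2 * (L : ℝ))))) ^ p
            = (ENNReal.ofReal P₀) ^ p * δ := by
          rw [ENNReal.ofReal_mul hP₀nn, ENNReal.mul_rpow_of_nonneg _ _ hp0.le, hδdef]
        have hneg : ∀ m ∈ range kL,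
            (ENNReal.ofReal (P₀ * (1 / (2 * (L : ℝ))))) ^ p
              ≤ (maxOS shiftZ f (-(m : ℤ) - 1)) ^ p := by
          intro m hm
          have hm' := Finset.mem_range.mp hm
          refine ENNReal.rpow_le_rpow ?_ hp0.le
          rw [maxOS_shiftZ]
          refine le_trans ?_ (le_iSup _ (m + kL))
          have hsum : ∑ nn ∈ range ((m + kL) + 1), f (-(m : ℤ) - 1 + nn) = (k : ℝ) * P₀ := by
            have hsplit : (m + kL) + 1 = (m + 1) + kL := by omega
            rw [hsplit, sum_window_add f (-(m : ℤ) - 1) (m + 1) kL]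
            have hz : ∑ nn ∈ range (m + 1), f (-(m : ℤ) - 1 + nn) = 0 :=
              Finset.sum_eq_zero fun nn hnn => hf_off _ (by
                rintro ⟨h1, _⟩
                have := Finset.mem_range.mp hnn
                omega)
            have h2 : ∑ nn ∈ range kL, f (-(m : ℤ) - 1 + (m + 1 : ℕ) + nn)
                = ∑ nn ∈ range kL, w (nn : ℤ) := by
              refine Finset.sum_congr rfl fun nn hnn => ?_
              have hnn' := Finset.mem_range.mp hnn
              have he : (-(m : ℤ) - 1 + ((m + 1 : ℕ) : ℤ) + nn) = (nn : ℤ) := by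
                push_cast; ring
              rw [he]
              exact hf_on _ (by positivity) (by exact_mod_cast hnn')
            rw [hz, h2, zero_add,
              block_sum L (fun nn : ℕ => w (nn : ℤ)) (fun nn => by
                show w ((L + nn : ℕ) : ℤ) = w (nn : ℤ)
                rw [show ((L + nn : ℕ) : ℤ) = (nn : ℤ) + L by push_cast; ring, hwper]) k,
              nsmul_eq_mul]
            congr 1
            rw [hP₀def]
            exact Finset.sum_congr rfl fun i hi => by
              rw [hwdef, wOf_natCast hL d (Finset.mem_range.mp hi)]
          have hreal : P₀ * (1 / (2 * (L : ℝ)))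
              ≤ (∑ nn ∈ range ((m + kL) + 1), f (-(m : ℤ) - 1 + nn))
                / (((m + kL : ℕ) : ℝ) + 1) := by
            rw [hsum]
            have hden : (0 : ℝ) < ((m + kL : ℕ) : ℝ) + 1 := by positivity
            rw [le_div_iff₀ hden]
            have hnat : m + kL + 1 ≤ 2 * (k * L) := by
              rw [hkL] at hm' ⊢
              omega
            have hb : ((m + kL : ℕ) : ℝ) + 1 ≤ (k : ℝ) * (2 * (L : ℝ)) := by
              have h2 : ((m + kL + 1 : ℕ) : ℝ) ≤ ((2 * (k * L) : ℕ) : ℝ) := by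
                exact_mod_cast hnat
              push_cast at h2 ⊢
              linarith
            calc P₀ * (1 / (2 * (L : ℝ))) * (((m + kL : ℕ) : ℝ) + 1)
                ≤ P₀ * (1 / (2 * (L : ℝ))) * ((k : ℝ) * (2 * (L : ℝ))) := by
                  refine mul_le_mul_of_nonneg_left hb (by positivity)
              _ = (k : ℝ) * P₀ := by
                  have hLpos : (0 : ℝ) < (L : ℝ) := by exact_mod_cast hL
                  field_simp
          exact le_trans (ENNReal.ofReal_le_ofReal hreal) (by rw [← enorm_eq_nnnorm]; exact Real.ofReal_le_enorm _)
        have hNle : NnL L p d ≤ (L : ℝ≥0∞) * (ENNReal.ofReal P₀) ^ p := by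
          have hterm : ∀ i ∈ range L, (‖d (i + 1)‖₊ : ℝ≥0∞) ^ p ≤ (ENNReal.ofReal P₀) ^ p := by
            intro i hi
            refine ENNReal.rpow_le_rpow ?_ hp0.le
            rw [← enorm_eq_nnnorm, Real.enorm_eq_ofReal_abs, abs_of_nonneg (hd _)]
            exact ENNReal.ofReal_le_ofReal
              (Finset.single_le_sum (f := fun i => d (i + 1)) (fun i _ => hd _) hi)
          calc NnL L p d ≤ ∑ _i ∈ range L, (ENNReal.ofReal P₀) ^ p :=
                Finset.sum_le_sum hterm
            _ = (L : ℝ≥0∞) * (ENNReal.ofReal P₀) ^ p := by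
                rw [Finset.sum_const, Finset.card_range, nsmul_eq_mul]
        calc (k : ℝ≥0∞) * (δ * NnL L p d)
            ≤ (k : ℝ≥0∞) * (δ * ((L : ℝ≥0∞) * (ENNReal.ofReal P₀) ^ p)) := by
              exact mul_le_mul_right (mul_le_mul_right hNle δ) _
          _ = ((kL : ℕ) : ℝ≥0∞) * ((ENNReal.ofReal P₀) ^ p * δ) := by
              rw [hkL]; push_cast; ring
          _ = ((kL : ℕ) : ℝ≥0∞) * (ENNReal.ofReal (P₀ * (1 / (2 * (L : ℝ))))) ^ p := by
              rw [hgeq]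
          _ = ∑ _m ∈ range kL, (ENNReal.ofReal (P₀ * (1 / (2 * (L : ℝ))))) ^ p := by
              rw [Finset.sum_const, Finset.card_range, nsmul_eq_mul]
          _ ≤ ∑ m ∈ range kL, (maxOS shiftZ f (-(m : ℤ) - 1)) ^ p :=
              Finset.sum_le_sum hneg
    -- combine
    have hΦ : PhiL L p d ≤ (k : ℝ≥0∞) * (δ / 2) * NnL L p d := by
      refine (PhiL_le_L_mul hL hp0.le d).trans ?_
      exact mul_le_mul_left hkδ _
    have hhalves : (k : ℝ≥0∞) * (δ / 2) * NnL L p d + (k : ℝ≥0∞) * (δ / 2) * NnL L p d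
        = (k : ℝ≥0∞) * (δ * NnL L p d) := by
      have hh := ENNReal.add_halves δ
      calc (k : ℝ≥0∞) * (δ / 2) * NnL L p d + (k : ℝ≥0∞) * (δ / 2) * NnL L p d
          = (k : ℝ≥0∞) * ((δ / 2 + δ / 2) * NnL L p d) := by ring
        _ = (k : ℝ≥0∞) * (δ * NnL L p d) := by rw [hh]
    have hfinal : (k : ℝ≥0∞) * (PhiL L p d + δ / 2 * NnL L p d)
        ≤ (k : ℝ≥0∞) * (C ^ p * NnL L p d) := by
      calc (k : ℝ≥0∞) * (PhiL L p d + δ / 2 * NnL L p d)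
          = (n : ℝ≥0∞) * PhiL L p d + PhiL L p d + (k : ℝ≥0∞) * (δ / 2) * NnL L p d := by
            rw [hkdef]; push_cast; ring
        _ ≤ (n : ℝ≥0∞) * PhiL L p d + (k : ℝ≥0∞) * (δ / 2) * NnL L p d
              + (k : ℝ≥0∞) * (δ / 2) * NnL L p d := by
            exact add_le_add_left (add_le_add_right hΦ _) _
        _ = (n : ℝ≥0∞) * PhiL L p d + (k : ℝ≥0∞) * (δ * NnL L p d) := by
            rw [add_assoc, hhalves]
        _ ≤ ∑' x : ℤ, maxOS shiftZ f x ^ p := hlow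
        _ ≤ C ^ p * ((k : ℝ≥0∞) * NnL L p d) := hCP
        _ = (k : ℝ≥0∞) * (C ^ p * NnL L p d) := by ring
    exact (ENNReal.mul_le_mul_iff_right hk0 (ENNReal.natCast_ne_top k)).mp hfinal
  -- conclude for general c
  by_cases hNc : NnL L p c = 0
  · have hΦc : PhiL L p c = 0 := PhiL_zero hL hp0 hNc
    rw [hNc, hΦc, ENNReal.zero_div, zero_add]
    have hone := core (fun _ => (1 : ℝ)) (fun _ => zero_le_one)
    have hN1 : NnL L p (fun _ => (1 : ℝ)) = (L : ℝ≥0∞) := by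
      simp [NnL]
    rw [hN1] at hone
    have hL0' : (L : ℝ≥0∞) ≠ 0 := Nat.cast_ne_zero.mpr hL.ne'
    have hstep := le_trans le_add_self hone
    exact (ENNReal.mul_le_mul_iff_left hL0' (ENNReal.natCast_ne_top L)).mp hstep
  · set d := fun l => |c l| with hddef
    have hcore := core d (fun l => abs_nonneg _)
    have hNd0 : NnL L p d ≠ 0 := by rw [hddef, NnL_abs]; exact hNc
    have hNdt : NnL L p d ≠ ⊤ := NnL_ne_top hp0.le d
    have hdiv : (PhiL L p d + δ / 2 * NnL L p d) / NnL L p d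
        ≤ (C ^ p * NnL L p d) / NnL L p d := ENNReal.div_le_div_right hcore _
    rw [ENNReal.add_div, mul_div_assoc, mul_div_assoc, ENNReal.div_self hNd0 hNdt,
      mul_one, mul_one] at hdiv
    refine le_trans (add_le_add_left ?_ _) hdiv
    have h1 : PhiL L p c ≤ PhiL L p d := by rw [hddef]; exact PhiL_abs_le hp0.le c
    have h2 : NnL L p d = NnL L p c := by rw [hddef, NnL_abs]
    rw [← h2]
    exact ENNReal.div_le_div_right h1 _


section Atom

variable {X : Type*} [MeasurableSpace X]

lemma exists_ae_const (μ : Measure X) (A : Set X) (hA : MeasurableSet A)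
    (h0 : μ A ≠ 0) (hfin : μ A ≠ ∞)
    (hatom : ∀ S : Set X, MeasurableSet S → S ⊆ A → μ S = 0 ∨ μ (A \ S) = 0)
    (g : X → ℝ) (hg : Measurable g) :
    ∃ c : ℝ, ∀ᵐ x ∂μ, x ∈ A → g x = c := by
  set ν := μ.restrict A with hνdef
  haveI : IsFiniteMeasure ν := ⟨by
    rw [hνdef, Measure.restrict_apply_univ]
    exact lt_top_iff_ne_top.mpr hfin⟩
  have hνuniv : ν Set.univ = μ A := by rw [hνdef, Measure.restrict_apply_univ]
  have hν0 : ν Set.univ ≠ 0 := by rw [hνuniv]; exact h0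
  have hmeas_gt : ∀ t : ℝ, MeasurableSet {x | t < g x} :=
    fun t => measurableSet_lt measurable_const hg
  have hmeas_le : ∀ t : ℝ, MeasurableSet {x | g x ≤ t} :=
    fun t => measurableSet_le hg measurable_const
  have hdichot : ∀ t : ℝ, ν {x | t < g x} = 0 ∨ ν {x | g x ≤ t} = 0 := by
    intro t
    rcases hatom ({x | t < g x} ∩ A) ((hmeas_gt t).inter hA) Set.inter_subset_right with h | h
    · left
      rw [hνdef, Measure.restrict_apply (hmeas_gt t)]
      exact h
    · right
      rw [hνdef, Measure.restrict_apply (hmeas_le t)]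
      have he : A \ ({x | t < g x} ∩ A) = {x | g x ≤ t} ∩ A := by
        ext x
        simp only [Set.mem_diff, Set.mem_inter_iff, Set.mem_setOf_eq]
        constructor
        · rintro ⟨hxA, hx⟩
          exact ⟨not_lt.mp fun hlt => hx ⟨hlt, hxA⟩, hxA⟩
        · rintro ⟨hx, hxA⟩
          exact ⟨hxA, fun h => absurd h.1 (not_lt.mpr hx)⟩
      rw [← he]
      exact h
  have huniv_le : ∀ t : ℝ, ν Set.univ ≤ ν {x | t < g x} + ν {x | g x ≤ t} := by
    intro t
    refine le_trans (measure_mono ?_) (measure_union_le _ _)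
    intro x _
    rcases lt_or_ge t (g x) with h | h
    · exact Or.inl h
    · exact Or.inr h
  -- D is nonempty
  have htend1 : Tendsto (fun nn : ℕ => ν {x | (nn : ℝ) < g x}) atTop (nhds 0) := by
    have hinter : ⋂ nn : ℕ, {x | (nn : ℝ) < g x} = ∅ := by
      ext x
      simp only [Set.mem_iInter, Set.mem_setOf_eq, Set.mem_empty_iff_false, iff_false, not_forall,
        not_lt]
      obtain ⟨nn, hnn⟩ := exists_nat_gt (g x)
      exact ⟨nn, hnn.le⟩
    have := tendsto_measure_iInter_atTop (μ := ν) (s := fun nn : ℕ => {x | (nn : ℝ) < g x})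
      (fun nn => (hmeas_gt (nn : ℝ)).nullMeasurableSet)
      (fun a b hab => Set.setOf_subset_setOf.mpr fun x hx =>
        lt_of_le_of_lt (by exact_mod_cast hab) hx)
      ⟨0, measure_ne_top ν _⟩
    rw [hinter] at this
    simpa [Function.comp_def] using this
  have htend2 : Tendsto (fun nn : ℕ => ν {x | g x ≤ -(nn : ℝ)}) atTop (nhds 0) := by
    have hinter : ⋂ nn : ℕ, {x | g x ≤ -(nn : ℝ)} = ∅ := by
      ext x
      simp only [Set.mem_iInter, Set.mem_setOf_eq, Set.mem_empty_iff_false, iff_false, not_forall,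
        not_le]
      obtain ⟨nn, hnn⟩ := exists_nat_gt (-(g x))
      exact ⟨nn, by linarith⟩
    have := tendsto_measure_iInter_atTop (μ := ν) (s := fun nn : ℕ => {x | g x ≤ -(nn : ℝ)})
      (fun nn => (hmeas_le (-(nn : ℝ))).nullMeasurableSet)
      (fun a b hab => Set.setOf_subset_setOf.mpr fun x hx =>
        le_trans hx (by simp; exact_mod_cast hab))
      ⟨0, measure_ne_top ν _⟩
    rw [hinter] at this
    simpa [Function.comp_def] using this
  have hpos : (0 : ℝ≥0∞) < ν Set.univ := pos_iff_ne_zero.mpr hν0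
  obtain ⟨n₁, hn₁⟩ := (htend1.eventually_lt_const hpos).exists
  obtain ⟨n₂, hn₂⟩ := (htend2.eventually_lt_const hpos).exists
  set D := {t : ℝ | ν {x | t < g x} = 0} with hDdef
  have hDne : D.Nonempty := by
    refine ⟨(n₁ : ℝ), ?_⟩
    rcases hdichot (n₁ : ℝ) with h | h
    · exact h
    · exfalso
      have := huniv_le (n₁ : ℝ)
      rw [h, add_zero] at this
      exact absurd (lt_of_le_of_lt this hn₁) (lt_irrefl _)
  have hDbdd : BddBelow D := by
    refine ⟨-(n₂ : ℝ), ?_⟩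
    intro t ht
    by_contra hc
    push_neg at hc
    have hsub : {x | g x ≤ t} ⊆ {x | g x ≤ -(n₂ : ℝ)} :=
      fun x hx => le_trans hx hc.le
    have := huniv_le t
    rw [ht, zero_add] at this
    have h2 := le_trans this (measure_mono hsub)
    exact absurd (lt_of_le_of_lt h2 hn₂) (lt_irrefl _)
  set c := sInf D with hcdef
  refine ⟨c, ?_⟩
  have hup : ν {x | c < g x} = 0 := by
    have hsub : {x | c < g x} ⊆ ⋃ nn : ℕ, {x | c + 1 / ((nn : ℝ) + 1) < g x} := by
      intro x hx
      have hx' : c < g x := hx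
      obtain ⟨nn, hnn⟩ := exists_nat_one_div_lt (sub_pos.mpr hx')
      refine Set.mem_iUnion.mpr ⟨nn, ?_⟩
      simp only [Set.mem_setOf_eq]
      linarith
    refine measure_mono_null hsub (measure_iUnion_null fun nn => ?_)
    obtain ⟨t, htD, htlt⟩ := (csInf_lt_iff hDbdd hDne).mp
      (show sInf D < c + 1 / ((nn : ℝ) + 1) by
        rw [← hcdef]; exact lt_add_of_pos_right c (by positivity))
    refine measure_mono_null ?_ htD
    intro x hx
    simp only [Set.mem_setOf_eq] at hx ⊢
    linarith
  have hdn : ν {x | g x < c} = 0 := by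
    have hsub : {x | g x < c} ⊆ ⋃ nn : ℕ, {x | g x ≤ c - 1 / ((nn : ℝ) + 1)} := by
      intro x hx
      have hx' : g x < c := hx
      obtain ⟨nn, hnn⟩ := exists_nat_one_div_lt (sub_pos.mpr hx')
      refine Set.mem_iUnion.mpr ⟨nn, ?_⟩
      simp only [Set.mem_setOf_eq]
      linarith
    refine measure_mono_null hsub (measure_iUnion_null fun nn => ?_)
    rcases hdichot (c - 1 / ((nn : ℝ) + 1)) with h | h
    · exfalso
      have htD : (c - 1 / ((nn : ℝ) + 1)) ∈ D := h
      have := csInf_le hDbdd htD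
      rw [← hcdef] at this
      have hposn : (0 : ℝ) < 1 / ((nn : ℝ) + 1) := by positivity
      linarith
    · exact h
  have hne : ν {x | ¬ g x = c} = 0 := by
    have hsub : {x | ¬ g x = c} ⊆ {x | c < g x} ∪ {x | g x < c} := by
      intro x hx
      rcases lt_or_gt_of_ne (Ne.symm hx) with h | h
      · exact Or.inl h
      · exact Or.inr h
    exact measure_mono_null hsub (measure_union_null hup hdn)
  have : ∀ᵐ x ∂ν, g x = c := by
    rw [MeasureTheory.ae_iff]
    exact hne
  rw [hνdef] at this
  exact (ae_restrict_iff' hA).mp this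

end Atom

end OSAux

section Main

open OSAux

lemma measurePreserving_perm_pow {X : Type*} [MeasurableSpace X] {μ : MeasureTheory.Measure X}
    (T : Equiv.Perm X) (hT : MeasurePreserving (⇑T) μ μ) (n : ℕ) :
    MeasurePreserving (⇑(T ^ n)) μ μ := by
  induction n with
  | zero =>
    have h : ⇑(T ^ 0) = id := by ext x; simp
    rw [h]; exact MeasurePreserving.id μ
  | succ n ih =>
    have h : ⇑(T ^ (n + 1)) = ⇑T ∘ ⇑(T ^ n) := by
      ext x; rw [pow_succ']; rfl
    rw [h]; exact hT.comp ih

end Main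

/-- Case (A) of the dichotomy for the one-sided maximal operator: if a nontrivial σ-finite
ergodic system consists of finitely many atoms, then for every `p ∈ (1,∞)` the best strong
type (p,p) constant is strictly smaller than its counterpart on the integers. -/
theorem oneSided_strict_atomic {X : Type*} [MeasurableSpace X] (μ : Measure X)
    [SigmaFinite μ] (hX : NontrivialSpace μ) (T : Equiv.Perm X)
    (hT : MeasurePreserving (⇑T) μ μ) (hTs : Measurable (⇑T.symm))
    (hE : IsErgodicPerm μ T) (hA : FinitelyManyAtoms μ T)
    (p : ℝ) (hp : 1 < p) :
    strongConst μ (maxOS T) p < strongConst (Measure.count : Measure ℤ) (maxOS shiftZ) p := by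
  classical
  obtain ⟨L, A, hL, hAmeas, hAdisj, hAcover, hA0, hAmid, hAlast, hAatom⟩ := hA
  have hp0 : (0 : ℝ) < p := lt_trans one_pos hp
  -- images preserve measure
  have himg : ∀ S : Set X, MeasurableSet S → μ (⇑T '' S) = μ S := by
    intro S hS
    rw [Equiv.image_eq_preimage_symm]
    have h1 : μ (⇑T ⁻¹' (⇑T.symm ⁻¹' S)) = μ (⇑T.symm ⁻¹' S) :=
      hT.measure_preimage (hTs hS).nullMeasurableSet
    have h2 : ⇑T ⁻¹' (⇑T.symm ⁻¹' S) = S := by ext x; simp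
    rw [h2] at h1
    exact h1.symm
  -- the cyclic step on atoms
  have hstep : ∀ j : ℤ, ⇑T '' A (OSAux.posL L j) ⊆ A (OSAux.posL L (j + 1)) := by
    intro j
    rcases eq_or_ne (OSAux.posL L j) L with h | h
    · rw [OSAux.posL_add_one hL j, if_pos h, h]
      exact hAlast
    · have hb := OSAux.posL_bounds hL j
      rw [OSAux.posL_add_one hL j, if_neg h]
      exact hAmid _ hb.1 (by omega)
  have horbit : ∀ (n : ℕ) (j : ℤ) (x : X), x ∈ A (OSAux.posL L j) →
      (T ^ n) x ∈ A (OSAux.posL L (j + n)) := by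
    intro n
    induction n with
    | zero => intro j x hx; simpa using hx
    | succ n ih =>
      intro j x hx
      have h1 : (T ^ (n + 1)) x = T ((T ^ n) x) := by rw [pow_succ']; rfl
      rw [h1, show (j + ((n + 1 : ℕ) : ℤ)) = (j + n) + 1 by push_cast; ring]
      exact hstep (j + n) ⟨_, ih j x hx, rfl⟩
  -- atoms have equal measure
  have hμA : ∀ l : ℕ, 1 ≤ l → l ≤ L → μ (A l) = μ (A 1) := by
    have hm1 : ∀ nn : ℕ,
        μ (A (OSAux.posL L (nn : ℤ))) ≤ μ (A (OSAux.posL L ((nn : ℤ) + 1))) := by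
      intro nn
      calc μ (A (OSAux.posL L (nn : ℤ)))
          = μ (⇑T '' A (OSAux.posL L (nn : ℤ))) :=
            (himg _ (hAmeas _ (OSAux.posL_bounds hL _).2)).symm
        _ ≤ μ (A (OSAux.posL L ((nn : ℤ) + 1))) := measure_mono (hstep _)
    have hmono : ∀ a b : ℕ, a ≤ b →
        μ (A (OSAux.posL L (a : ℤ))) ≤ μ (A (OSAux.posL L (b : ℤ))) := by
      intro a b hab
      induction b with
      | zero =>
        have ha : a = 0 := by omega
        subst ha; exact le_rfl
      | succ b ihb =>
        rcases Nat.lt_or_ge a (b + 1) with h | h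
        · refine (ihb (by omega)).trans ?_
          have := hm1 b
          rwa [show ((b : ℤ) + 1) = ((b + 1 : ℕ) : ℤ) by push_cast; ring] at this
        · have hq : a = b + 1 := by omega
          subst hq; exact le_rfl
    intro l h1 h2
    have hposl : OSAux.posL L ((l - 1 : ℕ) : ℤ) = l := by
      rw [show (((l - 1 : ℕ)) : ℤ) = (l : ℤ) - 1 by omega]
      exact OSAux.posL_sub_one hL h1 h2
    have hpos0 : OSAux.posL L ((0 : ℕ) : ℤ) = 1 := by
      have := OSAux.posL_natCast hL (show 0 < L from hL)
      simpa using this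
    have hposL : OSAux.posL L ((L : ℕ) : ℤ) = 1 := by
      have hper := OSAux.posL_period hL 0
      rw [zero_add] at hper
      rw [hper]
      simpa using hpos0
    have hle1 : μ (A 1) ≤ μ (A l) := by
      have := hmono 0 (l - 1) (by omega)
      rwa [hpos0, hposl] at this
    have hle2 : μ (A l) ≤ μ (A 1) := by
      have := hmono (l - 1) L (by omega)
      rwa [hposl, hposL] at this
    exact le_antisymm hle2 hle1
  -- the common measure is positive and finite
  have hcover' : (⋃ l ∈ Finset.range (L + 1), A l) = Set.univ := by
    rw [← hAcover]; ext x; simp [Nat.lt_succ_iff]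
  have hapos : μ (A 1) ≠ 0 := by
    intro hz
    have hall : ∀ l ∈ Finset.range (L + 1), μ (A l) = 0 := by
      intro l hl
      rcases Nat.eq_zero_or_pos l with h | h
      · rw [h]; exact hA0
      · rw [hμA l h (by simp only [Finset.mem_range, Nat.lt_succ_iff] at hl; omega)]
        exact hz
    obtain ⟨E, hEmeas, hE0, hEfin⟩ := hX
    have hEle : μ E ≤ μ Set.univ := measure_mono (Set.subset_univ E)
    rw [← hcover'] at hEle
    have h2 : μ (⋃ l ∈ Finset.range (L + 1), A l) ≤ ∑ l ∈ Finset.range (L + 1), μ (A l) :=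
      measure_biUnion_finset_le _ _
    rw [Finset.sum_eq_zero hall] at h2
    exact absurd (lt_of_lt_of_le hE0 (le_trans hEle h2)) (by simp)
  have hafin : μ (A 1) ≠ ∞ := by
    by_contra htop
    have h1 : A 1 = ⋃ nn : ℕ, (A 1 ∩ spanningSets μ nn) := by
      rw [← Set.inter_iUnion, iUnion_spanningSets, Set.inter_univ]
    by_cases hall : ∀ nn, μ (A 1 ∩ spanningSets μ nn) = 0
    · have : μ (A 1) = 0 := by rw [h1]; exact measure_iUnion_null hall
      exact hapos this
    · push_neg at hall
      obtain ⟨nn, hnn⟩ := hall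
      rcases hAatom 1 le_rfl hL (A 1 ∩ spanningSets μ nn)
        ((hAmeas 1 hL).inter (measurableSet_spanningSets μ nn)) Set.inter_subset_left with h | h
      · exact hnn h
      · have h2 := measure_le_inter_add_diff μ (A 1) (spanningSets μ nn)
        rw [← Set.diff_self_inter, h, add_zero] at h2
        have h3 : μ (A 1 ∩ spanningSets μ nn) ≤ μ (spanningSets μ nn) :=
          measure_mono Set.inter_subset_right
        have h4 := lt_of_le_of_lt (le_trans h2 h3) (measure_spanningSets_lt_top μ nn)
        rw [htop] at h4
        exact absurd h4 (by simp)
  have hTn : ∀ n : ℕ, MeasurePreserving (⇑(T ^ n)) μ μ :=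
    fun n => measurePreserving_perm_pow T hT n
  -- R and δ
  set R := ⨆ c : ℕ → ℝ, OSAux.PhiL L p c / OSAux.NnL L p c with hRdef
  have hRle : R ≤ (L : ℝ≥0∞) := by
    rw [hRdef]
    refine iSup_le fun c => ?_
    by_cases h : OSAux.NnL L p c = 0
    · rw [h, OSAux.PhiL_zero hL hp0 h]
      simp
    · rw [ENNReal.div_le_iff h (OSAux.NnL_ne_top hp0.le c)]
      exact (OSAux.PhiL_le_L_mul hL hp0.le c).trans (by rw [mul_comm])
  have hRtop : R ≠ ∞ := (lt_of_le_of_lt hRle (ENNReal.natCast_lt_top L)).ne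
  set δ : ℝ≥0∞ := (ENNReal.ofReal (1 / (2 * (L : ℝ)))) ^ p with hδdef
  have hδhalf0 : δ / 2 ≠ 0 := by
    have hpos : (0 : ℝ) < 1 / (2 * (L : ℝ)) := by positivity
    have hδ0 : δ ≠ 0 :=
      (ENNReal.rpow_pos (ENNReal.ofReal_pos.mpr hpos) ENNReal.ofReal_ne_top).ne'
    simp only [ne_eq, ENNReal.div_eq_zero_iff, hδ0, false_or]
    exact ENNReal.ofNat_ne_top
  -- STEP A
  have hstepA : strongConst μ (maxOS T) p ≤ R ^ (1 / p) := by
    have hmemset : ∀ f : X → ℝ, MemLp f (ENNReal.ofReal p) μ →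
        (∫⁻ x, maxOS T f x ^ p ∂μ) ^ (1 / p)
          ≤ R ^ (1 / p) * eLpNorm f (ENNReal.ofReal p) μ := by
      intro f hf
      obtain ⟨g, hgsm, hfg⟩ := hf.1
      have hgm : Measurable g := hgsm.measurable
      have hex : ∀ l : ℕ, ∃ cl : ℝ, 1 ≤ l → l ≤ L →
          ∀ᵐ x ∂μ, x ∈ A l → g x = cl := by
        intro l
        by_cases hl : 1 ≤ l ∧ l ≤ L
        · obtain ⟨cl, hcl⟩ := OSAux.exists_ae_const μ (A l) (hAmeas l hl.2)
            (by rw [hμA l hl.1 hl.2]; exact hapos)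
            (by rw [hμA l hl.1 hl.2]; exact hafin)
            (fun S hS hSsub => hAatom l hl.1 hl.2 S hS hSsub) g hgm
          exact ⟨cl, fun _ _ => hcl⟩
        · exact ⟨0, fun h1 h2 => absurd ⟨h1, h2⟩ hl⟩
      choose cf hcf using hex
      set w : ℤ → ℝ := OSAux.wOf L cf with hwdef
      set Bad : Set X := ⋃ l ∈ Finset.Icc 1 L, (A l ∩ {x | g x ≠ cf l}) with hBaddef
      have hBadnull : μ Bad = 0 := by
        rw [hBaddef]
        have hle := measure_biUnion_finset_le (μ := μ) (Finset.Icc 1 L)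
          (fun l => A l ∩ {x | g x ≠ cf l})
        have hz : ∀ l ∈ Finset.Icc 1 L, μ (A l ∩ {x | g x ≠ cf l}) = 0 := by
          intro l hl
          simp only [Finset.mem_Icc] at hl
          have hae := hcf l hl.1 hl.2
          have hmz := MeasureTheory.ae_iff.mp hae
          have hseteq : {x | ¬(x ∈ A l → g x = cf l)} = A l ∩ {x | g x ≠ cf l} := by
            ext x
            simp only [Set.mem_setOf_eq, Set.mem_inter_iff, Classical.not_imp]
          rwa [hseteq] at hmz
        exact le_antisymm (le_trans hle (le_of_eq (Finset.sum_eq_zero hz))) zero_le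
      have hEnull : μ {x | ¬ f x = g x} = 0 := MeasureTheory.ae_iff.mp hfg
      set DD : Set X := ⋃ n : ℕ, (⇑(T ^ n)) ⁻¹' (Bad ∪ {x | ¬ f x = g x}) with hDDdef
      have hDDnull : μ DD = 0 := by
        rw [hDDdef]
        refine measure_iUnion_null fun n => ?_
        exact (hTn n).quasiMeasurePreserving.preimage_null
          (measure_union_null hBadnull hEnull)
      have hptwise : ∀ x : X, x ∉ DD → ∀ l : ℕ, 1 ≤ l → l ≤ L → x ∈ A l →
          maxOS T f x = maxOS shiftZ w ((l : ℤ) - 1) := by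
        intro x hx l h1 h2 hxl
        have hxn : ∀ n : ℕ, (T ^ n) x ∉ Bad ∧ f ((T ^ n) x) = g ((T ^ n) x) := by
          intro n
          have hnotin : x ∉ (⇑(T ^ n)) ⁻¹' (Bad ∪ {x | ¬ f x = g x}) := by
            intro hc
            exact hx (by rw [hDDdef]; exact Set.mem_iUnion.mpr ⟨n, hc⟩)
          simp only [Set.mem_preimage, Set.mem_union, Set.mem_setOf_eq, not_or] at hnotin
          exact ⟨hnotin.1, not_not.mp hnotin.2⟩
        have hxA : x ∈ A (OSAux.posL L ((l : ℤ) - 1)) := by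
          rw [OSAux.posL_sub_one hL h1 h2]; exact hxl
        have hval : ∀ n : ℕ, f ((T ^ n) x) = w (((l : ℤ) - 1) + n) := by
          intro n
          have horb := horbit n ((l : ℤ) - 1) x hxA
          have hb := OSAux.posL_bounds hL (((l : ℤ) - 1) + n)
          have hgval : g ((T ^ n) x) = cf (OSAux.posL L (((l : ℤ) - 1) + n)) := by
            by_contra hcon
            apply (hxn n).1
            rw [hBaddef]
            refine Set.mem_biUnion ?_ ⟨horb, hcon⟩
            first
            | exact Finset.mem_Icc.mpr ⟨hb.1, hb.2⟩
            | (simp only [Finset.coe_Icc, Set.mem_Icc]; exact ⟨hb.1, hb.2⟩)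
          rw [(hxn n).2, hgval]
          rfl
        rw [OSAux.maxOS_shiftZ]
        unfold maxOS
        refine iSup_congr fun N => ?_
        have hsc : ∑ n ∈ Finset.range (N + 1), f ((T ^ n) x)
            = ∑ n ∈ Finset.range (N + 1), w (((l : ℤ) - 1) + n) :=
          Finset.sum_congr rfl fun n _ => hval n
        rw [hsc]
      -- decomposition of integrals over atoms
      have hAmeas' : ∀ i : Fin (L + 1), MeasurableSet (A i) :=
        fun i => hAmeas i (Nat.lt_succ_iff.mp i.isLt)
      have hunivU : (⋃ i : Fin (L + 1), A i) = Set.univ := by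
        rw [Set.eq_univ_iff_forall]
        intro x
        have hx : x ∈ ⋃ l, ⋃ (_ : l ≤ L), A l := by rw [hAcover]; trivial
        obtain ⟨l, hl⟩ := Set.mem_iUnion.mp hx
        obtain ⟨hlL, hxl⟩ := Set.mem_iUnion.mp hl
        exact Set.mem_iUnion.mpr ⟨⟨l, by omega⟩, hxl⟩
      have hpd : Pairwise (Function.onFun Disjoint fun i : Fin (L + 1) => A i) := by
        intro i j hij
        exact hAdisj i j (Nat.lt_succ_iff.mp i.isLt) (Nat.lt_succ_iff.mp j.isLt)
          (fun h => hij (Fin.val_injective h))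
      have hdecomp : ∀ F : X → ℝ≥0∞,
          ∫⁻ x, F x ∂μ = ∑ i : Fin (L + 1), ∫⁻ x in A i, F x ∂μ := by
        intro F
        conv_lhs => rw [← Measure.restrict_univ (μ := μ), ← hunivU]
        rw [Measure.restrict_iUnion hpd hAmeas', lintegral_sum_measure, tsum_fintype]
      have hzero0 : μ.restrict (A ((0 : Fin (L + 1)) : ℕ)) = 0 :=
        Measure.restrict_eq_zero.mpr (by simpa using hA0)
      have hintegral1 : ∫⁻ x, maxOS T f x ^ p ∂μ
          = (∑ i ∈ Finset.range L, (maxOS shiftZ w (i : ℤ)) ^ p) * μ (A 1) := by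
        rw [hdecomp (fun x => maxOS T f x ^ p), Fin.sum_univ_succ]
        have h0 : ∫⁻ x in A ((0 : Fin (L + 1)) : ℕ), maxOS T f x ^ p ∂μ = 0 := by
          rw [hzero0]; exact lintegral_zero_measure _
        rw [h0, zero_add, Finset.sum_mul, Finset.sum_range]
        refine Finset.sum_congr rfl fun i _ => ?_
        have h1l : 1 ≤ (i : ℕ) + 1 := by omega
        have h2l : (i : ℕ) + 1 ≤ L := i.isLt
        have hae : ∀ᵐ x ∂μ, x ∈ A ((i : ℕ) + 1) →
            maxOS T f x ^ p = (maxOS shiftZ w ((((i : ℕ) + 1 : ℕ) : ℤ) - 1)) ^ p := by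
          filter_upwards [measure_eq_zero_iff_ae_notMem.mp hDDnull] with x hx hxl
          rw [hptwise x hx ((i : ℕ) + 1) h1l h2l hxl]
        have hv : ∫⁻ x in A ((Fin.succ i : Fin (L + 1)) : ℕ), maxOS T f x ^ p ∂μ
            = (maxOS shiftZ w ((((i : ℕ) + 1 : ℕ) : ℤ) - 1)) ^ p * μ (A ((i : ℕ) + 1)) := by
          rw [show ((Fin.succ i : Fin (L + 1)) : ℕ) = (i : ℕ) + 1 from rfl,
            lintegral_congr_ae ((ae_restrict_iff' (hAmeas _ h2l)).mpr hae),
            setLIntegral_const]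
        rw [hv, hμA _ h1l h2l,
          show ((((i : ℕ) + 1 : ℕ) : ℤ) - 1) = ((i : ℕ) : ℤ) by push_cast; ring]
      have hintegral2 : ∫⁻ x, (‖g x‖₊ : ℝ≥0∞) ^ p ∂μ
          = (∑ i ∈ Finset.range L, (‖cf ((i : ℕ) + 1)‖₊ : ℝ≥0∞) ^ p) * μ (A 1) := by
        rw [hdecomp (fun x => (‖g x‖₊ : ℝ≥0∞) ^ p), Fin.sum_univ_succ]
        have h0 : ∫⁻ x in A ((0 : Fin (L + 1)) : ℕ), (‖g x‖₊ : ℝ≥0∞) ^ p ∂μ = 0 := by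
          rw [hzero0]; exact lintegral_zero_measure _
        rw [h0, zero_add, Finset.sum_mul, Finset.sum_range]
        refine Finset.sum_congr rfl fun i _ => ?_
        have h1l : 1 ≤ (i : ℕ) + 1 := by omega
        have h2l : (i : ℕ) + 1 ≤ L := i.isLt
        have hae : ∀ᵐ x ∂μ, x ∈ A ((i : ℕ) + 1) →
            (‖g x‖₊ : ℝ≥0∞) ^ p = (‖cf ((i : ℕ) + 1)‖₊ : ℝ≥0∞) ^ p := by
          filter_upwards [hcf ((i : ℕ) + 1) h1l h2l] with x hx hxl
          rw [hx hxl]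
        have hv : ∫⁻ x in A ((Fin.succ i : Fin (L + 1)) : ℕ), (‖g x‖₊ : ℝ≥0∞) ^ p ∂μ
            = (‖cf ((i : ℕ) + 1)‖₊ : ℝ≥0∞) ^ p * μ (A ((i : ℕ) + 1)) := by
          rw [show ((Fin.succ i : Fin (L + 1)) : ℕ) = (i : ℕ) + 1 from rfl,
            lintegral_congr_ae ((ae_restrict_iff' (hAmeas _ h2l)).mpr hae),
            setLIntegral_const]
        rw [hv, hμA _ h1l h2l]
      have hPhi : ∫⁻ x, maxOS T f x ^ p ∂μ = OSAux.PhiL L p cf * μ (A 1) := hintegral1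
      have hNn : ∫⁻ x, (‖g x‖₊ : ℝ≥0∞) ^ p ∂μ = OSAux.NnL L p cf * μ (A 1) := hintegral2
      have hΦR : OSAux.PhiL L p cf ≤ R * OSAux.NnL L p cf := by
        by_cases h : OSAux.NnL L p cf = 0
        · rw [OSAux.PhiL_zero hL hp0 h, h, mul_zero]
        · have hle : OSAux.PhiL L p cf / OSAux.NnL L p cf ≤ R := by
            rw [hRdef]
            exact le_iSup (fun c => OSAux.PhiL L p c / OSAux.NnL L p c) cf
          exact (ENNReal.div_le_iff h (OSAux.NnL_ne_top hp0.le cf)).mp hle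
      have hORne : ENNReal.ofReal p ≠ 0 := by
        simp only [ne_eq, ENNReal.ofReal_eq_zero, not_le]; linarith
      have heLp : eLpNorm f (ENNReal.ofReal p) μ
          = (OSAux.NnL L p cf * μ (A 1)) ^ (1 / p) := by
        rw [eLpNorm_congr_ae hfg,
          eLpNorm_eq_lintegral_rpow_enorm_toReal hORne ENNReal.ofReal_ne_top,
          ENNReal.toReal_ofReal hp0.le]
        simp only [enorm_eq_nnnorm]
        rw [hNn]
      calc (∫⁻ x, maxOS T f x ^ p ∂μ) ^ (1 / p)
          = (OSAux.PhiL L p cf * μ (A 1)) ^ (1 / p) := by rw [hPhi]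
        _ ≤ (R * (OSAux.NnL L p cf * μ (A 1))) ^ (1 / p) := by
            refine ENNReal.rpow_le_rpow ?_ (by positivity)
            calc OSAux.PhiL L p cf * μ (A 1)
                ≤ (R * OSAux.NnL L p cf) * μ (A 1) := mul_le_mul_left hΦR _
              _ = R * (OSAux.NnL L p cf * μ (A 1)) := by ring
        _ = R ^ (1 / p) * (OSAux.NnL L p cf * μ (A 1)) ^ (1 / p) :=
            ENNReal.mul_rpow_of_nonneg _ _ (by positivity)
        _ = R ^ (1 / p) * eLpNorm f (ENNReal.ofReal p) μ := by rw [heLp]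
    exact sInf_le hmemset
  -- STEP B
  have hstepB : (R + δ / 2) ^ (1 / p)
      ≤ strongConst (Measure.count : Measure ℤ) (maxOS shiftZ) p := by
    refine le_sInf fun C hC => ?_
    have hall := OSAux.stepB L hL p hp C hC
    have hRb : R + δ / 2 ≤ C ^ p := by
      rw [hRdef, iSup_add]
      exact iSup_le fun c => hall c
    have h := ENNReal.rpow_le_rpow hRb (show (0 : ℝ) ≤ 1 / p by positivity)
    rwa [← ENNReal.rpow_mul, show p * (1 / p) = 1 by field_simp, ENNReal.rpow_one] at h
  calc strongConst μ (maxOS T) p ≤ R ^ (1 / p) := hstepA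
    _ < (R + δ / 2) ^ (1 / p) :=
        ENNReal.rpow_lt_rpow (ENNReal.lt_add_right hRtop hδhalf0) (by positivity)
    _ ≤ strongConst (Measure.count : Measure ℤ) (maxOS shiftZ) p := hstepB

end
end

section
/- The best constant in the weak type (1,1) inequality for the uncentered maximal operator on the integers equals 2: C^u(X₁, 1) = 2. That is, λ · #{l ∈ ℤ : M^u f(l) ≥ λ} ≤ 2‖f‖_{ℓ¹} for all f ∈ ℓ¹(ℤ) and λ > 0, and 2 cannot be replaced by any smaller constant. -/
open MeasureTheory ENNReal Filter

noncomputable section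

variable {X : Type*} [MeasurableSpace X]

section Helpers

open NNReal

lemma shiftZ_zpow (n : ℤ) : ∀ x : ℤ, (shiftZ ^ n) x = x + n := by
  induction n using Int.induction_on with
  | zero => intro x; simp
  | succ k ih =>
      intro x
      rw [zpow_add_one, Equiv.Perm.mul_apply, show shiftZ x = x + 1 from rfl, ih]
      ring
  | pred k ih =>
      intro x
      rw [zpow_sub_one, Equiv.Perm.mul_apply, show shiftZ⁻¹ x = x - 1 from rfl, ih]
      ring

lemma sum_shift_Icc (h : ℤ → ℝ) (x : ℤ) (r s : ℕ) :
    ∑ n ∈ Finset.Icc (-(r:ℤ)) (s:ℤ), h (x + n) = ∑ m ∈ Finset.Icc (x - r) (x + s), h m := by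
  rw [show x - (r:ℤ) = x + -(r:ℤ) by ring, ← Finset.map_add_left_Icc (-(r:ℤ)) (s:ℤ) x,
    Finset.sum_map]
  simp [addLeftEmbedding]

lemma sum_reflect (g : ℤ → ℝ) (a b : ℤ) :
    ∑ n ∈ Finset.Icc a b, g (-n) = ∑ m ∈ Finset.Icc (-b) (-a), g m := by
  have h : Finset.Icc (-b) (-a) = (Finset.Icc a b).image (fun n => -n) := by
    ext m
    simp only [Finset.mem_image, Finset.mem_Icc]
    constructor
    · rintro ⟨h1, h2⟩; exact ⟨-m, ⟨by omega, by omega⟩, by omega⟩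
    · rintro ⟨n, ⟨h1, h2⟩, rfl⟩; omega
  rw [h, Finset.sum_image (fun x _ y _ h => by omega)]

lemma cover_right_aux (g : ℤ → ℝ) (hg : ∀ n, 0 ≤ g n) (lam : ℝ) (hlam : 0 < lam) (b : ℤ) :
    ∀ F : Finset ℤ, ∀ a : ℤ, (∀ x ∈ F, a ≤ x) →
      (∀ x ∈ F, ∃ s : ℕ, x + (s:ℤ) ≤ b ∧ lam * ((s:ℝ) + 1) ≤ ∑ n ∈ Finset.Icc x (x + (s:ℤ)), g n) →
      lam * F.card ≤ ∑ n ∈ Finset.Icc a b, g n := by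
  intro F
  induction F using Finset.strongInduction with
  | _ F ih =>
    intro a ha hw
    rcases F.eq_empty_or_nonempty with rfl | hne
    · simpa using Finset.sum_nonneg (fun n _ => hg n)
    · set x₀ := F.min' hne with hx₀
      obtain ⟨s₀, hs₀b, hs₀⟩ := hw x₀ (F.min'_mem hne)
      set m := x₀ + (s₀ : ℤ) with hm
      set F' := F.filter (fun x => m < x) with hF'
      have hss : F' ⊂ F :=
        Finset.filter_ssubset.mpr ⟨x₀, F.min'_mem hne, by omega⟩
      have hIH : lam * F'.card ≤ ∑ n ∈ Finset.Icc (m+1) b, g n := by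
        refine ih F' hss (m+1) ?_ ?_
        · intro x hx; have := (Finset.mem_filter.mp hx).2; omega
        · intro x hx; exact hw x (Finset.mem_filter.mp hx).1
      have hcard : (F.card : ℝ) ≤ (F'.card : ℝ) + ((s₀ : ℝ) + 1) := by
        have hsub : F ⊆ F' ∪ Finset.Icc x₀ m := by
          intro x hx
          rcases lt_or_ge m x with h | h
          · exact Finset.mem_union_left _ (Finset.mem_filter.mpr ⟨hx, h⟩)
          · exact Finset.mem_union_right _ (Finset.mem_Icc.mpr ⟨F.min'_le x hx, h⟩)
        have h1 : F.card ≤ F'.card + (Finset.Icc x₀ m).card :=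
          le_trans (Finset.card_le_card hsub) (Finset.card_union_le _ _)
        have h2 : (Finset.Icc x₀ m).card = s₀ + 1 := by
          rw [Int.card_Icc]; omega
        rw [h2] at h1
        exact_mod_cast h1
      have hsum : ∑ n ∈ Finset.Icc x₀ m, g n + ∑ n ∈ Finset.Icc (m+1) b, g n
          ≤ ∑ n ∈ Finset.Icc a b, g n := by
        rw [← Finset.sum_union (by
          rw [Finset.disjoint_left]; intro n h1 h2
          simp only [Finset.mem_Icc] at h1 h2; omega)]
        refine Finset.sum_le_sum_of_subset_of_nonneg ?_ (fun n _ _ => hg n)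
        intro n hn
        have hax₀ : a ≤ x₀ := ha x₀ (F.min'_mem hne)
        simp only [Finset.mem_union, Finset.mem_Icc] at hn ⊢
        omega
      have := add_le_add hIH hs₀
      calc lam * F.card ≤ lam * ((F'.card : ℝ) + ((s₀:ℝ) + 1)) :=
            mul_le_mul_of_nonneg_left hcard hlam.le
        _ = lam * F'.card + lam * ((s₀:ℝ) + 1) := by ring
        _ ≤ ∑ n ∈ Finset.Icc (m+1) b, g n + ∑ n ∈ Finset.Icc x₀ m, g n := add_le_add hIH hs₀
        _ ≤ ∑ n ∈ Finset.Icc a b, g n := by rw [add_comm]; exact hsum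

lemma cover_right (g : ℤ → ℝ) (hg : ∀ n, 0 ≤ g n) (S : ℝ)
    (hS : ∀ a b : ℤ, ∑ n ∈ Finset.Icc a b, g n ≤ S)
    (lam : ℝ) (hlam : 0 < lam) (F : Finset ℤ)
    (hw : ∀ x ∈ F, ∃ s : ℕ, lam * ((s:ℝ) + 1) ≤ ∑ n ∈ Finset.Icc x (x + (s:ℤ)), g n) :
    lam * F.card ≤ S := by
  classical
  rcases F.eq_empty_or_nonempty with rfl | hne
  · have h := hS 1 0
    simp only [show Finset.Icc (1:ℤ) 0 = ∅ by simp, Finset.sum_empty] at h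
    simpa using h
  · set sf : ℤ → ℕ := fun x =>
      if h : ∃ s : ℕ, lam * ((s:ℝ) + 1) ≤ ∑ n ∈ Finset.Icc x (x + (s:ℤ)), g n then h.choose else 0
      with hsf
    set b := F.sup' hne (fun x => x + (sf x : ℤ)) with hb
    have key : lam * F.card ≤ ∑ n ∈ Finset.Icc (F.min' hne) b, g n := by
      refine cover_right_aux g hg lam hlam b F (F.min' hne) (fun x hx => F.min'_le x hx) ?_
      intro x hx
      have h := hw x hx
      refine ⟨sf x, ?_, ?_⟩
      · rw [hb]; exact Finset.le_sup' (fun x => x + (sf x : ℤ)) hx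
      simp only [hsf, dif_pos h]
      exact h.choose_spec
    exact key.trans (hS _ _)

lemma cover_left (g : ℤ → ℝ) (hg : ∀ n, 0 ≤ g n) (S : ℝ)
    (hS : ∀ a b : ℤ, ∑ n ∈ Finset.Icc a b, g n ≤ S)
    (lam : ℝ) (hlam : 0 < lam) (F : Finset ℤ)
    (hw : ∀ x ∈ F, ∃ r : ℕ, lam * ((r:ℝ) + 1) ≤ ∑ n ∈ Finset.Icc (x - (r:ℤ)) x, g n) :
    lam * F.card ≤ S := by
  have h := cover_right (fun n => g (-n)) (fun n => hg (-n)) S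
    (fun a b => by rw [sum_reflect]; exact hS _ _) lam hlam (F.image (fun x => -x)) ?_
  · rwa [Finset.card_image_of_injective _ neg_injective] at h
  · intro y hy
    obtain ⟨x, hx, rfl⟩ := Finset.mem_image.mp hy
    obtain ⟨r, hr⟩ := hw x hx
    refine ⟨r, ?_⟩
    rw [sum_reflect, show (-(-x + (r:ℤ))) = x - r by ring, neg_neg]
    exact hr

lemma finset_bound (g : ℤ → ℝ) (hg : ∀ n, 0 ≤ g n) (S : ℝ)
    (hS : ∀ a b : ℤ, ∑ n ∈ Finset.Icc a b, g n ≤ S)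
    (lam : ℝ) (hlam : 0 < lam) (F : Finset ℤ)
    (hw : ∀ x ∈ F, ∃ r s : ℕ, lam * ((r:ℝ) + (s:ℝ) + 1) ≤
      ∑ n ∈ Finset.Icc (x - (r:ℤ)) (x + (s:ℤ)), g n) :
    lam * F.card ≤ 2 * S := by
  classical
  set PA : ℤ → Prop := fun x =>
    ∃ r : ℕ, lam * ((r:ℝ) + 1) ≤ ∑ n ∈ Finset.Icc (x - (r:ℤ)) x, g n with hPA
  set F₁ := F.filter PA with hF₁
  set F₂ := F.filter (fun x => ¬ PA x) with hF₂
  have h₁ : lam * F₁.card ≤ S :=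
    cover_left g hg S hS lam hlam F₁ (fun x hx => (Finset.mem_filter.mp hx).2)
  have h₂ : lam * F₂.card ≤ S := by
    have h := cover_right g hg S hS lam hlam (F₂.image (fun x => x + 1)) ?_
    · rwa [Finset.card_image_of_injective _ (add_left_injective 1)] at h
    · intro y hy
      obtain ⟨x, hx, rfl⟩ := Finset.mem_image.mp hy
      have hxF := (Finset.mem_filter.mp hx).1
      have hnPA := (Finset.mem_filter.mp hx).2
      have hnot : ∀ r : ℕ, ∑ n ∈ Finset.Icc (x - (r:ℤ)) x, g n < lam * ((r:ℝ) + 1) := by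
        intro r
        by_contra hcon
        push_neg at hcon
        exact hnPA ⟨r, hcon⟩
      obtain ⟨r, s, hrs⟩ := hw x hxF
      rcases Nat.eq_zero_or_pos s with rfl | hs
      · exfalso
        have := hnot r
        simp only [Nat.cast_zero, add_zero] at hrs
        linarith
      · refine ⟨s - 1, ?_⟩
        have hU : Finset.Icc (x - (r:ℤ)) x ∪ Finset.Icc (x+1) (x + (s:ℤ))
            = Finset.Icc (x - (r:ℤ)) (x + (s:ℤ)) := by
          ext n; simp only [Finset.mem_union, Finset.mem_Icc]; omega
        have hdisj : Disjoint (Finset.Icc (x - (r:ℤ)) x) (Finset.Icc (x+1) (x + (s:ℤ))) := by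
          rw [Finset.disjoint_left]; intro n h1 h2
          simp only [Finset.mem_Icc] at h1 h2; omega
        have hsplit : ∑ n ∈ Finset.Icc (x - (r:ℤ)) (x + (s:ℤ)), g n
            = ∑ n ∈ Finset.Icc (x - (r:ℤ)) x, g n + ∑ n ∈ Finset.Icc (x+1) (x + (s:ℤ)), g n := by
          rw [← Finset.sum_union hdisj, hU]
        have hleft := hnot r
        have hcast : ((s - 1 : ℕ) : ℝ) + 1 = (s : ℝ) := by
          have : (1:ℕ) ≤ s := hs
          push_cast [Nat.cast_sub this]
          ring
        have hend : x + 1 + ((s - 1 : ℕ) : ℤ) = x + (s : ℤ) := by omega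
        rw [hend, hcast]
        rw [hsplit] at hrs
        linarith
  have hsum : F₁.card + F₂.card = F.card := Finset.card_filter_add_card_filter_not _
  have : (F.card : ℝ) = F₁.card + F₂.card := by exact_mod_cast hsum.symm
  rw [this]
  linarith

lemma weak_main (f : ℤ → ℝ) (hf : Integrable f (Measure.count : Measure ℤ)) (l : ℝ≥0∞) :
    l * (Measure.count : Measure ℤ) {x : ℤ | l ≤ maxU shiftZ f x} ≤
      2 * eLpNorm f 1 (Measure.count : Measure ℤ) := by
  classical
  set Sen : ℝ≥0∞ := ∑' n : ℤ, (‖f n‖₊ : ℝ≥0∞) with hSen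
  have heLp : eLpNorm f 1 (Measure.count : Measure ℤ) = Sen := by
    rw [eLpNorm_one_eq_lintegral_enorm, lintegral_count]
    rfl
  have hfin : Sen ≠ ∞ := by
    have h := hf.2
    rw [hasFiniteIntegral_def, lintegral_count] at h
    exact h.ne
  set S : ℝ := Sen.toReal with hSR
  have hS : ∀ a b : ℤ, ∑ n ∈ Finset.Icc a b, |f n| ≤ S := by
    intro a b
    have h1 : ∑ n ∈ Finset.Icc a b, (‖f n‖₊ : ℝ≥0∞) ≤ Sen := ENNReal.sum_le_tsum _
    have h2 := ENNReal.toReal_mono hfin h1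
    rwa [ENNReal.toReal_sum (fun n _ => ENNReal.coe_ne_top)] at h2
  have key : ∀ q : ℝ≥0, 0 < q → ∀ F : Finset ℤ,
      (∀ x ∈ F, (q : ℝ≥0∞) < maxU shiftZ f x) → (q : ℝ) * F.card ≤ 2 * S := by
    intro q hq F hF
    refine finset_bound (fun n => |f n|) (fun n => abs_nonneg _) S hS q (by exact_mod_cast hq) F ?_
    intro x hx
    have h := hF x hx
    rw [maxU] at h
    obtain ⟨r, hr⟩ := lt_iSup_iff.mp h
    obtain ⟨s, hs⟩ := lt_iSup_iff.mp hr
    refine ⟨r, s, ?_⟩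
    rw [ENNReal.coe_lt_coe] at hs
    have hs' : (q:ℝ) < ‖(∑ n ∈ Finset.Icc (-(r:ℤ)) (s:ℤ), f ((shiftZ ^ n) x)) / ((r:ℝ)+(s:ℝ)+1)‖ := by
      exact_mod_cast hs
    have hd : (0:ℝ) < (r:ℝ) + (s:ℝ) + 1 := by positivity
    rw [norm_div, Real.norm_eq_abs, Real.norm_eq_abs, abs_of_pos hd] at hs'
    have h2 : (q:ℝ) * ((r:ℝ)+(s:ℝ)+1) < |∑ n ∈ Finset.Icc (-(r:ℤ)) (s:ℤ), f ((shiftZ ^ n) x)| :=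
      (lt_div_iff₀ hd).mp hs'
    have h3 : |∑ n ∈ Finset.Icc (-(r:ℤ)) (s:ℤ), f ((shiftZ ^ n) x)|
        ≤ ∑ m ∈ Finset.Icc (x - (r:ℤ)) (x + (s:ℤ)), |f m| := by
      have hcg : ∀ n ∈ Finset.Icc (-(r:ℤ)) (s:ℤ), f ((shiftZ ^ n) x) = f (x + n) :=
        fun n _ => by rw [shiftZ_zpow]
      rw [Finset.sum_congr rfl hcg]
      calc |∑ n ∈ Finset.Icc (-(r:ℤ)) (s:ℤ), f (x + n)|
          ≤ ∑ n ∈ Finset.Icc (-(r:ℤ)) (s:ℤ), |f (x + n)| := Finset.abs_sum_le_sum_abs _ _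
        _ = ∑ m ∈ Finset.Icc (x - (r:ℤ)) (x + (s:ℤ)), |f m| := sum_shift_Icc (fun m => |f m|) x r s
    linarith
  set E := {x : ℤ | l ≤ maxU shiftZ f x} with hE
  rcases eq_or_ne l 0 with rfl | hl0
  · simp
  rcases eq_or_ne ((Measure.count : Measure ℤ) E) 0 with hE0 | hE0
  · rw [hE0, mul_zero]; exact zero_le
  obtain ⟨q, hq0, hql⟩ : ∃ q : ℝ≥0, 0 < q ∧ (q:ℝ≥0∞) < l := by
    obtain ⟨q, hq1, hq2⟩ := ENNReal.lt_iff_exists_nnreal_btwn.mp (pos_iff_ne_zero.mpr hl0)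
    exact ⟨q, by exact_mod_cast hq1, hq2⟩
  have hqE : ∀ x ∈ E, (q:ℝ≥0∞) < maxU shiftZ f x := fun x hx => lt_of_lt_of_le hql hx
  have hEfin : E.Finite := by
    by_contra hinf
    obtain ⟨n, hn⟩ := exists_nat_gt ((2 * S) / q)
    obtain ⟨F, hFE, hFcard⟩ := Set.Infinite.exists_subset_card_eq hinf n
    have hk := key q hq0 F (fun x hx => hqE x (hFE hx))
    rw [hFcard] at hk
    have hq0' : (0:ℝ) < q := hq0
    have := (div_lt_iff₀ hq0').mp hn
    nlinarith
  rw [Measure.count_apply_finite E hEfin]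
  have hne0 : (hEfin.toFinset.card : ℝ≥0∞) ≠ 0 := by
    simp only [ne_eq, Nat.cast_eq_zero, Finset.card_eq_zero]
    intro hcon
    apply hE0
    rw [show E = (∅ : Set ℤ) from by rw [← hEfin.coe_toFinset, hcon]; simp]
    simp
  have hnet : (hEfin.toFinset.card : ℝ≥0∞) ≠ ∞ := ENNReal.natCast_ne_top _
  have hq' : ∀ q' : ℝ≥0, (q':ℝ≥0∞) < l →
      (q':ℝ≥0∞) * hEfin.toFinset.card ≤ 2 * eLpNorm f 1 (Measure.count : Measure ℤ) := by
    intro q' hq'l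
    rcases eq_or_ne q' 0 with rfl | hq'0
    · simp
    have hk := key q' (pos_iff_ne_zero.mpr hq'0) hEfin.toFinset
      (fun x hx => lt_of_lt_of_le hq'l (hEfin.mem_toFinset.mp hx))
    have : ((q':ℝ≥0∞)) * hEfin.toFinset.card = ENNReal.ofReal ((q':ℝ) * hEfin.toFinset.card) := by
      rw [ENNReal.ofReal_mul (q'.coe_nonneg), ENNReal.ofReal_coe_nnreal, ENNReal.ofReal_natCast]
    rw [this, heLp]
    calc ENNReal.ofReal ((q':ℝ) * hEfin.toFinset.card) ≤ ENNReal.ofReal (2 * S) :=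
          ENNReal.ofReal_le_ofReal hk
      _ = 2 * Sen := by
          rw [ENNReal.ofReal_mul (by norm_num), ENNReal.ofReal_ofNat, hSR,
            ENNReal.ofReal_toReal hfin]
  have hdiv : l ≤ (2 * eLpNorm f 1 (Measure.count : Measure ℤ)) / hEfin.toFinset.card := by
    refine ENNReal.le_of_forall_nnreal_lt ?_
    intro q' hq'l
    exact (ENNReal.le_div_iff_mul_le (Or.inl hne0) (Or.inl hnet)).mpr (hq' q' hq'l)
  exact (ENNReal.le_div_iff_mul_le (Or.inl hne0) (Or.inl hnet)).mp hdiv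

end Helpers

/-- The best constant in the weak type (1,1) inequality for the uncentered maximal operator on
the canonical system `X₁ = ℤ` equals `2`; in particular
`λ · #{l : M^u f(l) ≥ λ} ≤ 2 ‖f‖₁` for all `f ∈ ℓ¹(ℤ)` and all `λ`, and `2` cannot be replaced
by any smaller constant. -/
theorem uncentered_weak_const_int :
    (∀ f : ℤ → ℝ, Integrable f (Measure.count : Measure ℤ) →
      ∀ l : ℝ≥0∞, l * (Measure.count : Measure ℤ) {x : ℤ | l ≤ maxU shiftZ f x} ≤
        2 * eLpNorm f 1 (Measure.count : Measure ℤ)) ∧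
    weakConst (Measure.count : Measure ℤ) (maxU shiftZ) = 2 := by
  classical
  refine ⟨fun f hf l => weak_main f hf l, ?_⟩
  apply le_antisymm
  · exact sInf_le (fun f hf l => weak_main f hf l)
  · refine le_sInf ?_
    intro C hC
    set f : ℤ → ℝ := fun x => if x = 0 then 1 else 0 with hfdef
    have hint : Integrable f (Measure.count : Measure ℤ) := by
      rw [integrable_count_iff]
      refine summable_of_ne_finset_zero (s := {0}) ?_
      intro x hx
      simp only [Finset.mem_singleton] at hx
      simp [hfdef, hx]
    have heq : eLpNorm f 1 (Measure.count : Measure ℤ) = 1 := by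
      rw [eLpNorm_one_eq_lintegral_enorm, lintegral_count]
      simp only [enorm_eq_nnnorm]
      have hcong : ∀ x : ℤ, (‖f x‖₊ : ℝ≥0∞) = if x = 0 then 1 else 0 := by
        intro x; by_cases h : x = 0 <;> simp [hfdef, h]
      rw [tsum_congr hcong, tsum_ite_eq]
    have hmax : ∀ N : ℕ, ∀ x : ℤ, x ∈ Set.Icc (-(N:ℤ)) N →
        ((N:ℝ≥0∞) + 1)⁻¹ ≤ maxU shiftZ f x := by
      intro N x hx
      simp only [Set.mem_Icc] at hx
      set r : ℕ := x.toNat with hr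
      have hrN : r ≤ N := by omega
      set s : ℕ := N - r with hs
      have hsum : ∑ n ∈ Finset.Icc (-(r:ℤ)) (s:ℤ), f ((shiftZ ^ n) x) = 1 := by
        have h1 : ∀ n ∈ Finset.Icc (-(r:ℤ)) (s:ℤ), f ((shiftZ ^ n) x) = f (x + n) :=
          fun n _ => by rw [shiftZ_zpow]
        rw [Finset.sum_congr rfl h1, sum_shift_Icc f x r s]
        rw [show (f : ℤ → ℝ) = fun m => if m = 0 then (1:ℝ) else 0 from hfdef]
        rw [Finset.sum_ite_eq' (Finset.Icc (x - (r:ℤ)) (x + (s:ℤ))) 0 (fun _ => (1:ℝ))]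
        rw [if_pos]
        simp only [Finset.mem_Icc]
        omega
      have hrs : (r:ℝ) + (s:ℝ) = (N:ℝ) := by
        have : r + s = N := by omega
        exact_mod_cast congrArg (Nat.cast : ℕ → ℝ) this
      have hterm : (‖(∑ n ∈ Finset.Icc (-(r:ℤ)) (s:ℤ), f ((shiftZ ^ n) x)) /
          ((r:ℝ) + (s:ℝ) + 1)‖₊ : ℝ≥0∞) = ((N:ℝ≥0∞) + 1)⁻¹ := by
        rw [hsum, hrs]
        have hpos : (0:ℝ) < (N:ℝ) + 1 := by positivity
        rw [← enorm_eq_nnnorm, Real.enorm_eq_ofReal (by positivity), one_div,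
          ENNReal.ofReal_inv_of_pos hpos]
        congr 1
        rw [ENNReal.ofReal_add (by positivity) (by norm_num), ENNReal.ofReal_natCast,
          ENNReal.ofReal_one]
      calc ((N:ℝ≥0∞) + 1)⁻¹ = _ := hterm.symm
        _ ≤ maxU shiftZ f x := le_iSup_of_le r (le_iSup_of_le s le_rfl)
    have hcount : ∀ N : ℕ, ((2*N+1 : ℕ) : ℝ≥0∞) ≤
        (Measure.count : Measure ℤ) {x : ℤ | ((N:ℝ≥0∞) + 1)⁻¹ ≤ maxU shiftZ f x} := by
      intro N
      have hsub : (↑(Finset.Icc (-(N:ℤ)) N) : Set ℤ) ⊆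
          {x : ℤ | ((N:ℝ≥0∞) + 1)⁻¹ ≤ maxU shiftZ f x} := by
        intro x hx
        refine hmax N x ?_
        simpa [Finset.coe_Icc] using hx
      calc ((2*N+1:ℕ):ℝ≥0∞) = (Measure.count : Measure ℤ) ↑(Finset.Icc (-(N:ℤ)) N) := by
            rw [Measure.count_apply_finset]
            congr 1
            rw [Int.card_Icc]
            omega
        _ ≤ _ := measure_mono hsub
    have hCN : ∀ N : ℕ, ((N:ℝ≥0∞) + 1)⁻¹ * ((2*N+1 : ℕ) : ℝ≥0∞) ≤ C := by
      intro N
      have h := hC f hint (((N:ℝ≥0∞) + 1)⁻¹)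
      rw [heq, mul_one] at h
      exact le_trans (mul_le_mul_right (hcount N) _) h
    refine ENNReal.le_of_forall_pos_le_add ?_
    intro ε hε hCtop
    have hεne : ((ε:ℝ≥0∞))⁻¹ ≠ ∞ := by
      simp [hε.ne']
    obtain ⟨N, hN⟩ := ENNReal.exists_nat_gt hεne
    have hne0 : ((N:ℝ≥0∞) + 1) ≠ 0 :=
      ne_of_gt (lt_of_lt_of_le zero_lt_one le_add_self)
    have hnet : ((N:ℝ≥0∞) + 1) ≠ ∞ := by
      simp [ENNReal.add_eq_top]
    have hNe : ((N:ℝ≥0∞) + 1)⁻¹ ≤ (ε:ℝ≥0∞) := by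
      rw [← inv_inv ((ε:ℝ≥0∞))]
      refine ENNReal.inv_le_inv.mpr ?_
      exact le_trans hN.le (by exact le_self_add)
    have h2 : ((N:ℝ≥0∞) + 1)⁻¹ * ((2*N+1:ℕ):ℝ≥0∞) + ((N:ℝ≥0∞) + 1)⁻¹ = 2 := by
      have hc : ((2*N+1:ℕ):ℝ≥0∞) + 1 = 2 * ((N:ℝ≥0∞) + 1) := by
        push_cast
        ring
      calc ((N:ℝ≥0∞) + 1)⁻¹ * ((2*N+1:ℕ):ℝ≥0∞) + ((N:ℝ≥0∞) + 1)⁻¹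
          = ((N:ℝ≥0∞) + 1)⁻¹ * (((2*N+1:ℕ):ℝ≥0∞) + 1) := by rw [mul_add, mul_one]
        _ = ((N:ℝ≥0∞) + 1)⁻¹ * (2 * ((N:ℝ≥0∞) + 1)) := by rw [hc]
        _ = 2 * (((N:ℝ≥0∞) + 1)⁻¹ * ((N:ℝ≥0∞) + 1)) := by ring
        _ = 2 := by rw [ENNReal.inv_mul_cancel hne0 hnet, mul_one]
    calc (2:ℝ≥0∞) = ((N:ℝ≥0∞) + 1)⁻¹ * ((2*N+1:ℕ):ℝ≥0∞) + ((N:ℝ≥0∞) + 1)⁻¹ := h2.symm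
      _ ≤ C + ε := add_le_add (hCN N) hNe

end
end

section
/- Fix p ∈ (1, ∞). The best constant in the strong type (p,p) inequality for the uncentered maximal operator on the integers equals the best constant in the strong type (p,p) inequality for the uncentered Hardy–Littlewood maximal operator on the real line: C^u(X₁, p) = c_p, where c_p is the smallest constant C such that ‖M_ℝ^u g‖_{L^p(ℝ)} ≤ C‖g‖_{L^p(ℝ)} for all g ∈ L^p(ℝ). -/
open MeasureTheory ENNReal Filter

noncomputable section

variable {X : Type*} [MeasurableSpace X]

/-- The uncentered Hardy–Littlewood maximal operator on `ℝ`: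
`M_ℝ^u g(x) = sup { (1/|I|) ∫_I |g| : I a bounded interval containing x }`. -/
def maxRU (g : ℝ → ℝ) (x : ℝ) : ℝ≥0∞ :=
  ⨆ (a : ℝ) (b : ℝ) (_ : a ≤ x) (_ : x ≤ b) (_ : a < b),
    (∫⁻ y in Set.Ioo a b, (‖g y‖₊ : ℝ≥0∞)) / ENNReal.ofReal (b - a)

/-- The best constant in the strong type (p,p) inequality for the uncentered
Hardy–Littlewood maximal operator on `ℝ`. -/
def strongConstRU (p : ℝ) : ℝ≥0∞ :=
  sInf {C | ∀ g : ℝ → ℝ, MemLp g (ENNReal.ofReal p) (volume : Measure ℝ) →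
    (∫⁻ x, maxRU g x ^ p) ^ (1 / p) ≤ C * eLpNorm g (ENNReal.ofReal p) (volume : Measure ℝ)}

namespace HLAux

open Set

variable {p : ℝ}

lemma shiftZ_zpow (n : ℤ) (x : ℤ) : (shiftZ ^ n) x = x + n := by simp [shiftZ]

lemma maxU_eq (f : ℤ → ℝ) (l : ℤ) :
    maxU shiftZ f l = ⨆ r : ℕ, ⨆ s : ℕ,
      (‖(∑ n ∈ Finset.Icc (-(r : ℤ)) (s : ℤ), f (l + n)) / ((r : ℝ) + (s : ℝ) + 1)‖₊ : ℝ≥0∞) := by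
  unfold maxU; simp only [shiftZ_zpow]

lemma eLpNorm_ofReal_eq {α : Type*} [MeasurableSpace α] (μ : Measure α) (hp : 1 < p) (f : α → ℝ) :
    eLpNorm f (ENNReal.ofReal p) μ = (∫⁻ x, (‖f x‖₊ : ℝ≥0∞) ^ p ∂μ) ^ (1/p) := by
  rw [eLpNorm_eq_lintegral_rpow_enorm_toReal (by simp only [ne_eq, ENNReal.ofReal_eq_zero, not_le]; linarith)
    ENNReal.ofReal_ne_top, ENNReal.toReal_ofReal (by linarith)]
  rfl

lemma ennnorm_div_sum (M : Finset ℤ) (f : ℤ → ℝ) {c : ℝ} (hc : 0 < c) :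
    (‖(∑ n ∈ M, f n) / c‖₊ : ℝ≥0∞) ≤ (∑ n ∈ M, (‖f n‖₊ : ℝ≥0∞)) / ENNReal.ofReal c := by
  rw [nnnorm_div, ENNReal.coe_div (nnnorm_ne_zero_iff.mpr hc.ne'), ← Real.enorm_eq_ofReal hc.le]
  gcongr
  exact le_trans (ENNReal.coe_le_coe.2 (nnnorm_sum_le _ _)) (by rw [ENNReal.coe_finset_sum])
  exact le_rfl

lemma cell_mem_floor {n : ℕ} (hn : 0 < n) {m : ℤ} {y : ℝ}
    (hy : y ∈ Ico ((m : ℝ)/n) (((m : ℝ)+1)/n)) : ⌊(n : ℝ) * y⌋ = m := by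
  have hn' : (0:ℝ) < n := by exact_mod_cast hn
  obtain ⟨h1, h2⟩ := hy
  have h1' : (m:ℝ) ≤ (n:ℝ) * y := by rw [mul_comm]; exact (div_le_iff₀ hn').1 h1
  have h2' : (n:ℝ) * y < (m:ℝ) + 1 := by rw [mul_comm]; exact (lt_div_iff₀ hn').1 h2
  exact Int.floor_eq_iff.2 ⟨h1', h2'⟩

lemma cells_cover {n : ℕ} (hn : 0 < n) : (⋃ m : ℤ, Ico ((m:ℝ)/n) (((m:ℝ)+1)/n)) = univ := by
  have hn' : (0:ℝ) < n := by exact_mod_cast hn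
  ext x
  simp only [mem_iUnion, mem_univ, iff_true, mem_Ico]
  refine ⟨⌊(n:ℝ)*x⌋, ?_, ?_⟩
  · rw [div_le_iff₀ hn', mul_comm]; exact Int.floor_le _
  · rw [lt_div_iff₀ hn', mul_comm]; exact Int.lt_floor_add_one _

lemma cells_disjoint {n : ℕ} (hn : 0 < n) :
    Pairwise (Function.onFun Disjoint fun m : ℤ => Ico ((m:ℝ)/n) (((m:ℝ)+1)/n)) := by
  intro m m' hmm
  rw [Function.onFun, Set.disjoint_left]
  intro y hy hy'
  exact hmm (by rw [← cell_mem_floor hn hy, cell_mem_floor hn hy'])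

lemma lintegral_cell {n : ℕ} (hn : 0 < n) (H : ℤ → ℝ≥0∞) (m : ℤ) :
    ∫⁻ y in Ico ((m:ℝ)/n) (((m:ℝ)+1)/n), H ⌊(n:ℝ)*y⌋ = H m * ENNReal.ofReal (1/n) := by
  have hn' : (0:ℝ) < n := by exact_mod_cast hn
  rw [setLIntegral_congr_fun measurableSet_Ico
    (fun y hy => by rw [cell_mem_floor hn hy] : ∀ y ∈ Ico ((m:ℝ)/n) (((m:ℝ)+1)/n),
      H ⌊(n:ℝ)*y⌋ = (fun _ => H m) y), setLIntegral_const, Real.volume_Ico]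
  congr 2
  field_simp; ring

lemma lintegral_comp_floor {n : ℕ} (hn : 0 < n) (H : ℤ → ℝ≥0∞) :
    ∫⁻ x : ℝ, H ⌊(n:ℝ) * x⌋ = ENNReal.ofReal (1/n) * ∑' m : ℤ, H m := by
  conv_lhs => rw [← setLIntegral_univ, ← cells_cover hn]
  rw [lintegral_iUnion (fun m => measurableSet_Ico) (cells_disjoint hn)]
  simp_rw [lintegral_cell hn]
  rw [ENNReal.tsum_mul_right, mul_comm]

lemma lintegral_Ico_grid {n : ℕ} (hn : 0 < n) (h : ℝ → ℝ≥0∞) (A : ℤ) :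
    ∀ B : ℤ, A ≤ B → ∫⁻ y in Ico ((A:ℝ)/n) ((B:ℝ)/n), h y
      = ∑ m ∈ Finset.Ico A B, ∫⁻ y in Ico ((m:ℝ)/n) (((m:ℝ)+1)/n), h y := by
  have hn' : (0:ℝ) < n := by exact_mod_cast hn
  refine Int.le_induction ?_ ?_
  · simp
  · intro B hAB ih
    have hABr : (A:ℝ)/n ≤ (B:ℝ)/n := by gcongr <;> exact_mod_cast hAB
    have hBB : (B:ℝ)/n ≤ ((B:ℝ)+1)/n := by gcongr <;> linarith
    have hsing : Finset.Ico B (B+1) = {B} := by ext; simp; omega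
    rw [show ((B+1:ℤ):ℝ) = (B:ℝ)+1 by push_cast; ring,
      ← Ico_union_Ico_eq_Ico hABr hBB,
      lintegral_union measurableSet_Ico Ico_disjoint_Ico_same,
      ← Finset.Ico_union_Ico_eq_Ico hAB (by omega : B ≤ B + 1),
      Finset.sum_union (Finset.Ico_disjoint_Ico_consecutive _ _ _), hsing,
      Finset.sum_singleton, ih]

lemma sum_Ico_shift {M : Type*} [AddCommMonoid M] (F : ℤ → M) (l : ℤ) (r s : ℕ) :
    ∑ m ∈ Finset.Ico (l - r) (l + s + 1), F m = ∑ n ∈ Finset.Icc (-(r:ℤ)) (s:ℤ), F (l + n) := by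
  rw [show Finset.Ico (l - r) (l + s + 1) = (Finset.Icc (-(r:ℤ)) (s:ℤ)).map
      ⟨fun n => l + n, fun ⦃a b⦄ h => by exact add_left_cancel h⟩ by
    ext x
    simp only [Finset.mem_map, Finset.mem_Ico, Finset.mem_Icc, Function.Embedding.coeFn_mk]
    constructor
    · rintro ⟨h1, h2⟩; exact ⟨x - l, ⟨by omega, by omega⟩, by show l + (x - l) = x; omega⟩
    · rintro ⟨a, ⟨h1, h2⟩, rfl⟩; show l - r ≤ l + a ∧ l + a < l + s + 1; omega, Finset.sum_map]
  rfl

lemma lintegral_comp_floor1 (H : ℤ → ℝ≥0∞) : ∫⁻ x : ℝ, H ⌊x⌋ = ∑' m : ℤ, H m := by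
  simpa using lintegral_comp_floor (n:=1) one_pos H

lemma lintegral_Ico_int (h : ℝ → ℝ≥0∞) (A B : ℤ) (hAB : A ≤ B) :
    ∫⁻ y in Ico (A:ℝ) (B:ℝ), h y = ∑ m ∈ Finset.Ico A B, ∫⁻ y in Ico ((m:ℝ)) ((m:ℝ)+1), h y := by
  simpa using lintegral_Ico_grid (n:=1) one_pos h A B hAB

lemma lintegral_cell1 (H : ℤ → ℝ≥0∞) (m : ℤ) :
    ∫⁻ y in Ico ((m:ℝ)) ((m:ℝ)+1), H ⌊y⌋ = H m := by
  simpa using lintegral_cell (n:=1) one_pos H m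

lemma dirA (hp : 1 < p) {C : ℝ≥0∞}
    (hC : ∀ g : ℝ → ℝ, MemLp g (ENNReal.ofReal p) (volume : Measure ℝ) →
      (∫⁻ x, maxRU g x ^ p) ^ (1/p) ≤ C * eLpNorm g (ENNReal.ofReal p) (volume : Measure ℝ))
    (f : ℤ → ℝ) (hf : MemLp f (ENNReal.ofReal p) (Measure.count : Measure ℤ)) :
    (∫⁻ x, maxU shiftZ f x ^ p ∂(Measure.count : Measure ℤ)) ^ (1/p)
      ≤ C * eLpNorm f (ENNReal.ofReal p) (Measure.count : Measure ℤ) := by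
  set g : ℝ → ℝ := fun x => f ⌊x⌋ with hgdef
  have hnorm : eLpNorm g (ENNReal.ofReal p) (volume : Measure ℝ)
      = eLpNorm f (ENNReal.ofReal p) (Measure.count : Measure ℤ) := by
    rw [eLpNorm_ofReal_eq _ hp, eLpNorm_ofReal_eq _ hp, lintegral_count]
    congr 1
    exact lintegral_comp_floor1 (fun m => (‖f m‖₊ : ℝ≥0∞) ^ p)
  have hgmem : MemLp g (ENNReal.ofReal p) (volume : Measure ℝ) :=
    ⟨((measurable_of_countable f).comp Int.measurable_floor).aestronglyMeasurable,
      by rw [hnorm]; exact hf.2⟩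
  have hpt : ∀ x : ℝ, maxU shiftZ f ⌊x⌋ ≤ maxRU g x := by
    intro x
    rw [maxU_eq]
    refine iSup_le fun r => iSup_le fun s => ?_
    set l : ℤ := ⌊x⌋ with hl
    have hr0 : (0:ℝ) ≤ r := r.cast_nonneg
    have hs0 : (0:ℝ) ≤ s := s.cast_nonneg
    have hxl : (l:ℝ) ≤ x := Int.floor_le x
    have hxl' : x < (l:ℝ) + 1 := Int.lt_floor_add_one x
    have hab : ((l:ℝ) - r) < ((l:ℝ) + s + 1) := by linarith
    have eb1 : ((l - r : ℤ):ℝ) = (l:ℝ) - r := by push_cast; ring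
    have eb2 : ((l + s + 1 : ℤ):ℝ) = (l:ℝ) + s + 1 := by push_cast; ring
    have hint : (∫⁻ y in Set.Ioo ((l:ℝ) - r) ((l:ℝ) + s + 1), (‖g y‖₊ : ℝ≥0∞))
        = ∑ n ∈ Finset.Icc (-(r:ℤ)) (s:ℤ), (‖f (l + n)‖₊ : ℝ≥0∞) := by
      calc ∫⁻ y in Set.Ioo ((l:ℝ) - r) ((l:ℝ) + s + 1), (‖g y‖₊ : ℝ≥0∞)
          = ∫⁻ y in Set.Ico ((l:ℝ) - r) ((l:ℝ) + s + 1), (‖g y‖₊ : ℝ≥0∞) :=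
            setLIntegral_congr Ioo_ae_eq_Ico
        _ = ∑ m ∈ Finset.Ico (l - r) (l + s + 1),
              ∫⁻ y in Set.Ico ((m:ℝ)) ((m:ℝ)+1), (‖g y‖₊ : ℝ≥0∞) := by
            rw [← eb1, ← eb2]; exact lintegral_Ico_int _ _ _ (by omega)
        _ = ∑ m ∈ Finset.Ico (l - r) (l + s + 1), (‖f m‖₊ : ℝ≥0∞) :=
            Finset.sum_congr rfl fun m _ => lintegral_cell1 (fun j => (‖f j‖₊ : ℝ≥0∞)) m
        _ = ∑ n ∈ Finset.Icc (-(r:ℤ)) (s:ℤ), (‖f (l + n)‖₊ : ℝ≥0∞) :=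
            sum_Ico_shift _ l r s
    have step : (‖(∑ n ∈ Finset.Icc (-(r:ℤ)) (s:ℤ), f (l + n)) / ((r:ℝ) + (s:ℝ) + 1)‖₊ : ℝ≥0∞)
        ≤ (∫⁻ y in Set.Ioo ((l:ℝ) - r) ((l:ℝ) + s + 1), (‖g y‖₊ : ℝ≥0∞))
            / ENNReal.ofReal (((l:ℝ) + s + 1) - ((l:ℝ) - r)) := by
      rw [hint, show ((l:ℝ) + s + 1) - ((l:ℝ) - r) = (r:ℝ) + (s:ℝ) + 1 by ring]
      exact ennnorm_div_sum (Finset.Icc (-(r:ℤ)) (s:ℤ)) (fun n => f (l + n)) (by positivity)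
    refine le_trans step ?_
    unfold maxRU
    refine le_iSup_of_le ((l:ℝ) - r) (le_iSup_of_le ((l:ℝ) + s + 1) ?_)
    rw [iSup_pos (by linarith : (l:ℝ) - r ≤ x), iSup_pos (by linarith : x ≤ (l:ℝ) + s + 1),
      iSup_pos hab]
  have hp0 : (0:ℝ) ≤ p := by linarith
  calc (∫⁻ x, maxU shiftZ f x ^ p ∂(Measure.count : Measure ℤ)) ^ (1/p)
      = (∫⁻ x : ℝ, (maxU shiftZ f ⌊x⌋) ^ p) ^ (1/p) := by
        rw [lintegral_count, ← lintegral_comp_floor1 (fun m => maxU shiftZ f m ^ p)]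
    _ ≤ (∫⁻ x : ℝ, maxRU g x ^ p) ^ (1/p) :=
        ENNReal.rpow_le_rpow (lintegral_mono fun x => ENNReal.rpow_le_rpow (hpt x) hp0)
          (by positivity)
    _ ≤ C * eLpNorm g (ENNReal.ofReal p) (volume : Measure ℝ) := hC g hgmem
    _ = C * eLpNorm f (ENNReal.ofReal p) (Measure.count : Measure ℤ) := by rw [hnorm]

lemma div_le_mul_div (c : ℝ≥0∞) {u v w : ℝ} (hu : 0 < u) (hv : 0 < v) (hw : 0 < w)
    (h : u ≤ w * v) : c / ENNReal.ofReal v ≤ ENNReal.ofReal w * (c / ENNReal.ofReal u) := by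
  rw [div_eq_mul_inv, div_eq_mul_inv, ← mul_assoc, mul_comm (ENNReal.ofReal w) c, mul_assoc]
  refine mul_le_mul_right ?_ c
  calc (ENNReal.ofReal v)⁻¹
      ≤ (ENNReal.ofReal (u/w))⁻¹ :=
        ENNReal.inv_le_inv.2 (ENNReal.ofReal_le_ofReal ((div_le_iff₀ hw).2 (mul_comm w v ▸ h)))
    _ = (ENNReal.ofReal u / ENNReal.ofReal w)⁻¹ := by rw [ENNReal.ofReal_div_of_pos hw]
    _ = ENNReal.ofReal w / ENNReal.ofReal u :=
        ENNReal.inv_div (Or.inl ENNReal.ofReal_ne_top) (Or.inl (by simp [hw]))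
    _ = ENNReal.ofReal w * (ENNReal.ofReal u)⁻¹ := div_eq_mul_inv _ _

lemma le_iSup_div (c : ℝ≥0∞) {t : ℝ} (ht : 0 < t) :
    c / ENNReal.ofReal t ≤ ⨆ m : ℕ, c / ENNReal.ofReal (t + 2/((m:ℝ)+1)) := by
  simp_rw [div_eq_mul_inv]
  rw [← ENNReal.mul_iSup]
  refine mul_le_mul_right ?_ c
  rw [← ENNReal.inv_iInf]
  refine ENNReal.inv_le_inv.2 ?_
  refine ENNReal.le_of_forall_pos_le_add fun ε hε _ => ?_
  obtain ⟨m, hm⟩ := exists_nat_one_div_lt (show (0:ℝ) < (ε:ℝ)/2 by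
    have : (0:ℝ) < ε := hε
    linarith)
  refine iInf_le_of_le m ?_
  rw [ENNReal.ofReal_add ht.le (by positivity)]
  refine add_le_add_right ?_ _
  calc ENNReal.ofReal (2/((m:ℝ)+1)) ≤ ENNReal.ofReal ((ε:ℝ)) :=
        ENNReal.ofReal_le_ofReal (by
          have h2 : 2/((m:ℝ)+1) = 2*(1/((m:ℝ)+1)) := by ring
          linarith)
    _ = (ε : ℝ≥0∞) := ENNReal.ofReal_coe_nnreal

lemma iSup_rpow {ι : Sort*} [Nonempty ι] {q : ℝ} (hq : 0 < q) (f : ι → ℝ≥0∞) :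
    (⨆ i, f i) ^ q = ⨆ i, f i ^ q := by
  refine le_antisymm ?_ (iSup_le fun i => ENNReal.rpow_le_rpow (le_iSup f i) hq.le)
  have h1 : (⨆ i, f i) ≤ (⨆ i, f i ^ q) ^ (1/q) := by
    refine iSup_le fun i => ?_
    have h2 : f i = (f i ^ q) ^ (1/q) := by
      rw [← ENNReal.rpow_mul, mul_one_div_cancel hq.ne', ENNReal.rpow_one]
    rw [h2]
    exact ENNReal.rpow_le_rpow (le_iSup (fun i => f i ^ q) i) (by positivity)
  calc (⨆ i, f i) ^ q ≤ ((⨆ i, f i ^ q) ^ (1/q)) ^ q := ENNReal.rpow_le_rpow h1 hq.le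
    _ = ⨆ i, f i ^ q := by rw [← ENNReal.rpow_mul, one_div_mul_cancel hq.ne', ENNReal.rpow_one]

lemma le_of_le_ofReal_mul {a D : ℝ≥0∞} (hD : D ≠ ∞) (c : ℕ → ℝ)
    (hc : Filter.Tendsto c atTop (nhds 1)) (h : ∀ n, a ≤ ENNReal.ofReal (c n) * D) : a ≤ D := by
  have h1 : Filter.Tendsto (fun n => ENNReal.ofReal (c n) * D) atTop
      (nhds (ENNReal.ofReal 1 * D)) :=
    ENNReal.Tendsto.mul_const (ENNReal.tendsto_ofReal hc) (Or.inr hD)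
  rw [ENNReal.ofReal_one, one_mul] at h1
  exact ge_of_tendsto' h1 h

def ratAvg (g : ℝ → ℝ) (a b : ℚ) : ℝ≥0∞ :=
  (∫⁻ y in Set.Ioo (a:ℝ) (b:ℝ), (‖g y‖₊ : ℝ≥0∞)) / ENNReal.ofReal ((b:ℝ) - (a:ℝ))

def maxT (g : ℝ → ℝ) (k : ℕ) (x : ℝ) : ℝ≥0∞ :=
  ⨆ (a : ℚ) (b : ℚ) (_ : (a:ℝ) ≤ x) (_ : x ≤ (b:ℝ)) (_ : 1/((k:ℝ)+1) ≤ (b:ℝ) - (a:ℝ)),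
    ratAvg g a b

lemma maxT_measurable (g : ℝ → ℝ) (k : ℕ) : Measurable (maxT g k) := by
  have h : maxT g k = fun x => ⨆ (a : ℚ) (b : ℚ),
      (Set.Icc (a:ℝ) (b:ℝ)).indicator
        (fun _ => ⨆ (_ : 1/((k:ℝ)+1) ≤ (b:ℝ) - (a:ℝ)), ratAvg g a b) x := by
    funext x
    unfold maxT
    congr 1; funext a; congr 1; funext b
    by_cases h1 : (a:ℝ) ≤ x
    · by_cases h2 : x ≤ (b:ℝ)
      · rw [iSup_pos h1, iSup_pos h2, Set.indicator_of_mem (Set.mem_Icc.2 ⟨h1, h2⟩)]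
      · rw [iSup_pos h1, iSup_neg h2, Set.indicator_of_notMem (by simp [Set.mem_Icc, h2])]
        exact ENNReal.bot_eq_zero
    · rw [iSup_neg h1, Set.indicator_of_notMem (by simp [Set.mem_Icc, h1])]
      exact ENNReal.bot_eq_zero
  rw [h]
  exact Measurable.iSup fun a => Measurable.iSup fun b =>
    Measurable.indicator measurable_const measurableSet_Icc

lemma maxT_mono (g : ℝ → ℝ) {k k' : ℕ} (hk : k ≤ k') (x : ℝ) : maxT g k x ≤ maxT g k' x := by
  refine iSup_le fun a => iSup_le fun b => iSup_le fun h1 => iSup_le fun h2 => iSup_le fun h3 => ?_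
  refine le_iSup_of_le a (le_iSup_of_le b ?_)
  rw [iSup_pos h1, iSup_pos h2, iSup_pos (le_trans ?_ h3)]
  exact one_div_le_one_div_of_le (by positivity) (by have := (Nat.cast_le (α:=ℝ)).2 hk; linarith)

lemma maxRU_eq_iSup_maxT (g : ℝ → ℝ) (x : ℝ) : maxRU g x = ⨆ k : ℕ, maxT g k x := by
  refine le_antisymm ?_ (iSup_le fun k => ?_)
  · unfold maxRU
    refine iSup_le fun a => iSup_le fun b => iSup_le fun ha => iSup_le fun hb =>
      iSup_le fun hab => ?_
    have ht : 0 < b - a := sub_pos.2 hab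
    obtain ⟨k, hk⟩ := exists_nat_one_div_lt ht
    refine le_trans (le_iSup_div _ ht) (le_trans (iSup_le fun m => ?_) (le_iSup _ k))
    have hm0 : (0:ℝ) < 1/((m:ℝ)+1) := by positivity
    obtain ⟨qa, hqa1, hqa2⟩ := exists_rat_btwn (show a - 1/((m:ℝ)+1) < a by linarith)
    obtain ⟨qb, hqb1, hqb2⟩ := exists_rat_btwn (show b < b + 1/((m:ℝ)+1) by linarith)
    have hsub : Set.Ioo a b ⊆ Set.Ioo (qa:ℝ) (qb:ℝ) := Set.Ioo_subset_Ioo hqa2.le hqb1.le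
    have hd : (qb:ℝ) - qa ≤ (b - a) + 2/((m:ℝ)+1) := by
      have h2 : 2/((m:ℝ)+1) = 1/((m:ℝ)+1) + 1/((m:ℝ)+1) := by ring
      linarith
    have step : (∫⁻ y in Set.Ioo a b, (‖g y‖₊ : ℝ≥0∞)) / ENNReal.ofReal ((b-a) + 2/((m:ℝ)+1))
        ≤ ratAvg g qa qb :=
      ENNReal.div_le_div (lintegral_mono_set hsub) (ENNReal.ofReal_le_ofReal hd)
    refine le_trans step ?_
    refine le_iSup_of_le qa (le_iSup_of_le qb ?_)
    rw [iSup_pos (le_trans hqa2.le ha), iSup_pos (le_trans hb hqb1.le),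
      iSup_pos (by linarith : 1/((k:ℝ)+1) ≤ (qb:ℝ) - qa)]
  · refine iSup_le fun a => iSup_le fun b => iSup_le fun h1 => iSup_le fun h2 =>
      iSup_le fun h3 => ?_
    have hab : (a:ℝ) < b := by
      have hm0 : (0:ℝ) < 1/((k:ℝ)+1) := by positivity
      linarith
    unfold maxRU ratAvg
    refine le_iSup_of_le ((a:ℝ)) (le_iSup_of_le ((b:ℝ)) ?_)
    rw [iSup_pos h1, iSup_pos h2, iSup_pos hab]

lemma holder_cell (hp : 1 < p) {s : Set ℝ} {g : ℝ → ℝ}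
    (hm : AEMeasurable (fun y => (‖g y‖₊ : ℝ≥0∞)) ((volume : Measure ℝ).restrict s)) :
    (∫⁻ y in s, (‖g y‖₊ : ℝ≥0∞)) ^ p
      ≤ (∫⁻ y in s, (‖g y‖₊ : ℝ≥0∞) ^ p) * (volume s) ^ (p - 1) := by
  have hp0 : (0:ℝ) < p := by linarith
  have hpq : p.HolderConjugate (Real.conjExponent p) := Real.HolderConjugate.conjExponent hp
  have key := ENNReal.lintegral_mul_le_Lp_mul_Lq ((volume : Measure ℝ).restrict s) hpq hm
    (aemeasurable_const (b := (1:ℝ≥0∞)))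
  simp only [Pi.mul_apply, mul_one, ENNReal.one_rpow, lintegral_const,
    Measure.restrict_apply_univ, one_mul] at key
  have hexp : (1/Real.conjExponent p) * p = p - 1 := by
    rw [Real.conjExponent, one_div_div]
    field_simp
  calc (∫⁻ y in s, (‖g y‖₊ : ℝ≥0∞)) ^ p
      ≤ ((∫⁻ y in s, (‖g y‖₊ : ℝ≥0∞) ^ p) ^ (1/p) * (volume s) ^ (1/Real.conjExponent p)) ^ p :=
        ENNReal.rpow_le_rpow key hp0.le
    _ = (∫⁻ y in s, (‖g y‖₊ : ℝ≥0∞) ^ p) * (volume s) ^ (p - 1) := by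
        rw [ENNReal.mul_rpow_of_nonneg _ _ hp0.le, ← ENNReal.rpow_mul, ← ENNReal.rpow_mul,
          one_div_mul_cancel hp0.ne', ENNReal.rpow_one, hexp]

lemma div_div_aux (S : ℝ≥0∞) {c d : ℝ} (hc : 0 < c) (hd : 0 < d) :
    S / ENNReal.ofReal (c / d) = ENNReal.ofReal d * (S / ENNReal.ofReal c) := by
  rw [ENNReal.ofReal_div_of_pos hd, div_eq_mul_inv S,
    ENNReal.inv_div (Or.inl ENNReal.ofReal_ne_top) (Or.inl (by simp [hd])),
    div_eq_mul_inv, div_eq_mul_inv]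
  ring

lemma grid_bound (hp : 1 < p) {C : ℝ≥0∞}
    (hC : ∀ f : ℤ → ℝ, MemLp f (ENNReal.ofReal p) (Measure.count : Measure ℤ) →
      (∫⁻ x, maxU shiftZ f x ^ p ∂(Measure.count : Measure ℤ)) ^ (1/p)
        ≤ C * eLpNorm f (ENNReal.ofReal p) (Measure.count : Measure ℤ))
    {g : ℝ → ℝ} (hg : MemLp g (ENNReal.ofReal p) (volume : Measure ℝ))
    (k : ℕ) {N : ℕ} (hN : 0 < N) :
    ∫⁻ x, maxT g k x ^ p
      ≤ ENNReal.ofReal ((1 + 2*((k:ℝ)+1)/N) ^ p) * (C ^ p * ∫⁻ x, (‖g x‖₊ : ℝ≥0∞) ^ p) := by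
  have hp0 : (0:ℝ) < p := by linarith
  have hN' : (0:ℝ) < N := by exact_mod_cast hN
  set K := ∫⁻ x, (‖g x‖₊ : ℝ≥0∞) ^ p with hKdef
  set F : ℤ → ℝ≥0∞ := fun m => ∫⁻ y in Ico ((m:ℝ)/N) (((m:ℝ)+1)/N), (‖g y‖₊ : ℝ≥0∞) with hFdef
  have hmeas : ∀ m : ℤ, AEMeasurable (fun y => (‖g y‖₊ : ℝ≥0∞))
      ((volume : Measure ℝ).restrict (Ico ((m:ℝ)/N) (((m:ℝ)+1)/N))) :=
    fun m => hg.1.enorm.restrict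
  have hcellvol : ∀ m : ℤ, volume (Ico ((m:ℝ)/N) (((m:ℝ)+1)/N)) = ENNReal.ofReal (1/(N:ℝ)) := by
    intro m; rw [Real.volume_Ico]; congr 1; field_simp; ring
  have hFp : ∀ m : ℤ, F m ^ p ≤ (∫⁻ y in Ico ((m:ℝ)/N) (((m:ℝ)+1)/N), (‖g y‖₊:ℝ≥0∞) ^ p)
      * ENNReal.ofReal (1/(N:ℝ)) ^ (p-1) := by
    intro m
    simpa [hcellvol m] using holder_cell hp (hmeas m)
  have hsumcell : ∑' m : ℤ, (∫⁻ y in Ico ((m:ℝ)/N) (((m:ℝ)+1)/N), (‖g y‖₊:ℝ≥0∞) ^ p) = K := by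
    rw [hKdef]
    conv_rhs => rw [← setLIntegral_univ, ← cells_cover hN,
      lintegral_iUnion (fun m => measurableSet_Ico) (cells_disjoint hN)]
  have hFsum : ∑' m : ℤ, F m ^ p ≤ ENNReal.ofReal (1/(N:ℝ)) ^ (p-1) * K := by
    calc ∑' m : ℤ, F m ^ p
        ≤ ∑' m : ℤ, (∫⁻ y in Ico ((m:ℝ)/N) (((m:ℝ)+1)/N), (‖g y‖₊:ℝ≥0∞) ^ p)
          * ENNReal.ofReal (1/(N:ℝ)) ^ (p-1) := ENNReal.tsum_le_tsum hFp
      _ = _ := by rw [ENNReal.tsum_mul_right, hsumcell, mul_comm]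
  have hKfin : K ≠ ∞ := by
    intro hcon
    have h1 := hg.2
    rw [eLpNorm_ofReal_eq _ hp, ← hKdef, hcon, ENNReal.top_rpow_of_pos (by positivity)] at h1
    exact lt_irrefl _ h1
  have hFfin : ∀ m : ℤ, F m ≠ ∞ := by
    intro m hcon
    have h1 := hFp m
    rw [hcon, ENNReal.top_rpow_of_pos hp0] at h1
    have hle : (∫⁻ y in Ico ((m:ℝ)/N) (((m:ℝ)+1)/N), (‖g y‖₊:ℝ≥0∞) ^ p) ≤ K := by
      rw [hKdef]; exact setLIntegral_le_lintegral _ _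
    have hfin : (∫⁻ y in Ico ((m:ℝ)/N) (((m:ℝ)+1)/N), (‖g y‖₊:ℝ≥0∞) ^ p)
        * ENNReal.ofReal (1/(N:ℝ)) ^ (p-1) ≠ ⊤ :=
      ENNReal.mul_ne_top (ne_top_of_le_ne_top hKfin hle)
        (ENNReal.rpow_ne_top_of_nonneg (by linarith) ENNReal.ofReal_ne_top)
    exact hfin (top_le_iff.1 h1)
  set f : ℤ → ℝ := fun m => (F m).toReal with hfdef
  have hfF : ∀ m : ℤ, (‖f m‖₊ : ℝ≥0∞) = F m := fun m => by
    rw [hfdef, ← enorm_eq_nnnorm, Real.enorm_eq_ofReal ENNReal.toReal_nonneg, ENNReal.ofReal_toReal (hFfin m)]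
  have hmemf : MemLp f (ENNReal.ofReal p) (Measure.count : Measure ℤ) := by
    refine ⟨(measurable_of_countable f).aestronglyMeasurable, ?_⟩
    rw [eLpNorm_ofReal_eq _ hp, lintegral_count]
    simp_rw [hfF]
    refine ENNReal.rpow_lt_top_of_nonneg (by positivity) ?_
    exact ne_top_of_le_ne_top (ENNReal.mul_ne_top
      (ENNReal.rpow_ne_top_of_nonneg (by linarith) ENNReal.ofReal_ne_top) hKfin) hFsum
  have hmaxUf : ∀ l : ℤ, maxU shiftZ f l = ⨆ r : ℕ, ⨆ s : ℕ,
      (∑ j ∈ Finset.Icc (-(r:ℤ)) (s:ℤ), F (l + j)) / ENNReal.ofReal ((r:ℝ) + (s:ℝ) + 1) := by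
    intro l
    rw [maxU_eq]
    congr 1; funext r; congr 1; funext s
    have hc : (0:ℝ) < (r:ℝ) + (s:ℝ) + 1 := by positivity
    have hsum0 : 0 ≤ ∑ j ∈ Finset.Icc (-(r:ℤ)) (s:ℤ), f (l + j) :=
      Finset.sum_nonneg fun j _ => ENNReal.toReal_nonneg
    rw [← enorm_eq_nnnorm, Real.enorm_eq_ofReal (div_nonneg hsum0 hc.le), ENNReal.ofReal_div_of_pos hc,
      ENNReal.ofReal_sum_of_nonneg (fun j _ => ENNReal.toReal_nonneg)]
    congr 1
    exact Finset.sum_congr rfl fun j _ => ENNReal.ofReal_toReal (hFfin _)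
  have hpt : ∀ x : ℝ, maxT g k x ≤ ENNReal.ofReal (1 + 2*((k:ℝ)+1)/N)
      * ((N:ℝ≥0∞) * maxU shiftZ f ⌊(N:ℝ)*x⌋) := by
    intro x
    refine iSup_le fun a => iSup_le fun b => iSup_le fun ha => iSup_le fun hb =>
      iSup_le fun hd => ?_
    set l : ℤ := ⌊(N:ℝ)*x⌋ with hl
    have hdpos : (0:ℝ) < 1/((k:ℝ)+1) := by positivity
    have hab : (a:ℝ) < b := by linarith
    set A : ℤ := ⌊(N:ℝ)*(a:ℝ)⌋ with hA
    set B : ℤ := ⌊(N:ℝ)*(b:ℝ)⌋ + 1 with hB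
    have hAl : A ≤ l := Int.floor_le_floor (mul_le_mul_of_nonneg_left ha hN'.le)
    have hlB : l ≤ ⌊(N:ℝ)*(b:ℝ)⌋ := Int.floor_le_floor (mul_le_mul_of_nonneg_left hb hN'.le)
    obtain ⟨r, hr⟩ : ∃ r : ℕ, A = l - (r:ℤ) := ⟨(l - A).toNat, by omega⟩
    obtain ⟨s, hs⟩ : ∃ s : ℕ, B = l + (s:ℤ) + 1 := ⟨(B - 1 - l).toNat, by omega⟩
    have hAa : (A:ℝ)/N ≤ (a:ℝ) := by
      rw [div_le_iff₀ hN', hA]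
      have h1 := Int.floor_le ((N:ℝ)*(a:ℝ))
      linarith
    have hbB : (b:ℝ) < (B:ℝ)/N := by
      rw [lt_div_iff₀ hN']
      have h1 := Int.lt_floor_add_one ((N:ℝ)*(b:ℝ))
      have h2 : (B:ℝ) = (⌊(N:ℝ)*(b:ℝ)⌋ : ℝ) + 1 := by rw [hB]; push_cast; ring
      linarith
    have hsub : Set.Ioo (a:ℝ) (b:ℝ) ⊆ Ico ((A:ℝ)/N) ((B:ℝ)/N) :=
      fun y hy => ⟨hAa.trans hy.1.le, hy.2.trans hbB⟩
    have hintle : (∫⁻ y in Set.Ioo (a:ℝ) (b:ℝ), (‖g y‖₊:ℝ≥0∞))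
        ≤ ∑ j ∈ Finset.Icc (-(r:ℤ)) (s:ℤ), F (l + j) := by
      calc (∫⁻ y in Set.Ioo (a:ℝ) (b:ℝ), (‖g y‖₊:ℝ≥0∞))
          ≤ ∫⁻ y in Ico ((A:ℝ)/N) ((B:ℝ)/N), (‖g y‖₊:ℝ≥0∞) := lintegral_mono_set hsub
        _ = ∑ m ∈ Finset.Ico A B, F m := lintegral_Ico_grid hN _ A B (by omega)
        _ = ∑ j ∈ Finset.Icc (-(r:ℤ)) (s:ℤ), F (l + j) := by
            rw [hr, hs]; exact sum_Ico_shift F l r s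
    have hBA : (B:ℝ) - A ≤ N*((b:ℝ)-a) + 2 := by
      have h1 : (N:ℝ)*(a:ℝ) - 1 < A := by rw [hA]; exact Int.sub_one_lt_floor _
      have h2 : (B:ℝ) ≤ (N:ℝ)*(b:ℝ) + 1 := by
        rw [hB]; push_cast
        have := Int.floor_le ((N:ℝ)*(b:ℝ))
        linarith
      linarith
    have hrs : (r:ℝ) + (s:ℝ) + 1 = (B:ℝ) - A := by
      have h1 : (B - A : ℤ) = (r:ℤ) + s + 1 := by omega
      have h2 := congrArg (Int.cast : ℤ → ℝ) h1
      push_cast at h2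
      linarith
    have hk1 : 1 ≤ ((k:ℝ)+1)*((b:ℝ)-a) := by
      calc (1:ℝ) = ((k:ℝ)+1) * (1/((k:ℝ)+1)) := by field_simp
        _ ≤ ((k:ℝ)+1)*((b:ℝ)-a) := by
            exact mul_le_mul_of_nonneg_left hd (by positivity)
    have harith : ((r:ℝ) + (s:ℝ) + 1)/N ≤ (1 + 2*((k:ℝ)+1)/N) * ((b:ℝ) - a) := by
      rw [hrs, div_le_iff₀ hN']
      have expand : (1 + 2*((k:ℝ)+1)/N) * ((b:ℝ)-a) * N
          = N*((b:ℝ)-a) + 2*(((k:ℝ)+1)*((b:ℝ)-a)) := by field_simp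
      rw [expand]
      linarith
    have hu : (0:ℝ) < ((r:ℝ) + (s:ℝ) + 1)/N := by positivity
    have hw : (0:ℝ) < 1 + 2*((k:ℝ)+1)/N := by positivity
    calc ratAvg g a b
        ≤ (∑ j ∈ Finset.Icc (-(r:ℤ)) (s:ℤ), F (l + j)) / ENNReal.ofReal ((b:ℝ) - a) :=
          ENNReal.div_le_div hintle (le_refl _)
      _ ≤ ENNReal.ofReal (1 + 2*((k:ℝ)+1)/N) *
            ((∑ j ∈ Finset.Icc (-(r:ℤ)) (s:ℤ), F (l + j))
              / ENNReal.ofReal (((r:ℝ) + (s:ℝ) + 1)/N)) :=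
          div_le_mul_div _ hu (by linarith) hw harith
      _ = ENNReal.ofReal (1 + 2*((k:ℝ)+1)/N) * ((N:ℝ≥0∞) *
            ((∑ j ∈ Finset.Icc (-(r:ℤ)) (s:ℤ), F (l + j))
              / ENNReal.ofReal ((r:ℝ) + (s:ℝ) + 1))) := by
          rw [div_div_aux _ (by positivity) hN', ENNReal.ofReal_natCast]
      _ ≤ ENNReal.ofReal (1 + 2*((k:ℝ)+1)/N) * ((N:ℝ≥0∞) * maxU shiftZ f l) := by
          gcongr
          rw [hmaxUf l]
          exact le_iSup_of_le r (le_iSup_of_le s (le_refl _))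
  have hint2 : ∫⁻ x, maxU shiftZ f ⌊(N:ℝ)*x⌋ ^ p
      = ENNReal.ofReal (1/(N:ℝ)) * ∑' m : ℤ, maxU shiftZ f m ^ p :=
    lintegral_comp_floor hN (fun m => maxU shiftZ f m ^ p)
  have hstrong : ∑' m : ℤ, maxU shiftZ f m ^ p ≤ C ^ p * ∑' m : ℤ, (‖f m‖₊ : ℝ≥0∞) ^ p := by
    have h1 := hC f hmemf
    rw [eLpNorm_ofReal_eq _ hp, lintegral_count, lintegral_count] at h1
    have h2 := ENNReal.rpow_le_rpow h1 hp0.le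
    rw [← ENNReal.rpow_mul, one_div_mul_cancel hp0.ne', ENNReal.rpow_one,
      ENNReal.mul_rpow_of_nonneg _ _ hp0.le, ← ENNReal.rpow_mul,
      one_div_mul_cancel hp0.ne', ENNReal.rpow_one] at h2
    exact h2
  have hffF : ∑' m : ℤ, (‖f m‖₊ : ℝ≥0∞) ^ p ≤ ENNReal.ofReal (1/(N:ℝ)) ^ (p-1) * K := by
    simp_rw [hfF]; exact hFsum
  have hconstfin : ENNReal.ofReal (1 + 2*((k:ℝ)+1)/N) ^ p * (N:ℝ≥0∞) ^ p ≠ ∞ :=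
    ENNReal.mul_ne_top (ENNReal.rpow_ne_top_of_nonneg hp0.le ENNReal.ofReal_ne_top)
      (ENNReal.rpow_ne_top_of_nonneg hp0.le (ENNReal.natCast_ne_top N))
  have hNinv : (N:ℝ≥0∞) ^ p * (ENNReal.ofReal (1/(N:ℝ)) * ENNReal.ofReal (1/(N:ℝ)) ^ (p-1))
      = 1 := by
    have h0 := ENNReal.rpow_add (x := ENNReal.ofReal (1/(N:ℝ))) 1 (p-1)
      ((ENNReal.ofReal_pos.mpr (by positivity)).ne') ENNReal.ofReal_ne_top
    rw [show (1:ℝ) + (p-1) = p by ring, ENNReal.rpow_one] at h0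
    have h1 : ENNReal.ofReal (1/(N:ℝ)) * ENNReal.ofReal (1/(N:ℝ)) ^ (p-1)
        = ENNReal.ofReal (1/(N:ℝ)) ^ p := h0.symm
    rw [h1, ← ENNReal.mul_rpow_of_nonneg _ _ hp0.le, ← ENNReal.ofReal_natCast N,
      ← ENNReal.ofReal_mul (by positivity)]
    rw [show (N:ℝ) * (1/(N:ℝ)) = 1 by field_simp, ENNReal.ofReal_one, ENNReal.one_rpow]
  calc ∫⁻ x, maxT g k x ^ p
      ≤ ∫⁻ x, (ENNReal.ofReal (1 + 2*((k:ℝ)+1)/N) ^ p * (N:ℝ≥0∞) ^ p)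
          * maxU shiftZ f ⌊(N:ℝ)*x⌋ ^ p := by
        refine lintegral_mono fun x => ?_
        have h1 := ENNReal.rpow_le_rpow (hpt x) hp0.le
        rw [ENNReal.mul_rpow_of_nonneg _ _ hp0.le, ENNReal.mul_rpow_of_nonneg _ _ hp0.le,
          ← mul_assoc] at h1
        exact h1
    _ = (ENNReal.ofReal (1 + 2*((k:ℝ)+1)/N) ^ p * (N:ℝ≥0∞) ^ p)
          * (ENNReal.ofReal (1/(N:ℝ)) * ∑' m : ℤ, maxU shiftZ f m ^ p) := by
        rw [lintegral_const_mul' _ _ hconstfin, hint2]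
    _ ≤ (ENNReal.ofReal (1 + 2*((k:ℝ)+1)/N) ^ p * (N:ℝ≥0∞) ^ p)
          * (ENNReal.ofReal (1/(N:ℝ)) * (C ^ p * (ENNReal.ofReal (1/(N:ℝ)) ^ (p-1) * K))) := by
        gcongr
        exact le_trans hstrong (mul_le_mul_right hffF _)
    _ = (ENNReal.ofReal (1 + 2*((k:ℝ)+1)/N) ^ p * (C ^ p * K))
          * ((N:ℝ≥0∞) ^ p * (ENNReal.ofReal (1/(N:ℝ)) * ENNReal.ofReal (1/(N:ℝ)) ^ (p-1))) := by
        ring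
    _ = ENNReal.ofReal ((1 + 2*((k:ℝ)+1)/N) ^ p) * (C ^ p * K) := by
        rw [hNinv, mul_one, ENNReal.ofReal_rpow_of_pos (by positivity)]

lemma dirB (hp : 1 < p) {C : ℝ≥0∞}
    (hC : ∀ f : ℤ → ℝ, MemLp f (ENNReal.ofReal p) (Measure.count : Measure ℤ) →
      (∫⁻ x, maxU shiftZ f x ^ p ∂(Measure.count : Measure ℤ)) ^ (1/p)
        ≤ C * eLpNorm f (ENNReal.ofReal p) (Measure.count : Measure ℤ))
    (g : ℝ → ℝ) (hg : MemLp g (ENNReal.ofReal p) (volume : Measure ℝ)) :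
    (∫⁻ x, maxRU g x ^ p) ^ (1/p) ≤ C * eLpNorm g (ENNReal.ofReal p) (volume : Measure ℝ) := by
  have hp0 : (0:ℝ) < p := by linarith
  set K := ∫⁻ x, (‖g x‖₊ : ℝ≥0∞) ^ p with hKdef
  have hKeq : eLpNorm g (ENNReal.ofReal p) (volume : Measure ℝ) = K ^ (1/p) :=
    eLpNorm_ofReal_eq _ hp g
  have hmain : ∫⁻ x, maxRU g x ^ p ≤ C ^ p * K := by
    rw [lintegral_congr fun x => by rw [maxRU_eq_iSup_maxT, iSup_rpow hp0],
      lintegral_iSup (fun k => (maxT_measurable g k).pow measurable_const)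
        (fun k k' hkk' x => ENNReal.rpow_le_rpow (maxT_mono g hkk' x) hp0.le)]
    refine iSup_le fun k => ?_
    by_cases hD : C ^ p * K = ∞
    · rw [hD]; exact le_top
    refine le_of_le_ofReal_mul hD (fun n => (1 + 2*((k:ℝ)+1)/((n:ℝ)+1)) ^ p) ?_ (fun n => ?_)
    · have h2 := tendsto_one_div_add_atTop_nhds_zero_nat (𝕜 := ℝ)
      have h3 := h2.const_mul (2*((k:ℝ)+1))
      have h4 := h3.const_add 1
      have h1 : Filter.Tendsto (fun n : ℕ => 1 + 2*((k:ℝ)+1)/((n:ℝ)+1)) atTop (nhds 1) := by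
        simpa [div_eq_mul_inv] using h4
      have h5 : Filter.Tendsto (fun y : ℝ => y ^ p) (nhds 1) (nhds 1) := by
        have h6 := (Real.continuousAt_rpow_const 1 p (Or.inl one_ne_zero)).tendsto
        simpa [Real.one_rpow] using h6
      exact h5.comp h1
    · have h7 := grid_bound hp hC hg k (Nat.succ_pos n)
      rw [Nat.cast_succ] at h7
      exact h7
  calc (∫⁻ x, maxRU g x ^ p) ^ (1/p)
      ≤ (C ^ p * K) ^ (1/p) := ENNReal.rpow_le_rpow hmain (by positivity)
    _ = C * K ^ (1/p) := by
        rw [ENNReal.mul_rpow_of_nonneg _ _ (by positivity), ← ENNReal.rpow_mul,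
          mul_one_div_cancel hp0.ne', ENNReal.rpow_one]
    _ = C * eLpNorm g (ENNReal.ofReal p) (volume : Measure ℝ) := by rw [hKeq]

end HLAux


/-- For `p ∈ (1,∞)`, the best constant in the strong type (p,p) inequality for the uncentered
maximal operator on the integers equals the best constant in the strong type (p,p) inequality
for the uncentered Hardy–Littlewood maximal operator on the real line. -/
theorem uncentered_strong_const_int_eq_real (p : ℝ) (hp : 1 < p) :
    strongConst (Measure.count : Measure ℤ) (maxU shiftZ) p = strongConstRU p := by
  unfold strongConst strongConstRU
  congr 1
  ext C
  simp only [Set.mem_setOf_eq]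
  constructor
  · intro h g hg
    exact HLAux.dirB hp h g hg
  · intro h f hf
    exact HLAux.dirA hp h f hf

end
end

section
/- Let f : ℤ → [0,∞) and define its step extension f_cont : ℝ → [0,∞) by f_cont(x) := f(l) for x ∈ [l, l+1), l ∈ ℤ. Then for every l ∈ ℤ and every x ∈ [l, l+1) one has M_ℝ^u f_cont(x) ≥ M^u f(l), where M_ℝ^u is the uncentered Hardy–Littlewood maximal operator on ℝ and M^u is the discrete uncentered maximal operator. Consequently, for p ∈ (1,∞), if f ∈ ℓ^p(ℤ) is not identically zero then ‖M^u f‖_{ℓ^p(ℤ)} / ‖f‖_{ℓ^p(ℤ)} ≤ ‖M_ℝ^u f_cont‖_{L^p(ℝ)} / ‖f_cont‖_{L^p(ℝ)}. -/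
open MeasureTheory ENNReal Filter

noncomputable section

variable {X : Type*} [MeasurableSpace X]

lemma shiftZ_zpow_apply (n l : ℤ) : ((shiftZ : Equiv.Perm ℤ) ^ n) l = l + n := by
  unfold shiftZ
  induction n using Int.induction_on with
  | zero => simp
  | succ k ih => rw [zpow_add, zpow_one]; simp [ih]; ring
  | pred k ih => rw [zpow_sub, zpow_one]; simp [ih]; ring

/-- For a nonnegative `f : ℤ → [0,∞)` with step extension `f_cont(x) = f(⌊x⌋)`:
pointwise domination `M^u f(l) ≤ M_ℝ^u f_cont(x)` for `x ∈ [l, l+1)`, and consequently for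
`p ∈ (1,∞)` and `f ∈ ℓ^p(ℤ)` nonzero,
`‖M^u f‖_{ℓ^p} / ‖f‖_{ℓ^p} ≤ ‖M_ℝ^u f_cont‖_{L^p} / ‖f_cont‖_{L^p}`. -/
theorem discrete_dominated_by_continuous (f : ℤ → ℝ) (hf : ∀ l, 0 ≤ f l)
    (fcont : ℝ → ℝ) (hfcont : ∀ x : ℝ, fcont x = f ⌊x⌋) :
    (∀ (l : ℤ) (x : ℝ), (l : ℝ) ≤ x → x < (l : ℝ) + 1 → maxU shiftZ f l ≤ maxRU fcont x) ∧
    ∀ p : ℝ, 1 < p → f ≠ 0 → MemLp f (ENNReal.ofReal p) (Measure.count : Measure ℤ) →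
      (∫⁻ l, maxU shiftZ f l ^ p ∂(Measure.count : Measure ℤ)) ^ (1 / p) /
          eLpNorm f (ENNReal.ofReal p) (Measure.count : Measure ℤ) ≤
        (∫⁻ x, maxRU fcont x ^ p) ^ (1 / p) /
          eLpNorm fcont (ENNReal.ofReal p) (volume : Measure ℝ) := by
  have hfloor : ∀ m : ℤ, ∀ y ∈ Set.Ico (m : ℝ) ((m : ℝ) + 1), fcont y = f m := by
    intro m y hy
    rw [hfcont]
    congr 1
    exact Int.floor_eq_iff.mpr ⟨hy.1, by simpa using hy.2⟩
  have hpiece : ∀ m : ℤ,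
      ∫⁻ y in Set.Ico (m : ℝ) ((m : ℝ) + 1), (‖fcont y‖₊ : ℝ≥0∞) = ENNReal.ofReal (f m) := by
    intro m
    have h : ∀ᵐ y ∂(volume : Measure ℝ), y ∈ Set.Ico (m : ℝ) ((m : ℝ) + 1) →
        (‖fcont y‖₊ : ℝ≥0∞) = ENNReal.ofReal (f m) :=
      ae_of_all _ fun y hy => by rw [hfloor m y hy]; exact Real.enorm_eq_ofReal (hf m)
    rw [setLIntegral_congr_fun_ae measurableSet_Ico h, setLIntegral_const, Real.volume_Ico]
    simp
  have part1 : ∀ (l : ℤ) (x : ℝ), (l : ℝ) ≤ x → x < (l : ℝ) + 1 →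
      maxU shiftZ f l ≤ maxRU fcont x := by
    intro l x hx1 hx2
    simp only [maxU]
    refine iSup_le fun r => iSup_le fun s => ?_
    set S : ℝ := ∑ n ∈ Finset.Icc (-(r : ℤ)) (s : ℤ), f ((shiftZ ^ n) l) with hS
    have hSeq : S = ∑ n ∈ Finset.Icc (-(r : ℤ)) (s : ℤ), f (l + n) :=
      Finset.sum_congr rfl fun n _ => by rw [shiftZ_zpow_apply]
    have hS0 : 0 ≤ S := Finset.sum_nonneg fun n _ => hf _
    have hr0 : (0 : ℝ) ≤ (r : ℝ) := Nat.cast_nonneg r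
    have hs0 : (0 : ℝ) ≤ (s : ℝ) := Nat.cast_nonneg s
    have hk : (0 : ℝ) < (r : ℝ) + (s : ℝ) + 1 := by linarith
    have hIineq : ENNReal.ofReal S ≤
        ∫⁻ y in Set.Ioo ((l : ℝ) - r) ((l : ℝ) + s + 1), (‖fcont y‖₊ : ℝ≥0∞) := by
      rw [setLIntegral_congr (Ioo_ae_eq_Ico)]
      have hdisj : (↑(Finset.Icc (-(r : ℤ)) (s : ℤ)) : Set ℤ).PairwiseDisjoint
          (fun n : ℤ => Set.Ico ((l + n : ℤ) : ℝ) (((l + n : ℤ) : ℝ) + 1)) := by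
        intro m _ n _ hmn
        simp only [Function.onFun]
        rw [Set.Ico_disjoint_Ico]
        rcases hmn.lt_or_gt with h | h
        · have h' : ((l + m : ℤ) : ℝ) + 1 ≤ ((l + n : ℤ) : ℝ) := by exact_mod_cast by omega
          exact le_trans (min_le_left _ _) (le_trans h' (le_max_right _ _))
        · have h' : ((l + n : ℤ) : ℝ) + 1 ≤ ((l + m : ℤ) : ℝ) := by exact_mod_cast by omega
          exact le_trans (min_le_right _ _) (le_trans h' (le_max_left _ _))
      calc ENNReal.ofReal S
          = ∑ n ∈ Finset.Icc (-(r : ℤ)) (s : ℤ), ENNReal.ofReal (f (l + n)) := by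
            rw [hSeq, ENNReal.ofReal_sum_of_nonneg (fun n _ => hf _)]
        _ = ∑ n ∈ Finset.Icc (-(r : ℤ)) (s : ℤ),
              ∫⁻ y in Set.Ico ((l + n : ℤ) : ℝ) (((l + n : ℤ) : ℝ) + 1), (‖fcont y‖₊ : ℝ≥0∞) :=
            Finset.sum_congr rfl fun n _ => (hpiece (l + n)).symm
        _ = ∫⁻ y in ⋃ n ∈ Finset.Icc (-(r : ℤ)) (s : ℤ),
              Set.Ico ((l + n : ℤ) : ℝ) (((l + n : ℤ) : ℝ) + 1), (‖fcont y‖₊ : ℝ≥0∞) :=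
            (lintegral_biUnion_finset hdisj (fun n _ => measurableSet_Ico) _).symm
        _ ≤ ∫⁻ y in Set.Ico ((l : ℝ) - r) ((l : ℝ) + s + 1), (‖fcont y‖₊ : ℝ≥0∞) := by
            refine lintegral_mono_set ?_
            intro y hy
            simp only [Set.mem_iUnion, Finset.mem_Icc, Set.mem_Ico] at hy ⊢
            obtain ⟨n, ⟨hn1, hn2⟩, hy1, hy2⟩ := hy
            have hn1' : -(r : ℝ) ≤ (n : ℝ) := by exact_mod_cast hn1
            have hn2' : (n : ℝ) ≤ (s : ℝ) := by exact_mod_cast hn2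
            push_cast at hy1 hy2
            constructor <;> linarith
    have hfin : (‖S / ((r : ℝ) + (s : ℝ) + 1)‖₊ : ℝ≥0∞) ≤
        (∫⁻ y in Set.Ioo ((l : ℝ) - r) ((l : ℝ) + s + 1), (‖fcont y‖₊ : ℝ≥0∞)) /
          ENNReal.ofReal (((l : ℝ) + s + 1) - ((l : ℝ) - r)) := by
      have hba : ((l : ℝ) + s + 1) - ((l : ℝ) - r) = (r : ℝ) + (s : ℝ) + 1 := by ring
      rw [hba, show (‖S / ((r : ℝ) + (s : ℝ) + 1)‖₊ : ℝ≥0∞) = ENNReal.ofReal (S / ((r : ℝ) + (s : ℝ) + 1)) from Real.enorm_eq_ofReal (div_nonneg hS0 hk.le), ENNReal.ofReal_div_of_pos hk]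
      exact ENNReal.div_le_div_right hIineq _
    refine le_trans hfin ?_
    simp only [maxRU]
    exact le_iSup_of_le ((l : ℝ) - r) (le_iSup_of_le ((l : ℝ) + s + 1)
      (le_iSup_of_le (by linarith) (le_iSup_of_le (by linarith)
        (le_iSup_of_le (by linarith) le_rfl))))
  refine ⟨part1, fun p hp _ _ => ?_⟩
  have hp0 : (0 : ℝ) < p := lt_trans one_pos hp
  have hq0 : ENNReal.ofReal p ≠ 0 := by
    simp only [ne_eq, ENNReal.ofReal_eq_zero, not_le]; linarith
  have hqt : ENNReal.ofReal p ≠ ∞ := ENNReal.ofReal_ne_top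
  have htr : (ENNReal.ofReal p).toReal = p := ENNReal.toReal_ofReal hp0.le
  have hmeasI : ∀ l : ℤ, MeasurableSet (Set.Ico (l : ℝ) ((l : ℝ) + 1)) :=
    fun _ => measurableSet_Ico
  have hdisjI : Pairwise (Function.onFun Disjoint fun l : ℤ => Set.Ico (l : ℝ) ((l : ℝ) + 1)) := by
    intro m n hmn
    simp only [Function.onFun]
    rw [Set.Ico_disjoint_Ico]
    rcases hmn.lt_or_gt with h | h
    · have h' : (m : ℝ) + 1 ≤ (n : ℝ) := by exact_mod_cast by omega
      exact le_trans (min_le_left _ _) (le_trans h' (le_max_right _ _))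
    · have h' : (n : ℝ) + 1 ≤ (m : ℝ) := by exact_mod_cast by omega
      exact le_trans (min_le_right _ _) (le_trans h' (le_max_left _ _))
  have hunion : (⋃ l : ℤ, Set.Ico (l : ℝ) ((l : ℝ) + 1)) = Set.univ := by
    ext y
    simp only [Set.mem_iUnion, Set.mem_Ico, Set.mem_univ, iff_true]
    exact ⟨⌊y⌋, Int.floor_le y, Int.lt_floor_add_one y⟩
  have hnum : (∫⁻ l, maxU shiftZ f l ^ p ∂(Measure.count : Measure ℤ)) ≤
      ∫⁻ x, maxRU fcont x ^ p := by
    rw [lintegral_count]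
    calc ∑' l : ℤ, maxU shiftZ f l ^ p
        ≤ ∑' l : ℤ, ∫⁻ x in Set.Ico (l : ℝ) ((l : ℝ) + 1), maxRU fcont x ^ p := by
          refine ENNReal.tsum_le_tsum fun l => ?_
          have hc : maxU shiftZ f l ^ p =
              ∫⁻ _ in Set.Ico (l : ℝ) ((l : ℝ) + 1), maxU shiftZ f l ^ p := by
            rw [setLIntegral_const, Real.volume_Ico]; simp
          rw [hc]
          exact setLIntegral_mono' measurableSet_Ico fun x hx =>
            ENNReal.rpow_le_rpow (part1 l x hx.1 hx.2) hp0.le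
      _ = ∫⁻ x in ⋃ l : ℤ, Set.Ico (l : ℝ) ((l : ℝ) + 1), maxRU fcont x ^ p :=
          (lintegral_iUnion hmeasI hdisjI _).symm
      _ ≤ ∫⁻ x, maxRU fcont x ^ p := setLIntegral_le_lintegral _ _
  have hden : eLpNorm f (ENNReal.ofReal p) (Measure.count : Measure ℤ) =
      eLpNorm fcont (ENNReal.ofReal p) (volume : Measure ℝ) := by
    rw [eLpNorm_eq_lintegral_rpow_enorm_toReal hq0 hqt, eLpNorm_eq_lintegral_rpow_enorm_toReal hq0 hqt, htr]
    congr 1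
    rw [lintegral_count, ← setLIntegral_univ, ← hunion, lintegral_iUnion hmeasI hdisjI]
    refine tsum_congr fun l => ?_
    have h : ∀ᵐ y ∂(volume : Measure ℝ), y ∈ Set.Ico (l : ℝ) ((l : ℝ) + 1) →
        ‖fcont y‖ₑ ^ p = ‖f l‖ₑ ^ p :=
      ae_of_all _ fun y hy => by rw [hfloor l y hy]
    rw [setLIntegral_congr_fun_ae measurableSet_Ico h, setLIntegral_const, Real.volume_Ico]
    simp
  rw [hden]
  exact ENNReal.div_le_div_right (ENNReal.rpow_le_rpow hnum (by positivity)) _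

end
end

section
/- Let X be a nontrivial σ-finite ergodic system satisfying the Rokhlin condition: for each L ∈ ℕ there exists a measurable set E_L with μ(E_L) ∈ (0,∞) such that the sets T^{−l}(E_L), l = 1, …, L, are pairwise disjoint. Then the best constant in the weak type (1,1) inequality for the uncentered ergodic maximal operator on X equals 2: C^u(X, 1) = 2. -/
open MeasureTheory ENNReal Filter

noncomputable section

variable {X : Type*} [MeasurableSpace X]

section AuxProof

open scoped NNReal

theorem mp_symm (μ : Measure X) (T : Equiv.Perm X)
    (hT : MeasurePreserving (⇑T) μ μ) (hTs : Measurable (⇑T.symm)) :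
    MeasurePreserving (⇑T.symm) μ μ := by
  refine ⟨hTs, Measure.ext fun S hS => ?_⟩
  rw [Measure.map_apply hTs hS]
  have h1 : (⇑T) ⁻¹' ((⇑T.symm) ⁻¹' S) = S := by
    ext x; simp
  calc μ (⇑T.symm ⁻¹' S) = μ ((⇑T) ⁻¹' ((⇑T.symm) ⁻¹' S)) := by
        rw [hT.measure_preimage (hTs hS).nullMeasurableSet]
    _ = μ S := by rw [h1]

theorem mp_zpow (μ : Measure X) (T : Equiv.Perm X)
    (hT : MeasurePreserving (⇑T) μ μ) (hTs : Measurable (⇑T.symm)) :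
    ∀ n : ℤ, MeasurePreserving (⇑(T ^ n)) μ μ := by
  intro n
  induction n using Int.induction_on with
  | zero => simpa using MeasurePreserving.id μ
  | succ k ih =>
      have : (T ^ ((k : ℤ) + 1)) = T ^ (k : ℤ) * T := by rw [zpow_add_one]
      rw [this]
      have : ⇑(T ^ (k : ℤ) * T) = ⇑(T ^ (k : ℤ)) ∘ ⇑T := rfl
      rw [this]
      exact ih.comp hT
  | pred k ih =>
      have : (T ^ (-(k : ℤ) - 1)) = T ^ (-(k : ℤ)) * T⁻¹ := by rw [zpow_sub_one]
      rw [this]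
      have h2 : ⇑(T ^ (-(k : ℤ)) * T⁻¹) = ⇑(T ^ (-(k : ℤ))) ∘ ⇑(T.symm) := rfl
      rw [h2]
      exact ih.comp (mp_symm μ T hT hTs)

theorem overlap_le_two (p q : ℤ → ℤ) (J : Finset ℤ)
    (hpriv : ∀ j ∈ J, ∃ m ∈ Finset.Icc (p j) (q j),
      m ∉ (J.erase j).biUnion (fun i => Finset.Icc (p i) (q i)))
    (n : ℤ) : (J.filter (fun j => n ∈ Finset.Icc (p j) (q j))).card ≤ 2 := by
  by_contra h
  push_neg at h
  set F := J.filter (fun j => n ∈ Finset.Icc (p j) (q j)) with hF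
  have hFne : F.Nonempty := Finset.card_pos.mp (by omega)
  obtain ⟨jp, hjpF, hjp⟩ := F.exists_min_image p hFne
  obtain ⟨jq, hjqF, hjq⟩ := F.exists_max_image q hFne
  have hcard : 1 ≤ ((F.erase jp).erase jq).card := by
    have h1 := Finset.card_erase_le (a := jq) (s := F.erase jp)
    have h2 : F.card - 1 ≤ (F.erase jp).card := Finset.pred_card_le_card_erase
    have h3 : (F.erase jp).card - 1 ≤ ((F.erase jp).erase jq).card :=
      Finset.pred_card_le_card_erase
    omega
  obtain ⟨j3, hj3⟩ := Finset.card_pos.mp (by omega : 0 < ((F.erase jp).erase jq).card)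
  have hj3q : j3 ≠ jq := (Finset.mem_erase.mp hj3).1
  have hj3' := (Finset.mem_erase.mp hj3).2
  have hj3p : j3 ≠ jp := (Finset.mem_erase.mp hj3').1
  have hj3F : j3 ∈ F := (Finset.mem_erase.mp hj3').2
  have hj3J : j3 ∈ J := (Finset.mem_filter.mp hj3F).1
  have hnj3 : n ∈ Finset.Icc (p j3) (q j3) := (Finset.mem_filter.mp hj3F).2
  have hnjp : n ∈ Finset.Icc (p jp) (q jp) := (Finset.mem_filter.mp hjpF).2
  have hnjq : n ∈ Finset.Icc (p jq) (q jq) := (Finset.mem_filter.mp hjqF).2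
  obtain ⟨m, hm, hmpriv⟩ := hpriv j3 hj3J
  apply hmpriv
  rw [Finset.mem_biUnion]
  simp only [Finset.mem_Icc] at hm hnj3 hnjp hnjq
  rcases le_or_gt m n with hmn | hmn
  · exact ⟨jp, Finset.mem_erase.mpr ⟨hj3p.symm, (Finset.mem_filter.mp hjpF).1⟩,
      Finset.mem_Icc.mpr ⟨le_trans (hjp j3 hj3F) hm.1, le_trans hmn hnjp.2⟩⟩
  · exact ⟨jq, Finset.mem_erase.mpr ⟨hj3q.symm, (Finset.mem_filter.mp hjqF).1⟩,
      Finset.mem_Icc.mpr ⟨le_trans hnjq.1 hmn.le, le_trans hm.2 (hjq j3 hj3F)⟩⟩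

theorem covering_aux (a : ℤ → ℝ≥0∞) (lam : ℝ≥0∞) :
    ∀ N : ℕ, ∀ (J : Finset ℤ) (p q : ℤ → ℤ), J.card ≤ N →
    (∀ j ∈ J, lam * (Finset.Icc (p j) (q j)).card ≤ ∑ n ∈ Finset.Icc (p j) (q j), a n) →
    lam * (J.biUnion (fun j => Finset.Icc (p j) (q j))).card ≤
      2 * ∑ n ∈ J.biUnion (fun j => Finset.Icc (p j) (q j)), a n := by
  intro N
  induction N with
  | zero =>
      intro J p q hcard havg
      have : J = ∅ := Finset.card_eq_zero.mp (Nat.le_zero.mp hcard)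
      simp [this]
  | succ N ih =>
      intro J p q hcard havg
      by_cases hpriv : ∀ j ∈ J, ∃ m ∈ Finset.Icc (p j) (q j),
          m ∉ (J.erase j).biUnion (fun i => Finset.Icc (p i) (q i))
      · -- bounded overlap case
        set U := J.biUnion (fun j => Finset.Icc (p j) (q j)) with hU
        have hsub : ∀ j ∈ J, Finset.Icc (p j) (q j) ⊆ U := fun j hj =>
          by rw [hU]; exact Finset.subset_biUnion_of_mem (fun j => Finset.Icc (p j) (q j)) hj
        have key : ∑ j ∈ J, ∑ n ∈ Finset.Icc (p j) (q j), a n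
            = ∑ n ∈ U, (J.filter (fun j => n ∈ Finset.Icc (p j) (q j))).card * a n := by
          have h1 : ∀ j ∈ J, ∑ n ∈ Finset.Icc (p j) (q j), a n
              = ∑ n ∈ U, if n ∈ Finset.Icc (p j) (q j) then a n else 0 := by
            intro j hj
            rw [Finset.sum_ite_mem]
            congr 1
            rw [Finset.inter_eq_right.mpr (hsub j hj)]
          rw [Finset.sum_congr rfl h1, Finset.sum_comm]
          refine Finset.sum_congr rfl fun n hn => ?_
          rw [Finset.sum_ite, Finset.sum_const_zero, add_zero, Finset.sum_const,
            nsmul_eq_mul]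
        have hover := overlap_le_two p q J hpriv
        calc lam * U.card ≤ lam * ∑ j ∈ J, ((Finset.Icc (p j) (q j)).card : ℝ≥0∞) := by
              gcongr
              exact_mod_cast Nat.cast_le.mpr (Finset.card_biUnion_le)
          _ = ∑ j ∈ J, lam * (Finset.Icc (p j) (q j)).card := Finset.mul_sum _ _ _
          _ ≤ ∑ j ∈ J, ∑ n ∈ Finset.Icc (p j) (q j), a n := Finset.sum_le_sum havg
          _ = ∑ n ∈ U, (J.filter (fun j => n ∈ Finset.Icc (p j) (q j))).card * a n := key
          _ ≤ ∑ n ∈ U, 2 * a n := by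
              refine Finset.sum_le_sum fun n hn => ?_
              gcongr
              exact_mod_cast Nat.cast_le.mpr (hover n)
          _ = 2 * ∑ n ∈ U, a n := (Finset.mul_sum _ _ _).symm
      · -- some interval is redundant
        push_neg at hpriv
        obtain ⟨j0, hj0, hred⟩ := hpriv
        have hUeq : J.biUnion (fun j => Finset.Icc (p j) (q j))
            = (J.erase j0).biUnion (fun j => Finset.Icc (p j) (q j)) := by
          apply Finset.Subset.antisymm
          · intro n hn
            rw [Finset.mem_biUnion] at hn
            obtain ⟨j, hj, hnj⟩ := hn
            by_cases hjj : j = j0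
            · exact hred n (hjj ▸ hnj)
            · exact Finset.mem_biUnion.mpr ⟨j, Finset.mem_erase.mpr ⟨hjj, hj⟩, hnj⟩
          · exact Finset.biUnion_subset_biUnion_of_subset_left _ (Finset.erase_subset _ _)
        rw [hUeq]
        refine ih (J.erase j0) p q ?_ fun j hj => havg j (Finset.mem_of_mem_erase hj)
        have := Finset.card_erase_of_mem hj0
        omega

theorem covering (a : ℤ → ℝ≥0∞) (lam : ℝ≥0∞) (J : Finset ℤ) (p q : ℤ → ℤ)
    (havg : ∀ j ∈ J, lam * (Finset.Icc (p j) (q j)).card ≤ ∑ n ∈ Finset.Icc (p j) (q j), a n) :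
    lam * (J.biUnion (fun j => Finset.Icc (p j) (q j))).card ≤
      2 * ∑ n ∈ J.biUnion (fun j => Finset.Icc (p j) (q j)), a n :=
  covering_aux a lam J.card J p q le_rfl havg

theorem covering' (a : ℤ → ℝ≥0∞) (lam : ℝ≥0∞) (J : Finset ℤ) (lo hi : ℤ)
    (h : ∀ j ∈ J, ∃ pq : ℤ × ℤ, pq.1 ≤ j ∧ j ≤ pq.2 ∧ lo ≤ pq.1 ∧ pq.2 ≤ hi ∧
        lam * (Finset.Icc pq.1 pq.2).card ≤ ∑ n ∈ Finset.Icc pq.1 pq.2, a n) :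
    lam * J.card ≤ 2 * ∑ n ∈ Finset.Icc lo hi, a n := by
  choose! pq h1 h2 h3 h4 h5 using h
  set p : ℤ → ℤ := fun j => (pq j).1
  set q : ℤ → ℤ := fun j => (pq j).2
  have hsub : J ⊆ J.biUnion (fun j => Finset.Icc (p j) (q j)) := by
    intro j hj
    exact Finset.mem_biUnion.mpr ⟨j, hj, Finset.mem_Icc.mpr ⟨h1 j hj, h2 j hj⟩⟩
  have hsub2 : J.biUnion (fun j => Finset.Icc (p j) (q j)) ⊆ Finset.Icc lo hi := by
    intro n hn
    obtain ⟨j, hj, hnj⟩ := Finset.mem_biUnion.mp hn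
    rw [Finset.mem_Icc] at hnj ⊢
    exact ⟨le_trans (h3 j hj) hnj.1, le_trans hnj.2 (h4 j hj)⟩
  calc lam * J.card ≤ lam * (J.biUnion (fun j => Finset.Icc (p j) (q j))).card :=
        mul_le_mul_right (Nat.cast_le.mpr (Finset.card_le_card hsub)) lam
    _ ≤ 2 * ∑ n ∈ J.biUnion (fun j => Finset.Icc (p j) (q j)), a n := covering a lam J p q h5
    _ ≤ 2 * ∑ n ∈ Finset.Icc lo hi, a n :=
        mul_le_mul_right (Finset.sum_le_sum_of_subset hsub2) 2

theorem step_avg (T : Equiv.Perm X) (f : X → ℝ) (x : X) (lam : ℝ≥0∞)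
    (j : ℤ) (r s : ℕ)
    (h : lam ≤ (‖(∑ n ∈ Finset.Icc (-(r : ℤ)) (s : ℤ), f ((T ^ n) ((T ^ j) x))) /
      ((r : ℝ) + (s : ℝ) + 1)‖₊ : ℝ≥0∞)) :
    lam * (Finset.Icc (j - (r : ℤ)) (j + (s : ℤ))).card ≤
      ∑ n ∈ Finset.Icc (j - (r : ℤ)) (j + (s : ℤ)), (‖f ((T ^ n) x)‖₊ : ℝ≥0∞) := by
  have hcard : (Finset.Icc (j - (r : ℤ)) (j + (s : ℤ))).card = r + s + 1 := by
    rw [Int.card_Icc]; omega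
  -- rewrite the orbit points
  have horb : ∀ n : ℤ, (T ^ n) ((T ^ j) x) = (T ^ (n + j)) x := by
    intro n
    rw [zpow_add]
    rfl
  -- reindex sum
  have hre : ∑ n ∈ Finset.Icc (-(r : ℤ)) (s : ℤ), f ((T ^ n) ((T ^ j) x))
      = ∑ n ∈ Finset.Icc (j - (r : ℤ)) (j + (s : ℤ)), f ((T ^ n) x) := by
    rw [show Finset.Icc (j - (r : ℤ)) (j + (s : ℤ))
        = (Finset.Icc (-(r : ℤ)) (s : ℤ)).map (addRightEmbedding j) by
      rw [Finset.map_add_right_Icc]; congr 1 <;> omega]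
    rw [Finset.sum_map]
    exact Finset.sum_congr rfl fun n _ => by rw [addRightEmbedding_apply, horb]
  rw [hre] at h
  set u : ℝ := ∑ n ∈ Finset.Icc (j - (r : ℤ)) (j + (s : ℤ)), f ((T ^ n) x) with hu
  have hc : ((r : ℝ) + (s : ℝ) + 1) = ((r + s + 1 : ℕ) : ℝ) := by push_cast; ring
  have hnn : ‖u / ((r : ℝ) + (s : ℝ) + 1)‖₊ = ‖u‖₊ / (r + s + 1 : ℕ) := by
    rw [nnnorm_div, hc, Real.nnnorm_natCast]
  rw [hnn] at h
  have hne : ((r + s + 1 : ℕ) : ℝ≥0) ≠ 0 := Nat.cast_ne_zero.mpr (by omega)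
  have h2 : lam ≤ (‖u‖₊ : ℝ≥0∞) / (((r + s + 1 : ℕ) : ℝ≥0) : ℝ≥0∞) := by
    rw [← ENNReal.coe_div hne]
    exact h
  have hb0 : (((r + s + 1 : ℕ) : ℝ≥0) : ℝ≥0∞) ≠ 0 := by exact_mod_cast hne
  have h3 : lam * (((r + s + 1 : ℕ) : ℝ≥0) : ℝ≥0∞) ≤ (‖u‖₊ : ℝ≥0∞) :=
    (ENNReal.le_div_iff_mul_le (Or.inl hb0) (Or.inl ENNReal.coe_ne_top)).mp h2
  have h4 : (‖u‖₊ : ℝ≥0∞) ≤ ∑ n ∈ Finset.Icc (j - (r : ℤ)) (j + (s : ℤ)),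
      (‖f ((T ^ n) x)‖₊ : ℝ≥0∞) := by
    rw [← ENNReal.coe_finset_sum]
    exact_mod_cast nnnorm_sum_le _ _
  calc lam * (Finset.Icc (j - (r : ℤ)) (j + (s : ℤ))).card
      = lam * (((r + s + 1 : ℕ) : ℝ≥0) : ℝ≥0∞) := by rw [hcard]; norm_cast
    _ ≤ _ := le_trans h3 h4

def Elam (T : Equiv.Perm X) (g : X → ℝ) (c : ℝ≥0∞) (K : ℕ) : Set X :=
  ⋃ (r : ℕ) (_ : r ≤ K) (s : ℕ) (_ : s ≤ K),
    {x | c ≤ (‖(∑ n ∈ Finset.Icc (-(r : ℤ)) (s : ℤ), g ((T ^ n) x)) /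
      ((r : ℝ) + (s : ℝ) + 1)‖₊ : ℝ≥0∞)}

open scoped Classical in
theorem step_pointwise (T : Equiv.Perm X) (g : X → ℝ) (c : ℝ≥0∞) (K N : ℕ) (x : X) :
    c * ((Finset.Icc (0 : ℤ) (N : ℤ)).filter (fun j => (T ^ j) x ∈ Elam T g c K)).card ≤
      2 * ∑ n ∈ Finset.Icc (-(K : ℤ)) ((N : ℤ) + (K : ℤ)), (‖g ((T ^ n) x)‖₊ : ℝ≥0∞) := by
  refine covering' _ c _ _ _ fun j hj => ?_
  rw [Finset.mem_filter, Finset.mem_Icc] at hj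
  obtain ⟨⟨hj0, hjN⟩, hjE⟩ := hj
  simp only [Elam, Set.mem_iUnion] at hjE
  obtain ⟨r, hr, s, hs, hmem⟩ := hjE
  refine ⟨(j - (r : ℤ), j + (s : ℤ)), by omega, by omega, by omega, by omega, ?_⟩
  exact step_avg T g x c j r s hmem

theorem elam_measurable (T : Equiv.Perm X) (hTm : ∀ n : ℤ, Measurable (⇑(T ^ n)))
    (g : X → ℝ) (hg : Measurable g) (c : ℝ≥0∞) (K : ℕ) :
    MeasurableSet (Elam T g c K) := by
  refine MeasurableSet.iUnion fun r => MeasurableSet.iUnion fun _ =>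
    MeasurableSet.iUnion fun s => MeasurableSet.iUnion fun _ => ?_
  have h1 : Measurable fun x => ∑ n ∈ Finset.Icc (-(r : ℤ)) (s : ℤ), g ((T ^ n) x) :=
    Finset.measurable_sum _ fun n _ => hg.comp (hTm n)
  exact measurableSet_le measurable_const
    ((h1.div_const _).nnnorm.coe_nnreal_ennreal)

open scoped Classical in
theorem step_integrate (μ : Measure X) (T : Equiv.Perm X)
    (hT : MeasurePreserving (⇑T) μ μ) (hTs : Measurable (⇑T.symm))
    (g : X → ℝ) (hg : Measurable g) (c : ℝ≥0∞) (K N : ℕ) :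
    c * ((N : ℝ≥0∞) + 1) * μ (Elam T g c K) ≤
      2 * ((N : ℝ≥0∞) + 2 * (K : ℝ≥0∞) + 1) * ∫⁻ x, (‖g x‖₊ : ℝ≥0∞) ∂μ := by
  have mz := mp_zpow μ T hT hTs
  have hTm : ∀ n : ℤ, Measurable (⇑(T ^ n)) := fun n => (mz n).measurable
  have hE : MeasurableSet (Elam T g c K) := elam_measurable T hTm g hg c K
  set E := Elam T g c K
  have hgm : ∀ n : ℤ, Measurable fun x => (‖g ((T ^ n) x)‖₊ : ℝ≥0∞) :=
    fun n => ((hg.comp (hTm n)).nnnorm).coe_nnreal_ennreal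
  -- LHS computation
  have hcard : ∀ x : X,
      (((Finset.Icc (0 : ℤ) (N : ℤ)).filter (fun j => (T ^ j) x ∈ E)).card : ℝ≥0∞)
        = ∑ j ∈ Finset.Icc (0 : ℤ) (N : ℤ),
            E.indicator (fun _ => (1 : ℝ≥0∞)) ((T ^ j) x) := by
    intro x
    rw [Finset.card_filter, Nat.cast_sum]
    refine Finset.sum_congr rfl fun j _ => ?_
    by_cases h : (T ^ j) x ∈ E <;> simp [h, Set.indicator_apply]
  have hindm : ∀ j : ℤ, Measurable fun x => E.indicator (fun _ => (1 : ℝ≥0∞)) ((T ^ j) x) :=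
    fun j => (measurable_const.indicator hE).comp (hTm j)
  have key : ∫⁻ x, c * ∑ j ∈ Finset.Icc (0 : ℤ) (N : ℤ),
      E.indicator (fun _ => (1 : ℝ≥0∞)) ((T ^ j) x) ∂μ = c * ((N : ℝ≥0∞) + 1) * μ E := by
    rw [lintegral_const_mul c (Finset.measurable_sum _ fun j _ => hindm j),
      lintegral_finset_sum _ fun j _ => hindm j]
    have h1 : ∀ j ∈ Finset.Icc (0 : ℤ) (N : ℤ),
        ∫⁻ x, E.indicator (fun _ => (1 : ℝ≥0∞)) ((T ^ j) x) ∂μ = μ E := by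
      intro j _
      rw [(mz j).lintegral_comp (measurable_const.indicator hE),
        lintegral_indicator_const hE, one_mul]
    rw [Finset.sum_congr rfl h1, Finset.sum_const, nsmul_eq_mul]
    have h2' : (Finset.Icc (0 : ℤ) (N : ℤ)).card = N + 1 := by
      rw [Int.card_Icc]; omega
    have h2 : ((Finset.Icc (0 : ℤ) (N : ℤ)).card : ℝ≥0∞) = (N : ℝ≥0∞) + 1 := by
      rw [h2']; push_cast; ring
    rw [h2, mul_assoc]
  have hL : ∫⁻ x, c *
      (((Finset.Icc (0 : ℤ) (N : ℤ)).filter (fun j => (T ^ j) x ∈ E)).card : ℝ≥0∞) ∂μ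
      = c * ((N : ℝ≥0∞) + 1) * μ E := by
    rw [← key]
    exact lintegral_congr fun x => by rw [hcard x]
  -- RHS computation
  have hR : ∫⁻ x, 2 * ∑ n ∈ Finset.Icc (-(K : ℤ)) ((N : ℤ) + (K : ℤ)),
        (‖g ((T ^ n) x)‖₊ : ℝ≥0∞) ∂μ
      = 2 * ((N : ℝ≥0∞) + 2 * (K : ℝ≥0∞) + 1) * ∫⁻ x, (‖g x‖₊ : ℝ≥0∞) ∂μ := by
    calc ∫⁻ x, 2 * ∑ n ∈ Finset.Icc (-(K : ℤ)) ((N : ℤ) + (K : ℤ)),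
          (‖g ((T ^ n) x)‖₊ : ℝ≥0∞) ∂μ
        = 2 * ∑ n ∈ Finset.Icc (-(K : ℤ)) ((N : ℤ) + (K : ℤ)),
            ∫⁻ x, (‖g ((T ^ n) x)‖₊ : ℝ≥0∞) ∂μ := by
          rw [lintegral_const_mul]
          · rw [lintegral_finset_sum _ fun n _ => hgm n]
          · exact Finset.measurable_sum _ fun n _ => hgm n
      _ = 2 * ∑ n ∈ Finset.Icc (-(K : ℤ)) ((N : ℤ) + (K : ℤ)),
            ∫⁻ x, (‖g x‖₊ : ℝ≥0∞) ∂μ := by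
          congr 1
          exact Finset.sum_congr rfl fun n _ =>
            (mz n).lintegral_comp (hg.nnnorm.coe_nnreal_ennreal)
      _ = 2 * ((N : ℝ≥0∞) + 2 * (K : ℝ≥0∞) + 1) * ∫⁻ x, (‖g x‖₊ : ℝ≥0∞) ∂μ := by
          rw [Finset.sum_const, nsmul_eq_mul]
          have h3' : (Finset.Icc (-(K : ℤ)) ((N : ℤ) + (K : ℤ))).card = N + 2 * K + 1 := by
            rw [Int.card_Icc]; omega
          have : ((Finset.Icc (-(K : ℤ)) ((N : ℤ) + (K : ℤ))).card : ℝ≥0∞)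
              = (N : ℝ≥0∞) + 2 * (K : ℝ≥0∞) + 1 := by
            rw [h3']; push_cast; ring
          rw [this, mul_assoc]
  rw [← hL, ← hR]
  exact lintegral_mono fun x => step_pointwise T g c K N x

theorem le_of_linear_bound {c d B : ℝ≥0∞} (hB : B ≠ ∞)
    (h : ∀ N : ℕ, c * (N + 1) ≤ d * (N + 1) + B) : c ≤ d := by
  rcases eq_or_ne d ∞ with hd | hd
  · simp [hd]
  have hc : c ≠ ∞ := by
    intro hc
    have h0 := h 0
    simp only [hc, Nat.cast_zero, zero_add, mul_one] at h0
    exact (ENNReal.add_lt_top.mpr ⟨hd.lt_top, hB.lt_top⟩).ne (top_le_iff.mp h0)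
  by_contra hcd
  push_neg at hcd
  have hdc : d.toReal < c.toReal := ENNReal.toReal_lt_toReal hd hc |>.mpr hcd
  obtain ⟨N, hN⟩ := exists_nat_gt (B.toReal / (c.toReal - d.toReal))
  have hfin : d * (N + 1) + B ≠ ∞ := by
    refine ENNReal.add_ne_top.mpr ⟨ENNReal.mul_ne_top hd (by simp), hB⟩
  have hr : c.toReal * (N + 1) ≤ d.toReal * (N + 1) + B.toReal := by
    have := ENNReal.toReal_mono hfin (h N)
    rw [ENNReal.toReal_mul, ENNReal.toReal_add (ENNReal.mul_ne_top hd (by simp)) hB,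
      ENNReal.toReal_mul] at this
    rw [show ((N:ℝ≥0∞)+1).toReal = (N:ℝ)+1 by rw [ENNReal.toReal_add (by simp) (by simp)]; simp] at this
    simpa using this
  have hpos : 0 < c.toReal - d.toReal := by linarith
  rw [div_lt_iff₀ hpos] at hN
  nlinarith [hN, hr]

theorem weak_upper_meas (μ : Measure X) (T : Equiv.Perm X)
    (hT : MeasurePreserving (⇑T) μ μ) (hTs : Measurable (⇑T.symm))
    (g : X → ℝ) (hg : Measurable g) (lam : ℝ≥0∞) :
    lam * μ {x | lam ≤ maxU T g x} ≤ 2 * ∫⁻ x, (‖g x‖₊ : ℝ≥0∞) ∂μ := by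
  set I := ∫⁻ x, (‖g x‖₊ : ℝ≥0∞) ∂μ with hI
  have step3 : ∀ (c : ℝ≥0∞) (K : ℕ), c * μ (Elam T g c K) ≤ 2 * I := by
    intro c K
    rcases eq_or_ne I ∞ with hItop | hItop
    · rw [hItop]
      simp
    · refine le_of_linear_bound (B := 2 * (2 * (K : ℝ≥0∞)) * I)
        (ENNReal.mul_ne_top (ENNReal.mul_ne_top (by simp) (by finiteness)) hItop) fun N => ?_
      calc c * μ (Elam T g c K) * ((N : ℝ≥0∞) + 1)
          = c * ((N : ℝ≥0∞) + 1) * μ (Elam T g c K) := by ring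
        _ ≤ 2 * ((N : ℝ≥0∞) + 2 * (K : ℝ≥0∞) + 1) * I := step_integrate μ T hT hTs g hg c K N
        _ = 2 * I * ((N : ℝ≥0∞) + 1) + 2 * (2 * (K : ℝ≥0∞)) * I := by ring
  have step4 : ∀ c : ℝ≥0∞, c * μ (⋃ K : ℕ, Elam T g c K) ≤ 2 * I := by
    intro c
    have hmono : Monotone (fun K => Elam T g c K) := by
      intro K K' hK x hx
      simp only [Elam, Set.mem_iUnion] at hx ⊢
      obtain ⟨r, hr, s, hs, h⟩ := hx
      exact ⟨r, le_trans hr hK, s, le_trans hs hK, h⟩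
    rw [hmono.directed_le.measure_iUnion, ENNReal.mul_iSup]
    exact iSup_le fun K => step3 c K
  have step5 : ∀ c, c < lam → {x | lam ≤ maxU T g x} ⊆ ⋃ K : ℕ, Elam T g c K := by
    intro c hc x hx
    simp only [Set.mem_setOf_eq, maxU] at hx
    have h1 := lt_of_lt_of_le hc hx
    rw [lt_iSup_iff] at h1
    obtain ⟨r, hr⟩ := h1
    rw [lt_iSup_iff] at hr
    obtain ⟨s, hs⟩ := hr
    refine Set.mem_iUnion.mpr ⟨max r s, ?_⟩
    simp only [Elam, Set.mem_iUnion]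
    exact ⟨r, le_max_left r s, s, le_max_right r s, hs.le⟩
  refine ENNReal.mul_le_of_forall_lt fun c hc m hm => ?_
  calc c * m ≤ c * μ {x | lam ≤ maxU T g x} := mul_le_mul_right hm.le c
    _ ≤ c * μ (⋃ K : ℕ, Elam T g c K) := mul_le_mul_right (measure_mono (step5 c hc)) c
    _ ≤ 2 * I := step4 c

theorem weak_upper (μ : Measure X) (T : Equiv.Perm X)
    (hT : MeasurePreserving (⇑T) μ μ) (hTs : Measurable (⇑T.symm))
    (f : X → ℝ) (hf : Integrable f μ) (lam : ℝ≥0∞) :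
    lam * μ {x | lam ≤ maxU T f x} ≤ 2 * eLpNorm f 1 μ := by
  have mz := mp_zpow μ T hT hTs
  have hf1 := hf.1
  set g := hf1.mk f with hgdef
  have hg : StronglyMeasurable g := hf1.stronglyMeasurable_mk
  have hfg : f =ᵐ[μ] g := hf1.ae_eq_mk
  set D := {y | f y ≠ g y} with hDdef
  have hD : μ D = 0 := hfg
  have hDn : ∀ n : ℤ, μ ((⇑(T ^ n)) ⁻¹' D) = 0 := fun n => by
    rw [(mz n).measure_preimage (NullMeasurableSet.of_null hD)]
    exact hD
  have hA : μ (⋃ n : ℤ, (⇑(T ^ n)) ⁻¹' D) = 0 := measure_iUnion_null fun n => hDn n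
  have heq : {x | lam ≤ maxU T f x} =ᵐ[μ] {x | lam ≤ maxU T g x} := by
    rw [Filter.eventuallyEq_set]
    filter_upwards [measure_eq_zero_iff_ae_notMem.mp hA] with x hx
    have horb : ∀ n : ℤ, f ((T ^ n) x) = g ((T ^ n) x) := by
      intro n
      by_contra h
      exact hx (Set.mem_iUnion.mpr ⟨n, h⟩)
    have : maxU T f x = maxU T g x := by
      unfold maxU
      refine iSup_congr fun r => iSup_congr fun s => ?_
      congr 1
      rw [Finset.sum_congr rfl fun n _ => horb n]
    rw [this]
  rw [measure_congr heq, eLpNorm_congr_ae hfg, eLpNorm_one_eq_lintegral_enorm]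
  exact weak_upper_meas μ T hT hTs g hg.measurable lam

theorem two_le_of_bounds {C : ℝ≥0∞}
    (h : ∀ L : ℕ, (2 * (L : ℝ≥0∞) + 1) ≤ C * ((L : ℝ≥0∞) + 1)) : 2 ≤ C := by
  by_contra hlt
  push_neg at hlt
  have hCt : C ≠ ∞ := fun h' => by simp [h'] at hlt
  have hc2 : C.toReal < 2 := by
    have := ENNReal.toReal_lt_toReal hCt (by simp : (2:ℝ≥0∞) ≠ ∞) |>.mpr hlt
    simpa using this
  obtain ⟨L, hL⟩ := exists_nat_gt ((1 : ℝ) / (2 - C.toReal))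
  have h1 := h L
  have h2 : (2 * (L : ℝ) + 1) ≤ C.toReal * ((L : ℝ) + 1) := by
    have hfin : C * ((L : ℝ≥0∞) + 1) ≠ ∞ := ENNReal.mul_ne_top hCt (by simp)
    have h3 := ENNReal.toReal_mono hfin h1
    rw [ENNReal.toReal_mul, ENNReal.toReal_add (ENNReal.mul_ne_top (by simp) (by simp))
      (by simp), ENNReal.toReal_add (by simp) (by simp), ENNReal.toReal_mul] at h3
    simpa using h3
  have hpos : 0 < 2 - C.toReal := by linarith
  rw [div_lt_iff₀ hpos] at hL
  nlinarith

theorem weak_lower (μ : Measure X) (T : Equiv.Perm X)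
    (hT : MeasurePreserving (⇑T) μ μ) (hTs : Measurable (⇑T.symm))
    (hR : RokhlinCondition μ T) (C : ℝ≥0∞)
    (hC : ∀ f : X → ℝ, Integrable f μ →
      ∀ l : ℝ≥0∞, l * μ {x | l ≤ maxU T f x} ≤ C * eLpNorm f 1 μ) : 2 ≤ C := by
  have mz := mp_zpow μ T hT hTs
  refine two_le_of_bounds fun L => ?_
  obtain ⟨E, hE, hE0, hEtop, hdisj⟩ := hR (2 * L + 1) (by omega)
  set f : X → ℝ := E.indicator (fun _ => (1 : ℝ)) with hf
  have hfi : Integrable f μ := by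
    rw [hf, integrable_indicator_iff hE]
    exact integrableOn_const hEtop.ne
  have hnorm : eLpNorm f 1 μ = μ E := by
    rw [eLpNorm_one_eq_lintegral_enorm]
    have h1 : (fun x => ‖f x‖ₑ) = E.indicator (fun _ => (1 : ℝ≥0∞)) := by
      funext x
      by_cases hx : x ∈ E <;> simp [hf, Set.indicator_apply, hx]
    rw [h1, lintegral_indicator_const hE, one_mul]
  -- the orbit preimage sets
  set A : ℤ → Set X := fun l => (⇑(T ^ l)) ⁻¹' E with hA
  have hAm : ∀ l : ℤ, MeasurableSet (A l) := fun l => (mz l).measurable hE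
  have hAμ : ∀ l : ℤ, μ (A l) = μ E := fun l => (mz l).measure_preimage hE.nullMeasurableSet
  -- pointwise lower bound on the maximal function
  set lam : ℝ≥0∞ := ((L : ℝ≥0∞) + 1)⁻¹ with hlam
  have hkey : ∀ l : ℤ, -(L : ℤ) ≤ l → l ≤ (L : ℤ) → ∀ x : X, x ∈ A l →
      lam ≤ maxU T f x := by
    intro l hl1 hl2 x hx
    set r : ℕ := (-l).toNat with hr
    set s : ℕ := l.toNat with hs
    have hrs1 : -(r : ℤ) ≤ l := by simp only [hr]; omega
    have hrs2 : l ≤ (s : ℤ) := by simp only [hs]; omega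
    have hrsL : r + s ≤ L := by simp only [hr, hs]; omega
    have hsum : (1 : ℝ) ≤ ∑ n ∈ Finset.Icc (-(r : ℤ)) (s : ℤ), f ((T ^ n) x) := by
      have hterm : f ((T ^ l) x) = 1 :=
        Set.indicator_of_mem (show (T ^ l) x ∈ E from hx) _
      rw [← hterm]
      refine Finset.single_le_sum (f := fun n => f ((T ^ n) x)) ?_ ?_
      · intro i _
        exact Set.indicator_nonneg (fun _ _ => zero_le_one) _
      · exact Finset.mem_Icc.mpr ⟨hrs1, hrs2⟩
    set v : ℝ := (∑ n ∈ Finset.Icc (-(r : ℤ)) (s : ℤ), f ((T ^ n) x)) /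
      ((r : ℝ) + (s : ℝ) + 1) with hv
    have hvge : 1 / ((L : ℝ) + 1) ≤ v := by
      rw [hv]
      have h1 : (0:ℝ) < (r : ℝ) + (s : ℝ) + 1 := by positivity
      have h2 : (r : ℝ) + (s : ℝ) + 1 ≤ (L : ℝ) + 1 := by
        have : ((r + s : ℕ) : ℝ) ≤ (L : ℝ) := Nat.cast_le.mpr hrsL
        push_cast at this ⊢
        linarith
      calc 1 / ((L : ℝ) + 1) ≤ 1 / ((r : ℝ) + (s : ℝ) + 1) := by
            apply one_div_le_one_div_of_le h1 h2
        _ ≤ _ := (div_le_div_iff_of_pos_right h1).mpr hsum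
    have hlamv : lam ≤ (‖v‖₊ : ℝ≥0∞) := by
      rw [← ENNReal.ofReal_coe_nnreal, coe_nnnorm]
      have hlam2 : lam = ENNReal.ofReal (1 / ((L : ℝ) + 1)) := by
        rw [hlam, one_div, ENNReal.ofReal_inv_of_pos (by positivity),
          ENNReal.ofReal_add (by positivity) zero_le_one, ENNReal.ofReal_natCast,
          ENNReal.ofReal_one]
      rw [hlam2]
      · exact ENNReal.ofReal_le_ofReal (le_trans hvge (le_abs_self v))
    calc lam ≤ (‖v‖₊ : ℝ≥0∞) := hlamv
      _ ≤ maxU T f x := le_iSup_of_le r (le_iSup_of_le s (le_of_eq (by rw [hv])))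
  -- a.e. disjointness of the preimages
  have hAE : (↑(Finset.Icc (-(L : ℤ)) (L : ℤ)) : Set ℤ).Pairwise (Function.onFun (MeasureTheory.AEDisjoint μ) A) := by
    intro a ha b hb hab
    rw [Finset.coe_Icc, Set.mem_Icc] at ha hb
    have hpre : (⇑(T ^ ((L : ℤ) + 1))) ⁻¹' (A a ∩ A b)
        = (⇑(T ^ (a + (L : ℤ) + 1))) ⁻¹' E ∩ (⇑(T ^ (b + (L : ℤ) + 1))) ⁻¹' E := by
      ext x
      simp only [Set.mem_preimage, Set.mem_inter_iff, hA]
      constructor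
      · rintro ⟨h1, h2⟩
        constructor
        · rw [show a + (L : ℤ) + 1 = a + ((L : ℤ) + 1) by ring, zpow_add, Equiv.Perm.mul_apply]
          exact h1
        · rw [show b + (L : ℤ) + 1 = b + ((L : ℤ) + 1) by ring, zpow_add, Equiv.Perm.mul_apply]
          exact h2
      · rintro ⟨h1, h2⟩
        rw [show a + (L : ℤ) + 1 = a + ((L : ℤ) + 1) by ring, zpow_add,
          Equiv.Perm.mul_apply] at h1
        rw [show b + (L : ℤ) + 1 = b + ((L : ℤ) + 1) by ring, zpow_add,
          Equiv.Perm.mul_apply] at h2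
        exact ⟨h1, h2⟩
    set na : ℕ := (a + (L : ℤ) + 1).toNat with hna
    set nb : ℕ := (b + (L : ℤ) + 1).toNat with hnb
    have hna' : ((na : ℤ)) = a + (L : ℤ) + 1 := by simp only [hna]; omega
    have hnb' : ((nb : ℤ)) = b + (L : ℤ) + 1 := by simp only [hnb]; omega
    have hdis := hdisj na nb (by omega) (by omega) (by omega) (by omega) (by omega)
    have hzero : (⇑(T ^ (a + (L : ℤ) + 1))) ⁻¹' E ∩ (⇑(T ^ (b + (L : ℤ) + 1))) ⁻¹' E = ∅ := by
      rw [← hna', ← hnb', zpow_natCast, zpow_natCast]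
      exact Set.disjoint_iff_inter_eq_empty.mp hdis
    have := (mz ((L : ℤ) + 1)).measure_preimage
      (((hAm a).inter (hAm b)).nullMeasurableSet)
    rw [Function.onFun, MeasureTheory.AEDisjoint, ← this, hpre, hzero, measure_empty]
  have hunion : μ (⋃ a ∈ Finset.Icc (-(L : ℤ)) (L : ℤ), A a) = (2 * (L : ℝ≥0∞) + 1) * μ E := by
    rw [measure_biUnion_finset₀ hAE fun a _ => (hAm a).nullMeasurableSet]
    have h1 : ∀ a ∈ Finset.Icc (-(L : ℤ)) (L : ℤ), μ (A a) = μ E := fun a _ => hAμ a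
    rw [Finset.sum_congr rfl h1, Finset.sum_const, nsmul_eq_mul]
    congr 1
    have h2 : (Finset.Icc (-(L : ℤ)) (L : ℤ)).card = 2 * L + 1 := by
      rw [Int.card_Icc]; omega
    rw [h2]
    push_cast
    ring
  have hsub : (⋃ a ∈ Finset.Icc (-(L : ℤ)) (L : ℤ), A a) ⊆ {x | lam ≤ maxU T f x} := by
    intro x hx
    simp only [Set.mem_iUnion] at hx
    obtain ⟨a, ha, hxa⟩ := hx
    rw [Finset.mem_Icc] at ha
    exact hkey a ha.1 ha.2 x hxa
  have hmain := hC f hfi lam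
  rw [hnorm] at hmain
  have h2 : lam * ((2 * (L : ℝ≥0∞) + 1) * μ E) ≤ C * μ E := by
    rw [← hunion]
    exact le_trans (mul_le_mul_right (measure_mono hsub) lam) hmain
  have hL1 : ((L : ℝ≥0∞) + 1) ≠ 0 := by simp
  have hL2 : ((L : ℝ≥0∞) + 1) ≠ ∞ := by finiteness
  have h3 : (2 * (L : ℝ≥0∞) + 1) * μ E ≤ C * ((L : ℝ≥0∞) + 1) * μ E := by
    calc (2 * (L : ℝ≥0∞) + 1) * μ E
        = (((L : ℝ≥0∞) + 1) * ((L : ℝ≥0∞) + 1)⁻¹) * ((2 * (L : ℝ≥0∞) + 1) * μ E) := by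
          rw [ENNReal.mul_inv_cancel hL1 hL2, one_mul]
      _ = ((L : ℝ≥0∞) + 1) * (lam * ((2 * (L : ℝ≥0∞) + 1) * μ E)) := by
          rw [hlam]; ring
      _ ≤ ((L : ℝ≥0∞) + 1) * (C * μ E) := mul_le_mul_right h2 _
      _ = C * ((L : ℝ≥0∞) + 1) * μ E := by ring
  exact (ENNReal.mul_le_mul_iff_left (ne_of_gt hE0) hEtop.ne).mp h3

end AuxProof

/-- Under the Rokhlin condition, the best constant in the weak type (1,1) inequality for the
uncentered ergodic maximal operator on a nontrivial σ-finite ergodic system equals `2`. -/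
theorem uncentered_weak_const_rokhlin {X : Type*} [MeasurableSpace X] (μ : Measure X)
    [SigmaFinite μ] (hX : NontrivialSpace μ) (T : Equiv.Perm X)
    (hT : MeasurePreserving (⇑T) μ μ) (hTs : Measurable (⇑T.symm))
    (hE : IsErgodicPerm μ T) (hR : RokhlinCondition μ T) :
    weakConst μ (maxU T) = 2 := by
  refine le_antisymm ?_ ?_
  · exact sInf_le fun f hf l => weak_upper μ T hT hTs f hf l
  · exact le_sInf fun C hC => weak_lower μ T hT hTs hR C hC

end
end
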